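/- arXiv:2105.12484 — 6 statements merged into one kernel-verified Lean document; each statement's English description precedes it below -/
import Mathlib

section
/- For every positive integer k, every tournament on n vertices contains the k-th power of a directed path on at least k·n/2^{4k+6} vertices. -/
open Finset

attribute [local instance] Classical.propDecidable

/-- `E` is a tournament relation: irreflexive, and for distinct vertices exactly one
direction is present. -/
def IsTournament {V : Type} (E : V → V → Prop) : Prop :=
  (∀ v, ¬ E v v) ∧ ∀ u v : V, u ≠ v → (E u v ↔ ¬ E v u)

/-- `x : Fin m → V` is the `k`-th power of a directed path: distinct vertices with
`x i → x j` whenever `i < j ≤ i + k`. -/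
def IsPathPower {V : Type} (E : V → V → Prop) (k m : ℕ) (x : Fin m → V) : Prop :=
  Function.Injective x ∧
    ∀ i j : Fin m, (i : ℕ) < (j : ℕ) → (j : ℕ) ≤ (i : ℕ) + k → E (x i) (x j)

/-- `x : Fin m → V` is the `k`-th power of a directed cycle of length `m`: distinct
vertices with an edge from `x i` to each of its `k` cyclic successors. -/
def IsCyclePower {V : Type} (E : V → V → Prop) (k m : ℕ) (x : Fin m → V) : Prop :=
  Function.Injective x ∧
    ∀ (i : Fin m) (d : ℕ), 1 ≤ d → d ≤ k →
      E (x i) (x ⟨((i : ℕ) + d) % m, Nat.mod_lt _ i.pos⟩)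

/-- The set `S` induces a transitive subtournament: its elements can be linearly
ordered so that every edge inside `S` goes from smaller to larger. -/
def IsTransitiveOn {V : Type} (E : V → V → Prop) (S : Finset V) : Prop :=
  ∃ f : V → ℕ, Set.InjOn f ↑S ∧ ∀ u ∈ S, ∀ v ∈ S, E u v → f u < f v

/-- `X ⇒ Y`: an edge from every vertex of `X` to every vertex of `Y`. -/
def Dominates {V : Type} (E : V → V → Prop) (X Y : Finset V) : Prop :=
  ∀ x ∈ X, ∀ y ∈ Y, E x y

/-- Number of forward edges of `E` with respect to the ordering `σ`. -/
noncomputable def fwdCount {V : Type} [Fintype V] (E : V → V → Prop)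
    (σ : V ≃ Fin (Fintype.card V)) : ℕ :=
  (Finset.univ.filter fun p : V × V => E p.1 p.2 ∧ σ p.1 < σ p.2).card

/-- Number of backward edges of `E` with respect to the ordering `σ`. -/
noncomputable def backCount {V : Type} [Fintype V] (E : V → V → Prop)
    (σ : V ≃ Fin (Fintype.card V)) : ℕ :=
  (Finset.univ.filter fun p : V × V => E p.1 p.2 ∧ σ p.2 < σ p.1).card

/-- A median ordering: a vertex ordering maximizing the number of forward edges. -/
def IsMedianOrder {V : Type} [Fintype V] (E : V → V → Prop)
    (τ : V ≃ Fin (Fintype.card V)) : Prop :=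
  ∀ σ : V ≃ Fin (Fintype.card V), fwdCount E σ ≤ fwdCount E τ

/-- An `n`-vertex tournament is `ε`-intransitive if every vertex ordering has at
least `ε n²` backward edges. -/
def IsIntransitive {V : Type} [Fintype V] (E : V → V → Prop) (ε : ℝ) : Prop :=
  ∀ σ : V ≃ Fin (Fintype.card V),
    ε * (Fintype.card V : ℝ) ^ 2 ≤ (backCount E σ : ℝ)

/-- The sets `A lo ≺ A (lo+1) ≺ ⋯ ≺ A hi` form a splitting of an interval of the
ordering `τ` into consecutive subintervals of size `m` each. -/
def IsIntervalSplit {V : Type} [Fintype V] (τ : V ≃ Fin (Fintype.card V))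
    (m lo hi : ℕ) (A : ℕ → Finset V) : Prop :=
  ∃ a : ℕ, ∀ i, lo ≤ i → i ≤ hi → ∀ v : V,
    v ∈ A i ↔ (a + i * m ≤ (τ v : ℕ) ∧ (τ v : ℕ) < a + (i + 1) * m)

/-- `H` is a `k`-absorber with absorbing part `Q`. -/
def IsAbsorber {V : Type} (E : V → V → Prop) (k : ℕ) (H Q : Finset V) : Prop :=
  ∃ (r : ℕ) (S : ℕ → Finset V) (q : ℕ → V),
    2 ^ (10 * k) < r ∧
    (∀ i j, i ≤ r → j ≤ r → i ≠ j → Disjoint (S i) (S j)) ∧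
    (∀ i ≤ r, Disjoint (S i) Q) ∧
    H = (Finset.range (r + 1)).biUnion S ∪ Q ∧
    Q = (Finset.Icc 1 (2 ^ (10 * k))).image q ∧
    Set.InjOn q (Set.Icc 1 (2 ^ (10 * k))) ∧
    (∀ i ≤ r, (S i).card = 2 * k ∧ IsTransitiveOn E (S i)) ∧
    (∀ i < r, Dominates E (S i) (S (i + 1))) ∧
    Dominates E (S r) (S 0) ∧
    Dominates E (S 0) Q ∧
    Dominates E Q (S (2 ^ (10 * k) + 1)) ∧
    (∀ i, 1 ≤ i → i ≤ 2 ^ (10 * k) →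
      Dominates E (S i) {q i} ∧ Dominates E {q i} (S (i + 1)))

namespace PPaux


/-! ### Numeric parameters -/

def Ppar (k : ℕ) : ℕ := Nat.choose (2*k+2) k
def gpar (k : ℕ) : ℕ := 2^(2*k+3) * Ppar k / (k+1) + 1
def Lpar (k : ℕ) : ℕ := (2*k+2) * gpar k

lemma Ppar_pos (k : ℕ) : 0 < Ppar k := Nat.choose_pos (by omega)

lemma gpar_pos (k : ℕ) : 0 < gpar k := Nat.succ_pos _

lemma gpar_mul (k : ℕ) : 2^(2*k+3) * Ppar k ≤ (k+1) * gpar k := by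
  have hd := Nat.div_add_mod (2^(2*k+3) * Ppar k) (k+1)
  have hm := Nat.mod_lt (2^(2*k+3) * Ppar k) (show 0 < k+1 by omega)
  unfold gpar
  set q := 2^(2*k+3) * Ppar k / (k+1)
  have : (k+1) * (q+1) = (k+1)*q + (k+1) := by ring
  omega

lemma Lpar_ge_g (k : ℕ) : gpar k ≤ Lpar k := by
  unfold Lpar
  nlinarith [gpar_pos k]

lemma choose_chain (k : ℕ) (hk : 1 ≤ k) : k + 1 ≤ Ppar k := by
  have h : ∀ r, 1 ≤ r → r ≤ k → (2*k+2) ≤ Nat.choose (2*k+2) r := by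
    intro r h1 h2
    induction r with
    | zero => omega
    | succ r ih =>
      rcases Nat.eq_or_lt_of_le h1 with h1' | h1'
      · simp [← h1']
      · have hr1 : 1 ≤ r := by omega
        have hrk : r ≤ k := by omega
        have := ih hr1 hrk
        have hmono : Nat.choose (2*k+2) r ≤ Nat.choose (2*k+2) (r+1) := by
          apply Nat.choose_le_succ_of_lt_half_left
          omega
        omega
  have := h k hk le_rfl
  unfold Ppar
  omega

lemma gpar_ge (k : ℕ) (hk : 1 ≤ k) : 2^(2*k+1) ≤ gpar k := by
  have h1 := gpar_mul k
  have h2 := choose_chain k hk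
  have h3 : 2^(2*k+3) * (k+1) ≤ 2^(2*k+3) * Ppar k := Nat.mul_le_mul_left _ h2
  have h4 : (k+1) * 2^(2*k+3) ≤ (k+1) * gpar k := by
    calc (k+1) * 2^(2*k+3) = 2^(2*k+3) * (k+1) := by ring
    _ ≤ 2^(2*k+3) * Ppar k := h3
    _ ≤ (k+1) * gpar k := h1
  have h5 : 2^(2*k+3) ≤ gpar k := Nat.le_of_mul_le_mul_left h4 (by omega)
  calc 2^(2*k+1) ≤ 2^(2*k+3) := Nat.pow_le_pow_right (by omega) (by omega)
  _ ≤ gpar k := h5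

lemma central_le (m : ℕ) (hm : 1 ≤ m) : 2 * Nat.centralBinom m ≤ 4^m := by
  induction m with
  | zero => omega
  | succ m ih =>
    rcases Nat.eq_or_lt_of_le hm with h | h
    · simp [← h, Nat.centralBinom]
    · have hm1 : 1 ≤ m := by omega
      have ihm := ih hm1
      have key := Nat.succ_mul_centralBinom_succ m
      have h1 : (m+1) * (2 * Nat.centralBinom (m+1)) = (2*(2*m+1)) * (2 * Nat.centralBinom m) := by
        rw [show (m+1) * (2 * Nat.centralBinom (m+1)) = 2 * ((m+1) * Nat.centralBinom (m+1)) by ring, key]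
        ring
      have h2 : (2*(2*m+1)) * (2 * Nat.centralBinom m) ≤ (2*(2*m+2)) * 4^m := by
        apply Nat.mul_le_mul
        · omega
        · exact ihm
      have h3 : (2*(2*m+2)) * 4^m = (m+1) * 4^(m+1) := by
        rw [pow_succ]
        ring
      have h4 : (m+1) * (2 * Nat.centralBinom (m+1)) ≤ (m+1) * 4^(m+1) := by omega
      exact Nat.le_of_mul_le_mul_left h4 (by omega)

lemma Ppar_bound (k : ℕ) : 2 * ((k+2) * Ppar k) ≤ (k+1) * 4^(k+1) := by
  have hid := Nat.choose_succ_right_eq (2*k+2) k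
  have hsub : 2*k+2 - k = k + 2 := by omega
  rw [hsub] at hid
  have hcb : Nat.choose (2*k+2) (k+1) = Nat.centralBinom (k+1) := by
    have h2 : 2*(k+1) = 2*k+2 := by ring
    rw [Nat.centralBinom, h2]
  have h1 := central_le (k+1) (by omega)
  calc 2 * ((k+2) * Ppar k) = 2 * (Nat.choose (2*k+2) k * (k+2)) := by unfold Ppar; ring
  _ = 2 * (Nat.choose (2*k+2) (k+1) * (k+1)) := by rw [hid]
  _ = (k+1) * (2 * Nat.centralBinom (k+1)) := by rw [hcb]; ring
  _ ≤ (k+1) * 4^(k+1) := Nat.mul_le_mul_left _ h1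

lemma aux_pow (k : ℕ) : (4*k+4)*(k+2) ≤ 2^(4*k+6) := by
  have h1 : k < 2^k := Nat.lt_two_pow_self (n := k)
  have h2 : 4*k+4 ≤ 2^(k+2) := by
    have : 2^(k+2) = 4 * 2^k := by ring
    omega
  have h3 : k+2 ≤ 2^(k+1) := by
    have : 2^(k+1) = 2 * 2^k := by ring
    omega
  calc (4*k+4)*(k+2) ≤ 2^(k+2) * 2^(k+1) := Nat.mul_le_mul h2 h3
  _ = 2^(2*k+3) := by rw [← pow_add]; ring_nf
  _ ≤ 2^(4*k+6) := Nat.pow_le_pow_right (by omega) (by omega)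

lemma Lpar_le (k : ℕ) (hk : 1 ≤ k) : 2 * Lpar k ≤ 2^(4*k+6) := by
  have hA : Lpar k ≤ 2^(2*k+4) * Ppar k + (2*k+2) := by
    have h1 : (k+1) * gpar k ≤ 2^(2*k+3)*Ppar k + (k+1) := by
      unfold gpar
      set q := 2^(2*k+3) * Ppar k / (k+1) with hq
      have hdiv : q*(k+1) ≤ 2^(2*k+3)*Ppar k := Nat.div_mul_le_self _ _
      have e1 : (k+1)*(q+1) = q*(k+1) + (k+1) := by ring
      omega
    have h2 : Lpar k = 2*((k+1)*gpar k) := by unfold Lpar; ring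
    have h3 : 2*((k+1)*gpar k) ≤ 2*(2^(2*k+3)*Ppar k + (k+1)) := by omega
    have h4 : 2*(2^(2*k+3)*Ppar k + (k+1)) = 2^(2*k+4) * Ppar k + (2*k+2) := by
      rw [pow_succ]
      ring
    omega
  have hB : (k+2)*(2*Lpar k) ≤ (k+2)*2^(4*k+6) := by
    have hPb := Ppar_bound k
    have haux := aux_pow k
    calc (k+2)*(2*Lpar k) ≤ (k+2)*(2*(2^(2*k+4) * Ppar k + (2*k+2))) := by
          apply Nat.mul_le_mul_left
          omega
    _ = 2^(2*k+4) * (2*((k+2)*Ppar k)) + (4*k+4)*(k+2) := by ring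
    _ ≤ 2^(2*k+4) * ((k+1) * 4^(k+1)) + 2^(4*k+6) := by
          apply Nat.add_le_add
          · exact Nat.mul_le_mul_left _ hPb
          · exact haux
    _ = (k+1) * 2^(4*k+6) + 2^(4*k+6) := by
          have h44 : (4:ℕ)^(k+1) = 2^(2*k+2) := by
            rw [show (4:ℕ) = 2^2 by norm_num, ← pow_mul]
            ring_nf
          have hp : (2:ℕ)^(2*k+4) * 2^(2*k+2) = 2^(4*k+6) := by
            rw [← pow_add]
            ring_nf
          rw [h44]
          calc 2^(2*k+4) * ((k+1) * 2^(2*k+2)) + 2^(4*k+6)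
              = (k+1) * (2^(2*k+4) * 2^(2*k+2)) + 2^(4*k+6) := by ring
          _ = (k+1) * 2^(4*k+6) + 2^(4*k+6) := by rw [hp]
    _ = (k+2)*2^(4*k+6) := by ring
  exact Nat.le_of_mul_le_mul_left hB (by omega)


/-! ### Rotations and median orders -/

def rotFun (p b x : ℕ) : ℕ := if x = p then b - 1 else if p < x ∧ x < b then x - 1 else x
def rotInv (p b y : ℕ) : ℕ := if y = b - 1 then p else if p ≤ y ∧ y < b - 1 then y + 1 else y

lemma rot_left (p b x : ℕ) (h : p < b) : rotInv p b (rotFun p b x) = x := by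
  unfold rotFun rotInv; split_ifs <;> omega

lemma rot_right (p b y : ℕ) (h : p < b) : rotFun p b (rotInv p b y) = y := by
  unfold rotFun rotInv; split_ifs <;> omega

lemma rot_lt_iff (p b x y : ℕ) (hpb : p < b) (hx : x ≠ p) (hy : y ≠ p) :
    rotFun p b x < rotFun p b y ↔ x < y := by
  unfold rotFun; split_ifs <;> omega

def rotEquiv (n p b : ℕ) (hpb : p < b) (hbn : b ≤ n) : Fin n ≃ Fin n where
  toFun x := ⟨rotFun p b x.1, by have := x.2; unfold rotFun; split_ifs <;> omega⟩
  invFun y := ⟨rotInv p b y.1, by have := y.2; unfold rotInv; split_ifs <;> omega⟩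
  left_inv x := Fin.val_injective (rot_left p b x.1 hpb)
  right_inv y := Fin.val_injective (rot_right p b y.1 hpb)

variable {V : Type} [Fintype V]

lemma card_interval (σ : V ≃ Fin (Fintype.card V)) (a b : ℕ) (hb : b ≤ Fintype.card V) :
    (univ.filter fun u => a ≤ (σ u : ℕ) ∧ (σ u : ℕ) < b).card = b - a := by
  rw [← Nat.card_Ico a b]
  apply Finset.card_bij (fun (u : V) _ => (σ u : ℕ))
  · intro u hu
    simp only [mem_filter, mem_univ, true_and] at hu
    exact Finset.mem_Ico.mpr hu
  · intro u _ w _ h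
    exact σ.injective (Fin.val_injective h)
  · intro m hm
    have hm' := Finset.mem_Ico.mp hm
    refine ⟨σ.symm ⟨m, lt_of_lt_of_le hm'.2 hb⟩, ?_, ?_⟩
    · simp only [mem_filter, mem_univ, true_and, Equiv.apply_symm_apply]
      exact hm'
    · simp

noncomputable def Phi (E : V → V → Prop) (σ : V ≃ Fin (Fintype.card V)) : ℤ :=
  ∑ u : V, ∑ w : V, if E u w ∧ σ u < σ w then 1 else 0

lemma exists_median (E : V → V → Prop) (hn : 0 < Fintype.card V) :
    ∃ σ : V ≃ Fin (Fintype.card V), ∀ τ, Phi E τ ≤ Phi E σ := by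
  haveI : Nonempty V := Fintype.card_pos_iff.mp hn
  have hne : (univ : Finset (V ≃ Fin (Fintype.card V))).Nonempty :=
    ⟨Fintype.equivFin V, mem_univ _⟩
  obtain ⟨σ, -, hσ⟩ := Finset.exists_max_image univ (Phi E) hne
  exact ⟨σ, fun τ => hσ τ (mem_univ τ)⟩

lemma median_half (E : V → V → Prop) (hT : IsTournament E)
    (σ : V ≃ Fin (Fintype.card V)) (hσ : ∀ τ, Phi E τ ≤ Phi E σ)
    (v : V) (b : ℕ) (hvb : (σ v : ℕ) < b) (hbn : b ≤ Fintype.card V) :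
    b - (σ v : ℕ) - 1 ≤
      2 * (univ.filter fun u => (σ v : ℕ) < (σ u : ℕ) ∧ (σ u : ℕ) < b ∧ E v u).card := by
  classical
  set p := (σ v : ℕ) with hp
  set ρ : Fin (Fintype.card V) ≃ Fin (Fintype.card V) := rotEquiv (Fintype.card V) p b hvb hbn with hρ
  set σ' := σ.trans ρ with hσ'
  have hcoe : ∀ u : V, (σ' u : ℕ) = rotFun p b (σ u : ℕ) := fun u => rfl
  have hposinj : ∀ {u w : V}, (σ u : ℕ) = (σ w : ℕ) → u = w := by
    intro u w h
    exact σ.injective (Fin.val_injective h)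
  have hvp : ∀ {u : V}, u ≠ v → (σ u : ℕ) ≠ p := by
    intro u hu h
    exact hu (hposinj h)
  set Wp := univ.filter (fun u => p < (σ u : ℕ) ∧ (σ u : ℕ) < b ∧ E v u) with hWp
  set Wm := univ.filter (fun u => p < (σ u : ℕ) ∧ (σ u : ℕ) < b ∧ E u v) with hWm
  have hdiff : Phi E σ - Phi E σ' = (Wp.card : ℤ) - (Wm.card : ℤ) := by
    have hsub : Phi E σ - Phi E σ' =
        ∑ u : V, ∑ w : V, ((if E u w ∧ σ u < σ w then (1:ℤ) else 0)
          - (if E u w ∧ σ' u < σ' w then (1:ℤ) else 0)) := by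
      unfold Phi
      rw [← Finset.sum_sub_distrib]
      apply Finset.sum_congr rfl
      intro u _
      rw [← Finset.sum_sub_distrib]
    have hv : ∑ w : V, ((if E v w ∧ σ v < σ w then (1:ℤ) else 0)
          - (if E v w ∧ σ' v < σ' w then (1:ℤ) else 0)) = (Wp.card : ℤ) := by
      have hpt : ∀ w : V, ((if E v w ∧ σ v < σ w then (1:ℤ) else 0)
          - (if E v w ∧ σ' v < σ' w then (1:ℤ) else 0))
          = (if p < (σ w : ℕ) ∧ (σ w : ℕ) < b ∧ E v w then (1:ℤ) else 0) := by
        intro w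
        by_cases hw : w = v
        · subst hw
          simp [hT.1 w]
        · have hwp : (σ w : ℕ) ≠ p := hvp hw
          by_cases hE : E v w
          · have hlt1 : (σ v < σ w) ↔ (p < (σ w : ℕ)) := by
              rw [Fin.lt_def]
            have hlt2 : (σ' v < σ' w) ↔ (b - 1 < rotFun p b (σ w : ℕ)) := by
              rw [Fin.lt_def]
              constructor <;> intro h <;>
                simpa [hcoe, rotFun, hp] using h
            simp only [hE, true_and, and_true, hlt1, hlt2]
            unfold rotFun
            split_ifs <;> omega
          · simp [hE]
      rw [Finset.sum_congr rfl (fun w _ => hpt w), Finset.sum_boole]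
    have hu : ∀ u : V, u ≠ v → (∑ w : V, ((if E u w ∧ σ u < σ w then (1:ℤ) else 0)
          - (if E u w ∧ σ' u < σ' w then (1:ℤ) else 0)))
          = -(if p < (σ u : ℕ) ∧ (σ u : ℕ) < b ∧ E u v then (1:ℤ) else 0) := by
      intro u huv
      have hup : (σ u : ℕ) ≠ p := hvp huv
      have hsingle : (∑ w : V, ((if E u w ∧ σ u < σ w then (1:ℤ) else 0)
          - (if E u w ∧ σ' u < σ' w then (1:ℤ) else 0)))
          = ((if E u v ∧ σ u < σ v then (1:ℤ) else 0)
            - (if E u v ∧ σ' u < σ' v then (1:ℤ) else 0)) := by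
        apply Finset.sum_eq_single_of_mem v (mem_univ v)
        intro w _ hwv
        have hwp : (σ w : ℕ) ≠ p := hvp hwv
        have hiff : (σ u < σ w) ↔ (σ' u < σ' w) := by
          rw [Fin.lt_def, Fin.lt_def, hcoe, hcoe]
          exact (rot_lt_iff p b _ _ hvb hup hwp).symm
        simp only [hiff]
        ring
      rw [hsingle]
      by_cases hE : E u v
      · have hlt1 : (σ u < σ v) ↔ ((σ u : ℕ) < p) := by rw [Fin.lt_def]
        have hlt2 : (σ' u < σ' v) ↔ (rotFun p b (σ u : ℕ) < b - 1) := by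
          rw [Fin.lt_def]
          constructor <;> intro h <;>
            simpa [hcoe, rotFun, hp] using h
        simp only [hE, true_and, and_true, hlt1, hlt2]
        unfold rotFun
        split_ifs <;> omega
      · simp [hE]
    rw [hsub, ← Finset.add_sum_erase _ _ (mem_univ v)]
    have herase : ∑ u ∈ univ.erase v, (∑ w : V, ((if E u w ∧ σ u < σ w then (1:ℤ) else 0)
          - (if E u w ∧ σ' u < σ' w then (1:ℤ) else 0)))
        = -(Wm.card : ℤ) := by
      rw [Finset.sum_congr rfl (fun u hu' => hu u (Finset.mem_erase.mp hu').1)]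
      rw [Finset.sum_neg_distrib]
      congr 1
      rw [Finset.sum_boole]
      have hset : (univ.erase v).filter (fun u => p < (σ u : ℕ) ∧ (σ u : ℕ) < b ∧ E u v) = Wm := by
        rw [hWm]
        ext u
        simp only [mem_filter, mem_erase, mem_univ, true_and, and_true]
        constructor
        · tauto
        · intro h
          refine ⟨?_, h⟩
          intro he
          subst he
          omega
      rw [hset]
    rw [hv, herase]
    ring
  have hle : Phi E σ' ≤ Phi E σ := hσ σ'
  have hcards : (Wm.card : ℤ) ≤ (Wp.card : ℤ) := by linarith
  have hWcard : Wm.card ≤ Wp.card := by exact_mod_cast hcards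
  have htot : Wp.card + Wm.card = b - p - 1 := by
    have hW : (univ.filter fun u => p + 1 ≤ (σ u : ℕ) ∧ (σ u : ℕ) < b).card = b - (p+1) :=
      card_interval σ (p+1) b hbn
    set W := univ.filter (fun u => p + 1 ≤ (σ u : ℕ) ∧ (σ u : ℕ) < b) with hWdef
    have h1 : Wp = W.filter (fun u => E v u) := by
      rw [hWp, hWdef, Finset.filter_filter]
      apply Finset.filter_congr
      intro u _
      constructor
      · rintro ⟨ha, hb', hc⟩
        exact ⟨⟨by omega, hb'⟩, hc⟩
      · rintro ⟨⟨ha, hb'⟩, hc⟩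
        exact ⟨by omega, hb', hc⟩
    have h2 : Wm = W.filter (fun u => ¬ E v u) := by
      rw [hWm, hWdef, Finset.filter_filter]
      apply Finset.filter_congr
      intro u _
      constructor
      · rintro ⟨ha, hb', hc⟩
        have huv : u ≠ v := by
          intro he
          subst he
          omega
        exact ⟨⟨by omega, hb'⟩, (hT.2 u v huv).mp hc⟩
      · rintro ⟨⟨ha, hb'⟩, hc⟩
        have huv : u ≠ v := by
          intro he
          subst he
          omega
        exact ⟨by omega, hb', (hT.2 u v huv).mpr hc⟩
    rw [h1, h2, Finset.card_filter_add_card_filter_not, hW]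
    omega
  omega

/-! ### Transitive chains -/

lemma exists_transChain (E : V → V → Prop) (hT : IsTournament E) :
    ∀ (t : ℕ) (A : Finset V), 2^t ≤ 2 * A.card + 1 →
      ∃ l : List V, l.length = t ∧ l.Pairwise E ∧ ∀ x ∈ l, x ∈ A := by
  intro t
  induction t with
  | zero => exact fun A _ => ⟨[], rfl, List.Pairwise.nil, by simp⟩
  | succ t ih =>
    intro A hA
    have hp : (0:ℕ) < 2^t := pow_pos (by norm_num) t
    have hps : 2^(t+1) = 2 * 2^t := by rw [pow_succ]; ring
    have hA0 : 0 < A.card := by omega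
    obtain ⟨v, hv⟩ := Finset.card_pos.mp hA0
    have hsplit : ((A.erase v).filter (fun u => E v u)).card
        + ((A.erase v).filter (fun u => ¬ E v u)).card = A.card - 1 := by
      rw [Finset.card_filter_add_card_filter_not, Finset.card_erase_of_mem hv]
    by_cases hcase : ((A.erase v).filter (fun u => ¬ E v u)).card
        ≤ ((A.erase v).filter (fun u => E v u)).card
    · have hhyp : 2^t ≤ 2 * ((A.erase v).filter (fun u => E v u)).card + 1 := by omega
      obtain ⟨l, hl, hpw, hm⟩ := ih _ hhyp
      refine ⟨v :: l, by simp [hl], ?_, ?_⟩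
      · refine List.Pairwise.cons ?_ hpw
        intro x hx
        exact (Finset.mem_filter.mp (hm x hx)).2
      · intro x hx
        rcases List.mem_cons.mp hx with h | h
        · subst h; exact hv
        · exact Finset.mem_of_mem_erase (Finset.mem_filter.mp (hm x h)).1
    · have hhyp : 2^t ≤ 2 * ((A.erase v).filter (fun u => ¬ E v u)).card + 1 := by omega
      obtain ⟨l, hl, hpw, hm⟩ := ih _ hhyp
      refine ⟨l ++ [v], by simp [hl], ?_, ?_⟩
      · rw [List.pairwise_append]
        refine ⟨hpw, by simp, ?_⟩
        intro x hx y hy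
        have hy' : y = v := by simpa using hy
        have hx' := Finset.mem_filter.mp (hm x hx)
        have hxv : x ≠ v := Finset.ne_of_mem_erase hx'.1
        rw [hy']
        exact (hT.2 x v hxv).mpr hx'.2
      · intro x hx
        rcases List.mem_append.mp hx with h | h
        · exact Finset.mem_of_mem_erase (Finset.mem_filter.mp (hm x h)).1
        · have hxv : x = v := by simpa using h
          rw [hxv]; exact hv

/-! ### Path powers as lists -/

def PathPow (k : ℕ) (E : V → V → Prop) (l : List V) : Prop :=
  ∀ i j (hi : i < l.length) (hj : j < l.length), i < j → j ≤ i + k → E (l[i]'hi) (l[j]'hj)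

lemma pathPow_of_pairwise {k : ℕ} {E : V → V → Prop} {l : List V} (h : l.Pairwise E) :
    PathPow k E l := by
  intro i j hi hj hij _
  exact List.pairwise_iff_getElem.mp h i j hi hj hij

lemma nodup_of_pairwise {E : V → V → Prop} (hT : IsTournament E) {l : List V}
    (h : l.Pairwise E) : l.Nodup := by
  refine h.imp ?_
  intro a b hab he
  subst he
  exact hT.1 a hab

lemma pathPow_append {k : ℕ} {E : V → V → Prop} (S xs : List V)
    (hSlen : S.length = k) (hS : S.Pairwise E) (hxs : PathPow k E xs)
    (hdom : ∀ s ∈ S, ∀ u ∈ xs.take k, E s u) : PathPow k E (S ++ xs) := by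
  intro i j hi hj hij hjk
  have hlen : (S ++ xs).length = k + xs.length := by
    rw [List.length_append, hSlen]
  by_cases hjS : j < k
  · have hiS : i < k := lt_trans hij hjS
    have e1 : (S ++ xs)[i]'hi = S[i]'(by omega) := List.getElem_append_left (by omega)
    have e2 : (S ++ xs)[j]'hj = S[j]'(by omega) := List.getElem_append_left (by omega)
    rw [e1, e2]
    exact List.pairwise_iff_getElem.mp hS i j (by omega) (by omega) hij
  · by_cases hiS : i < k
    · have hjk' : j - k < k := by omega
      have hjx : j - k < xs.length := by omega
      have e1 : (S ++ xs)[i]'hi = S[i]'(by omega) := List.getElem_append_left (by omega)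
      have h1 : S.length ≤ j := by omega
      have e2 : (S ++ xs)[j]'hj = xs[j - k]'hjx := by
        simp only [List.getElem_append_right h1, hSlen]
      rw [e1, e2]
      apply hdom
      · exact List.getElem_mem _
      · have h9 : (xs.take k)[j - k]? = some (xs[j - k]'hjx) := by
          rw [List.getElem?_take_of_lt hjk', List.getElem?_eq_getElem hjx]
        exact List.mem_of_getElem? h9
    · have hix : i - k < xs.length := by omega
      have hjx : j - k < xs.length := by omega
      have h1 : S.length ≤ i := by omega
      have h2 : S.length ≤ j := by omega
      have e1 : (S ++ xs)[i]'hi = xs[i - k]'hix := by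
        simp only [List.getElem_append_right h1, hSlen]
      have e2 : (S ++ xs)[j]'hj = xs[j - k]'hjx := by
        simp only [List.getElem_append_right h2, hSlen]
      rw [e1, e2]
      exact hxs (i - k) (j - k) hix hjx (by omega) (by omega)

/-! ### binomial linear lower bound -/

lemma choose_lin' (r : ℕ) : ∀ d, 2 + d*(r+2) ≤ 2 * Nat.choose d (r+1) + (r+1)*(r+2) := by
  intro d
  rcases lt_or_ge d (r+1) with h | h
  · have h2 : (d+1)*(r+2) ≤ (r+1)*(r+2) := Nat.mul_le_mul_right _ (by omega)
    have e1 : (d+1)*(r+2) = d*(r+2)+(r+2) := by ring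
    omega
  · induction d, h using Nat.le_induction with
    | base =>
      simp only [Nat.choose_self]
      omega
    | succ d hd ih =>
      have hsucc : Nat.choose (d+1) (r+1) = Nat.choose d r + Nat.choose d (r+1) :=
        Nat.choose_succ_succ d r
      have hmono : Nat.choose (r+1) r ≤ Nat.choose d r := Nat.choose_le_choose r (by omega)
      have hval : Nat.choose (r+1) r = r+1 := Nat.choose_succ_self_right r
      have e1 : (d+1)*(r+2) = d*(r+2)+(r+2) := by ring
      omega

lemma choose_lin (k : ℕ) (hk : 1 ≤ k) (d : ℕ) :
    2 + d*(k+1) ≤ 2 * Nat.choose d k + k*(k+1) := by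
  obtain ⟨r, rfl⟩ : ∃ r, k = r + 1 := ⟨k - 1, by omega⟩
  have h := choose_lin' r d
  have e1 : r + 1 + 1 = r + 2 := rfl
  rw [e1]
  exact h

variable (E : V → V → Prop) (σ : V ≃ Fin (Fintype.card V)) (k : ℕ)

/-- One step of the construction. -/
lemma stage_step (hT : IsTournament E) (hk : 1 ≤ k)
    (hmed : ∀ (v : V) (b : ℕ), (σ v : ℕ) < b → b ≤ Fintype.card V →
      b - (σ v : ℕ) - 1 ≤ 2 * (univ.filter fun u =>
        (σ v : ℕ) < (σ u : ℕ) ∧ (σ u : ℕ) < b ∧ E v u).card)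
    (e : ℕ) (he2 : e + Lpar k ≤ Fintype.card V)
    (Y : List V) (hYlen : Y.length = 2*k+2) (hYpw : Y.Pairwise E)
    (hYmem : ∀ y ∈ Y, e ≤ (σ y : ℕ) + gpar k ∧ (σ y : ℕ) < e) :
    ∃ (Slist Y' : List V) (e' : ℕ),
      Slist.length = k ∧ Slist.Pairwise E ∧ (∀ s ∈ Slist, s ∈ Y) ∧
      Y'.length = 2*k+2 ∧ Y'.Pairwise E ∧
      (∀ y ∈ Y', e' ≤ (σ y : ℕ) + gpar k ∧ (σ y : ℕ) < e') ∧
      (∀ s ∈ Slist, ∀ u ∈ Y', E s u) ∧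
      e + gpar k ≤ e' ∧ e' ≤ e + Lpar k := by
  classical
  have hgpos : 0 < gpar k := gpar_pos k
  have hLg : Lpar k = (2*k+2)*(gpar k) := rfl
  -- basic sets
  have hnd : Y.Nodup := nodup_of_pairwise hT hYpw
  set YF := Y.toFinset with hYF
  have hYFcard : YF.card = 2*k+2 := by
    rw [hYF, List.toFinset_card_of_nodup hnd, hYlen]
  set cols := univ.filter (fun c => e ≤ (σ c : ℕ) ∧ (σ c : ℕ) < e + Lpar k) with hcols
  have hcolscard : cols.card = Lpar k := by
    rw [hcols, card_interval σ e (e+Lpar k) he2]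
    omega
  -- step 1 : row degrees
  have h1 : ∀ y ∈ YF, Lpar k + 1 ≤ 2 * (cols.filter (fun c => E y c)).card + gpar k := by
    intro y hy
    have hyY : y ∈ Y := List.mem_toFinset.mp hy
    obtain ⟨hy1, hy2⟩ := hYmem y hyY
    have hmain := hmed y (e + Lpar k) (by omega) he2
    have hsub : (univ.filter fun u => (σ y:ℕ) < (σ u:ℕ) ∧ (σ u:ℕ) < e + Lpar k ∧ E y u)
        ⊆ (univ.filter fun u => (σ y:ℕ)+1 ≤ (σ u:ℕ) ∧ (σ u:ℕ) < e)
          ∪ (cols.filter fun c => E y c) := by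
      intro u hu
      simp only [mem_filter, mem_univ, true_and, mem_union, hcols] at hu ⊢
      by_cases hlt : (σ u : ℕ) < e
      · left; exact ⟨by omega, hlt⟩
      · right; exact ⟨⟨by omega, hu.2.1⟩, hu.2.2⟩
    have hcard1 := Finset.card_le_card hsub
    have hcard2 := Finset.card_union_le
      (univ.filter fun u => (σ y:ℕ)+1 ≤ (σ u:ℕ) ∧ (σ u:ℕ) < e)
      (cols.filter fun c => E y c)
    have hmid : (univ.filter fun u => (σ y:ℕ)+1 ≤ (σ u:ℕ) ∧ (σ u:ℕ) < e).card = e - ((σ y:ℕ)+1) :=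
      card_interval σ _ _ (by omega)
    omega
  -- step 2 : total degree
  set D := ∑ c ∈ cols, ((YF.filter (fun y => E y c)).card) with hD0
  have hD : D = ∑ y ∈ YF, (cols.filter (fun c => E y c)).card := by
    rw [hD0]
    have hc : ∀ c ∈ cols, ((YF.filter (fun y => E y c)).card) = ∑ y ∈ YF, if E y c then 1 else 0 :=
      fun c _ => Finset.card_filter _ _
    rw [Finset.sum_congr rfl hc, Finset.sum_comm]
    apply Finset.sum_congr rfl
    intro y _
    rw [Finset.card_filter]
  have hD2 : (2*k+2) * (Lpar k + 1) ≤ 2 * D + (2*k+2) * gpar k := by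
    have hsum : ∑ y ∈ YF, (Lpar k+1) ≤ ∑ y ∈ YF, (2 * (cols.filter (fun c => E y c)).card + gpar k) :=
      Finset.sum_le_sum h1
    rw [Finset.sum_const, hYFcard, smul_eq_mul] at hsum
    have hsplit : ∑ y ∈ YF, (2 * (cols.filter (fun c => E y c)).card + gpar k)
        = 2 * D + (2*k+2) * gpar k := by
      rw [Finset.sum_add_distrib, Finset.sum_const, hYFcard, smul_eq_mul, ← Finset.mul_sum, ← hD]
    omega
  have hD3 : k * Lpar k + (k+1) * gpar k + (k+1) ≤ D := by
    have h2 : ((2*(k:ℤ)+2) * ((2*(k:ℤ)+2)*(gpar k:ℤ) + 1)) ≤ 2 * (D:ℤ) + (2*(k:ℤ)+2) * (gpar k:ℤ) := by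
      have := hD2
      rw [hLg] at this
      exact_mod_cast this
    have key : 2 * ((k:ℤ) * ((2*(k:ℤ)+2)*(gpar k:ℤ)) + ((k:ℤ)+1) * (gpar k:ℤ) + ((k:ℤ)+1))
        = (2*(k:ℤ)+2) * ((2*(k:ℤ)+2)*(gpar k:ℤ) + 1) - (2*(k:ℤ)+2) * (gpar k:ℤ) := by ring
    have hfin : (k:ℤ) * ((2*(k:ℤ)+2)*(gpar k:ℤ)) + ((k:ℤ)+1) * (gpar k:ℤ) + ((k:ℤ)+1) ≤ (D:ℤ) := by
      linarith
    rw [hLg]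
    exact_mod_cast hfin
  -- step 3 : sum of binomials
  set SC := ∑ c ∈ cols, Nat.choose ((YF.filter (fun y => E y c)).card) k with hSC0
  have h3 : 2 * Lpar k + D * (k+1) ≤ 2 * SC + Lpar k * (k*(k+1)) := by
    have hsum : ∑ c ∈ cols, (2 + ((YF.filter (fun y => E y c)).card) * (k+1))
        ≤ ∑ c ∈ cols, (2 * Nat.choose ((YF.filter (fun y => E y c)).card) k + k*(k+1)) :=
      Finset.sum_le_sum (fun c _ => choose_lin k hk _)
    have hlhs : ∑ c ∈ cols, (2 + ((YF.filter (fun y => E y c)).card) * (k+1))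
        = 2 * Lpar k + D * (k+1) := by
      rw [Finset.sum_add_distrib, Finset.sum_const, hcolscard, smul_eq_mul, ← Finset.sum_mul, ← hD0]
      ring
    have hrhs : ∑ c ∈ cols, (2 * Nat.choose ((YF.filter (fun y => E y c)).card) k + k*(k+1))
        = 2 * SC + Lpar k * (k*(k+1)) := by
      rw [Finset.sum_add_distrib, Finset.sum_const, hcolscard, smul_eq_mul, ← Finset.mul_sum, ← hSC0]
    omega
  have h4 : (k+1) * ((k+1) * gpar k) ≤ 2 * SC := by
    have hz3 : 2 * (Lpar k:ℤ) + (D:ℤ) * ((k:ℤ)+1) ≤ 2 * (SC:ℤ) + (Lpar k:ℤ) * ((k:ℤ)*((k:ℤ)+1)) := by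
      exact_mod_cast h3
    have hzD : (k:ℤ) * (Lpar k:ℤ) + ((k:ℤ)+1) * (gpar k:ℤ) + ((k:ℤ)+1) ≤ (D:ℤ) := by
      exact_mod_cast hD3
    have hfin : ((k:ℤ)+1) * (((k:ℤ)+1) * (gpar k:ℤ)) ≤ 2 * (SC:ℤ) := by nlinarith
    exact_mod_cast hfin
  -- step 4 : choose the best S
  set SS := YF.powersetCard k with hSS0
  have hSScard : SS.card = Ppar k := by
    rw [hSS0, Finset.card_powersetCard, hYFcard]
    rfl
  have hSSne : SS.Nonempty := by
    rw [hSS0]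
    apply Finset.powersetCard_nonempty.mpr
    omega
  obtain ⟨S, hSmem, hSmax⟩ := Finset.exists_max_image SS
    (fun S => (cols.filter (fun c => ∀ y ∈ S, E y c)).card) hSSne
  have h5 : ∑ T ∈ SS, (cols.filter (fun c => ∀ y ∈ T, E y c)).card = SC := by
    have hstep1 : ∀ T ∈ SS, (cols.filter (fun c => ∀ y ∈ T, E y c)).card
        = ∑ c ∈ cols, if (∀ y ∈ T, E y c) then 1 else 0 := fun T _ => Finset.card_filter _ _
    rw [Finset.sum_congr rfl hstep1, Finset.sum_comm]
    apply Finset.sum_congr rfl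
    intro c _
    have : ∑ T ∈ SS, (if (∀ y ∈ T, E y c) then 1 else 0)
        = (SS.filter (fun T => ∀ y ∈ T, E y c)).card := (Finset.card_filter _ _).symm
    rw [this]
    have hper : SS.filter (fun T => ∀ y ∈ T, E y c)
        = Finset.powersetCard k (YF.filter (fun y => E y c)) := by
      ext T
      simp only [hSS0, mem_filter, Finset.mem_powersetCard]
      constructor
      · rintro ⟨⟨hsub, hcard⟩, hall⟩
        exact ⟨fun y hy => Finset.mem_filter.mpr ⟨hsub hy, hall y hy⟩, hcard⟩
      · rintro ⟨hsub, hcard⟩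
        exact ⟨⟨fun y hy => (Finset.mem_filter.mp (hsub hy)).1, hcard⟩,
          fun y hy => (Finset.mem_filter.mp (hsub hy)).2⟩
    rw [hper, Finset.card_powersetCard]
  set common := cols.filter (fun c => ∀ y ∈ S, E y c) with hcommon
  have h7 : SC ≤ Ppar k * common.card := by
    have := Finset.sum_le_card_nsmul SS (fun T => (cols.filter (fun c => ∀ y ∈ T, E y c)).card)
      (common.card) (fun T hT' => hSmax T hT')
    rw [h5] at this
    rw [hSScard] at this
    simpa [smul_eq_mul] using this
  have hNS : (k+1) * 2^(2*k+2) ≤ common.card := by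
    have hPN : Ppar k * ((k+1) * 2^(2*k+3)) ≤ Ppar k * (2 * common.card) := by
      calc Ppar k * ((k+1) * 2^(2*k+3)) = (k+1) * (2^(2*k+3) * Ppar k) := by ring
      _ ≤ (k+1) * ((k+1) * gpar k) := Nat.mul_le_mul_left _ (gpar_mul k)
      _ ≤ 2 * SC := h4
      _ ≤ 2 * (Ppar k * common.card) := by omega
      _ = Ppar k * (2 * common.card) := by ring
    have hcan : (k+1) * 2^(2*k+3) ≤ 2 * common.card :=
      Nat.le_of_mul_le_mul_left hPN (Ppar_pos k)
    have e1 : (k+1) * 2^(2*k+3) = 2*((k+1) * 2^(2*k+2)) := by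
      rw [pow_succ]
      ring
    omega
  -- step 5 : pigeonhole into windows
  have hf : ∀ c ∈ common, ((σ c : ℕ) - e) / gpar k ∈ Finset.range (2*k+2) := by
    intro c hc
    have hc' : c ∈ cols := Finset.mem_filter.mp hc |>.1
    have hcc := Finset.mem_filter.mp hc'
    simp only [mem_univ, true_and] at hcc
    rw [Finset.mem_range, Nat.div_lt_iff_lt_mul hgpos]
    have h11 : (σ c : ℕ) - e < Lpar k := by omega
    have h12 : (2*k+2) * gpar k = Lpar k := hLg.symm
    omega
  have hfib := Finset.card_eq_sum_card_fiberwise hf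
  have hrangene : (Finset.range (2*k+2)).Nonempty := ⟨0, by simp⟩
  obtain ⟨t, htmem, htmax⟩ := Finset.exists_max_image (Finset.range (2*k+2))
    (fun t => (common.filter (fun c => ((σ c : ℕ) - e) / gpar k = t)).card) hrangene
  set A := common.filter (fun c => ((σ c : ℕ) - e) / gpar k = t) with hA0
  have hAcard : 2^(2*k+1) ≤ A.card := by
    have hsum := Finset.sum_le_card_nsmul (Finset.range (2*k+2))
      (fun t' => (common.filter (fun c => ((σ c : ℕ) - e) / gpar k = t')).card)
      (A.card) (fun t' ht' => htmax t' ht')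
    rw [Finset.card_range, smul_eq_mul] at hsum
    rw [← hfib] at hsum
    have e2 : (k+1)*2^(2*k+2) = (2*k+2)*2^(2*k+1) := by
      rw [pow_succ]
      ring
    have h8 : (2*k+2)*2^(2*k+1) ≤ (2*k+2)*A.card := by omega
    exact Nat.le_of_mul_le_mul_left h8 (by omega)
  set e' := e + (t+1)*gpar k with he'0
  have htrange : t < 2*k+2 := Finset.mem_range.mp htmem
  have hAmem : ∀ c ∈ A, (∀ y ∈ S, E y c) ∧ (e' ≤ (σ c : ℕ) + gpar k ∧ (σ c : ℕ) < e') := by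
    intro c hc
    have hc1 := Finset.mem_filter.mp hc
    have hc2 := Finset.mem_filter.mp hc1.1
    have hc3 := Finset.mem_filter.mp hc2.1
    simp only [mem_univ, true_and] at hc3
    refine ⟨hc2.2, ?_⟩
    have hdm := Nat.div_add_mod ((σ c : ℕ) - e) (gpar k)
    have hmod := Nat.mod_lt ((σ c : ℕ) - e) hgpos
    rw [hc1.2] at hdm
    have e3 : (t+1)*gpar k = gpar k*t + gpar k := by ring
    omega
  have he'1 : e + gpar k ≤ e' := by
    have e3 : (t+1)*gpar k = t*gpar k + gpar k := by ring
    omega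
  have he'2 : e' ≤ e + Lpar k := by
    have h9 : (t+1)*gpar k ≤ (2*k+2)*gpar k := Nat.mul_le_mul_right _ (by omega)
    have h12 : (2*k+2) * gpar k = Lpar k := hLg.symm
    omega
  -- step 6 : the new transitive set Y'
  obtain ⟨Y', hY'len, hY'pw, hY'A⟩ := exists_transChain E hT (2*k+2) A (by
    have e1 : (2:ℕ)^(2*k+2) = 2*2^(2*k+1) := by
      rw [pow_succ]
      ring
    omega)
  -- step 7 : the block S as a list
  have hSsub : S ⊆ YF := (Finset.mem_powersetCard.mp (by rw [hSS0] at hSmem; exact hSmem)).1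
  have hScard : S.card = k := (Finset.mem_powersetCard.mp (by rw [hSS0] at hSmem; exact hSmem)).2
  set Slist := Y.filter (fun y => decide (y ∈ S)) with hSlist0
  have hSlist_nd : Slist.Nodup := hnd.filter _
  have hSlist_tf : Slist.toFinset = S := by
    ext x
    simp only [hSlist0, List.mem_toFinset, List.mem_filter, decide_eq_true_eq]
    constructor
    · rintro ⟨-, h⟩; exact h
    · intro h
      exact ⟨List.mem_toFinset.mp (hSsub h), h⟩
  have hSlen : Slist.length = k := by
    rw [← List.toFinset_card_of_nodup hSlist_nd, hSlist_tf, hScard]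
  have hSpw : Slist.Pairwise E := by
    exact List.Pairwise.sublist List.filter_sublist hYpw
  have hSmemY : ∀ s ∈ Slist, s ∈ Y := by
    intro s hs
    exact (List.mem_filter.mp hs).1
  refine ⟨Slist, Y', e', hSlen, hSpw, hSmemY, hY'len, hY'pw, ?_, ?_, he'1, he'2⟩
  · intro y hy
    exact (hAmem y (hY'A y hy)).2
  · intro s hs u hu
    have hsS : s ∈ S := by
      have := (List.mem_filter.mp hs).2
      simpa using this
    exact (hAmem u (hY'A u hu)).1 s hsS

/-- The full recursive construction. -/
lemma stage (hT : IsTournament E) (hk : 1 ≤ k)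
    (hmed : ∀ (v : V) (b : ℕ), (σ v : ℕ) < b → b ≤ Fintype.card V →
      b - (σ v : ℕ) - 1 ≤ 2 * (univ.filter fun u =>
        (σ v : ℕ) < (σ u : ℕ) ∧ (σ u : ℕ) < b ∧ E v u).card) :
    ∀ (fuel e : ℕ), Fintype.card V - e ≤ fuel →
    ∀ Y : List V, Y.length = 2*k+2 → Y.Pairwise E →
      (∀ y ∈ Y, e ≤ (σ y : ℕ) + gpar k ∧ (σ y : ℕ) < e) →
    ∃ xs : List V, xs.Nodup ∧ PathPow k E xs ∧
      (∀ u ∈ xs.take k, u ∈ Y) ∧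
      (∀ u ∈ xs, e ≤ (σ u : ℕ) + gpar k) ∧
      k * (Fintype.card V - e) ≤ Lpar k * xs.length := by
  intro fuel
  induction fuel with
  | zero =>
    intro e hfuel Y hYlen hYpw hYmem
    refine ⟨Y.take (2*k), ?_, ?_, ?_, ?_, ?_⟩
    · exact nodup_of_pairwise hT (List.Pairwise.sublist (List.take_sublist _ _) hYpw)
    · exact pathPow_of_pairwise (List.Pairwise.sublist (List.take_sublist _ _) hYpw)
    · intro u hu
      exact List.mem_of_mem_take (List.mem_of_mem_take hu)
    · intro u hu
      exact (hYmem u (List.mem_of_mem_take hu)).1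
    · have h0 : Fintype.card V - e = 0 := by omega
      rw [h0]
      simp
  | succ f ih =>
    intro e hfuel Y hYlen hYpw hYmem
    by_cases hstep : e + Lpar k ≤ Fintype.card V
    · obtain ⟨Slist, Y', e', hSlen, hSpw, hSsubY, hY'len, hY'pw, hY'mem, hdom, he'1, he'2⟩ :=
        stage_step E σ k hT hk hmed e hstep Y hYlen hYpw hYmem
      have hgpos : 0 < gpar k := gpar_pos k
      obtain ⟨xs', hnd', hpp', htake', hpos', hlen'⟩ :=
        ih e' (by omega) Y' hY'len hY'pw hY'mem
      refine ⟨Slist ++ xs', ?_, ?_, ?_, ?_, ?_⟩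
      · refine List.Nodup.append (nodup_of_pairwise hT hSpw) hnd' ?_
        intro a haS haxs
        have h1 := (hYmem a (hSsubY a haS)).2
        have h2 := hpos' a haxs
        omega
      · refine pathPow_append Slist xs' hSlen hSpw hpp' ?_
        intro s hs u hu
        exact hdom s hs u (htake' u hu)
      · intro u hu
        have htk : (Slist ++ xs').take k = Slist := List.take_left' hSlen
        rw [htk] at hu
        exact hSsubY u hu
      · intro u hu
        rcases List.mem_append.mp hu with h | h
        · exact (hYmem u (hSsubY u h)).1
        · have := hpos' u h
          omega
      · rw [List.length_append, hSlen]
        have h1 : Fintype.card V - e ≤ (Fintype.card V - e') + Lpar k := by omega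
        calc k * (Fintype.card V - e) ≤ k * ((Fintype.card V - e') + Lpar k) :=
              Nat.mul_le_mul_left _ h1
        _ = k * (Fintype.card V - e') + k * Lpar k := by ring
        _ ≤ Lpar k * xs'.length + Lpar k * k := by
              have h2 : k * Lpar k = Lpar k * k := by ring
              omega
        _ = Lpar k * (k + xs'.length) := by ring
    · refine ⟨Y.take (2*k), ?_, ?_, ?_, ?_, ?_⟩
      · exact nodup_of_pairwise hT (List.Pairwise.sublist (List.take_sublist _ _) hYpw)
      · exact pathPow_of_pairwise (List.Pairwise.sublist (List.take_sublist _ _) hYpw)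
      · intro u hu
        exact List.mem_of_mem_take (List.mem_of_mem_take hu)
      · intro u hu
        exact (hYmem u (List.mem_of_mem_take hu)).1
      · have hlen : (Y.take (2*k)).length = 2*k := by
          rw [List.length_take, hYlen]
          omega
        rw [hlen]
        have h1 : k * (Fintype.card V - e) ≤ k * Lpar k := Nat.mul_le_mul_left _ (by omega)
        have h2 : Lpar k * (2*k) = 2*(k * Lpar k) := by ring
        omega

end PPaux

/-- Every tournament on `n` vertices contains the `k`-th power of a
directed path on at least `k·n/2^(4k+6)` vertices. -/
theorem statement_0 (k : ℕ) (hk : 1 ≤ k) (V : Type) [Fintype V]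
    (E : V → V → Prop) (hT : IsTournament E) :
    ∃ (m : ℕ) (x : Fin m → V), IsPathPower E k m x ∧
      (k : ℝ) * (Fintype.card V : ℝ) / 2 ^ (4 * k + 6) ≤ (m : ℝ) := by
  classical
  have hLpos : 0 < PPaux.Lpar k := by
    have := PPaux.gpar_pos k
    have := PPaux.Lpar_ge_g k
    omega
  have h2L : 2 * PPaux.Lpar k ≤ 2^(4*k+6) := PPaux.Lpar_le k hk
  have hgL : PPaux.gpar k ≤ PPaux.Lpar k := PPaux.Lpar_ge_g k
  rcases Nat.eq_zero_or_pos (Fintype.card V) with h0 | hpos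
  · refine ⟨0, fun i => i.elim0, ⟨fun a => a.elim0, fun i => i.elim0⟩, ?_⟩
    rw [h0]
    norm_num
  by_cases hsm : Fintype.card V < 2 * PPaux.gpar k
  · -- small case : a single vertex suffices
    obtain ⟨v⟩ := Fintype.card_pos_iff.mp hpos
    refine ⟨1, fun _ => v, ⟨fun a b _ => Subsingleton.elim a b, ?_⟩, ?_⟩
    · intro i j hij hjk
      have hi := i.isLt
      have hj := j.isLt
      omega
    · have hnat : k * Fintype.card V ≤ 2^(4*k+6) := by
        have h1 : k * Fintype.card V ≤ k * (2 * PPaux.gpar k) :=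
          Nat.mul_le_mul_left _ (by omega)
        have h2 : k * (2 * PPaux.gpar k) ≤ (2*k+2) * PPaux.gpar k := by
          have e1 : k * (2 * PPaux.gpar k) = (2*k) * PPaux.gpar k := by ring
          rw [e1]
          exact Nat.mul_le_mul_right _ (by omega)
        have h3 : (2*k+2) * PPaux.gpar k = PPaux.Lpar k := rfl
        omega
      rw [div_le_iff₀ (by positivity)]
      push_cast
      calc (k:ℝ) * (Fintype.card V : ℝ) = ((k * Fintype.card V : ℕ) : ℝ) := by push_cast; ring
      _ ≤ ((2^(4*k+6) : ℕ) : ℝ) := Nat.cast_le.mpr hnat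
      _ = (2:ℝ)^(4*k+6) := by push_cast; ring
      _ ≤ 1 * 2^(4*k+6) := by norm_num
  · -- main case
    have h2g : 2 * PPaux.gpar k ≤ Fintype.card V := not_lt.mp hsm
    have hgn : PPaux.gpar k ≤ Fintype.card V := by omega
    obtain ⟨σ, hσ⟩ := PPaux.exists_median E hpos
    have hmed : ∀ (v : V) (b : ℕ), (σ v : ℕ) < b → b ≤ Fintype.card V →
        b - (σ v : ℕ) - 1 ≤ 2 * (univ.filter fun u =>
          (σ v : ℕ) < (σ u : ℕ) ∧ (σ u : ℕ) < b ∧ E v u).card :=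
      fun v b h1 h2 => PPaux.median_half E hT σ hσ v b h1 h2
    -- initial transitive set in the first window
    have hA0card : (univ.filter fun u => 0 ≤ (σ u:ℕ) ∧ (σ u:ℕ) < PPaux.gpar k).card
        = PPaux.gpar k := by
      rw [PPaux.card_interval σ 0 (PPaux.gpar k) hgn]
      omega
    obtain ⟨Y, hYlen, hYpw, hYmem⟩ := PPaux.exists_transChain E hT (2*k+2)
      (univ.filter fun u => 0 ≤ (σ u:ℕ) ∧ (σ u:ℕ) < PPaux.gpar k) (by
        rw [hA0card]
        have hge := PPaux.gpar_ge k hk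
        have e1 : (2:ℕ)^(2*k+2) = 2*2^(2*k+1) := by
          rw [pow_succ]
          ring
        omega)
    have hYmem' : ∀ y ∈ Y, PPaux.gpar k ≤ (σ y:ℕ) + PPaux.gpar k ∧ (σ y:ℕ) < PPaux.gpar k := by
      intro y hy
      have := hYmem y hy
      simp only [mem_filter, mem_univ, true_and] at this
      omega
    obtain ⟨xs, hnd, hpp, -, -, hlen⟩ := PPaux.stage E σ k hT hk hmed (Fintype.card V)
      (PPaux.gpar k) (by omega) Y hYlen hYpw hYmem'
    refine ⟨xs.length, fun i => xs.get i, ⟨?_, ?_⟩, ?_⟩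
    · intro a b hab
      exact List.nodup_iff_injective_get.mp hnd hab
    · intro i j h1 h2
      have := hpp i j i.isLt j.isLt h1 h2
      simpa [List.get_eq_getElem] using this
    · have hkn : k * Fintype.card V ≤ 2^(4*k+6) * xs.length := by
        have h1 : k * (Fintype.card V - PPaux.gpar k) ≤ PPaux.Lpar k * xs.length := hlen
        have h2 : k * Fintype.card V ≤ 2 * (k * (Fintype.card V - PPaux.gpar k)) := by
          have h3 : Fintype.card V ≤ 2*(Fintype.card V - PPaux.gpar k) := by omega
          calc k * Fintype.card V ≤ k * (2*(Fintype.card V - PPaux.gpar k)) :=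
                Nat.mul_le_mul_left _ h3
          _ = 2 * (k * (Fintype.card V - PPaux.gpar k)) := by ring
        calc k * Fintype.card V ≤ 2 * (PPaux.Lpar k * xs.length) := by omega
        _ = (2 * PPaux.Lpar k) * xs.length := by ring
        _ ≤ 2^(4*k+6) * xs.length := Nat.mul_le_mul_right _ h2L
      rw [div_le_iff₀ (by positivity)]
      calc (k:ℝ) * (Fintype.card V:ℝ) = ((k * Fintype.card V : ℕ) : ℝ) := by push_cast; ring
      _ ≤ ((2^(4*k+6) * xs.length : ℕ) : ℝ) := Nat.cast_le.mpr hkn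
      _ = (xs.length:ℝ) * 2^(4*k+6) := by push_cast; ring
end

section
/- Let G = (A ∪ B, E) be a finite bipartite graph such that for some 0 < β ≤ 1/2 every vertex of A has at least β|B| neighbours in B. If |A| ≥ k/β, then A contains a subset X of size k whose vertices have at least β^{4k}|B| common neighbours in B. -/
open Finset

attribute [local instance] Classical.propDecidable

noncomputable def truncF (k : ℕ) (x : ℝ) : ℝ := ∏ i ∈ Finset.range k, max (x - (i : ℝ)) 0

lemma truncF_nonneg (k : ℕ) (x : ℝ) : 0 ≤ truncF k x :=
  Finset.prod_nonneg fun _ _ => le_max_right _ _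

lemma truncF_monotone (k : ℕ) : Monotone (truncF k) := by
  induction k with
  | zero => intro x y _; simp [truncF]
  | succ k ih =>
    intro x y hxy
    simp only [truncF, Finset.prod_range_succ]
    have := truncF_nonneg k x
    exact mul_le_mul (ih hxy) (max_le_max (by linarith) le_rfl) (le_max_right _ _)
      (le_trans (truncF_nonneg k x) (ih hxy))

lemma truncF_convex (k : ℕ) : ConvexOn ℝ Set.univ (truncF k) := by
  induction k with
  | zero =>
    have h0 : ConvexOn ℝ Set.univ (fun _ : ℝ => (1:ℝ)) := convexOn_const (1:ℝ) convex_univ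
    have heq0 : truncF 0 = fun _ : ℝ => (1:ℝ) := by funext x; simp [truncF]
    rw [heq0]; exact h0
  | succ k ih =>
    have hg : ConvexOn ℝ Set.univ (fun x : ℝ => max (x - (k:ℝ)) 0) := by
      have h1 : ConvexOn ℝ Set.univ (fun x : ℝ => x - (k:ℝ)) :=
        (convexOn_id convex_univ).sub (concaveOn_const _ convex_univ)
      exact h1.sup (convexOn_const (0:ℝ) convex_univ)
    have hmono : Monotone (fun x : ℝ => max (x - (k:ℝ)) 0) :=
      fun x y hxy => max_le_max (by linarith) le_rfl
    have h := ih.mul hg (fun x _ => truncF_nonneg k x) (fun x _ => le_max_right _ _)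
      (((truncF_monotone k).monovary hmono).monovaryOn _)
    have heq : truncF (k+1) = truncF k * (fun x : ℝ => max (x - (k:ℝ)) 0) := by
      funext x; simp [truncF, Finset.prod_range_succ]
    rw [heq]; exact h

lemma truncF_natCast (k m : ℕ) : truncF k (m : ℝ) = (m.descFactorial k : ℝ) := by
  rw [Nat.descFactorial_eq_prod_range, truncF, Nat.cast_prod]
  apply Finset.prod_congr rfl
  intro i _
  rcases le_total i m with h | h
  · rw [Nat.cast_sub h, max_eq_left (sub_nonneg.2 (by exact_mod_cast h))]
  · rw [Nat.sub_eq_zero_of_le h, Nat.cast_zero,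
      max_eq_right (sub_nonpos.2 (by exact_mod_cast h))]

lemma pow_le_three_pow_mul_factorial (k : ℕ) : (k : ℝ) ^ k ≤ 3 ^ k * (Nat.factorial k) := by
  have h1 : (k : ℝ) ^ k / (Nat.factorial k : ℝ) ≤ Real.exp k := Real.pow_div_factorial_le_exp (x := (k:ℝ)) (Nat.cast_nonneg k) k
  have h2 : Real.exp k ≤ 3 ^ k := by
    have : Real.exp (k : ℝ) = Real.exp 1 ^ k := by
      rw [← Real.exp_nat_mul]; norm_num
    rw [this]
    exact pow_le_pow_left₀ (Real.exp_pos 1).le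
      (le_trans Real.exp_one_lt_d9.le (by norm_num)) k
  have hfac : (0:ℝ) < (Nat.factorial k) := by exact_mod_cast Nat.factorial_pos k
  rw [div_le_iff₀ hfac] at h1
  calc (k:ℝ)^k ≤ Real.exp k * (Nat.factorial k) := h1
    _ ≤ 3^k * (Nat.factorial k) := by apply mul_le_mul_of_nonneg_right h2 hfac.le

set_option maxHeartbeats 1000000 in
/-- K\H{o}v\'ari–S\'os–Tur\'an-type lemma: if every vertex of `A` has at
least `β|B|` neighbours and `|A| ≥ k/β`, then some `k`-subset of `A` has at least
`β^(4k)|B|` common neighbours in `B`. -/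
theorem statement_5 (V : Type) (A B : Finset V) (hAB : Disjoint A B)
    (R : V → V → Prop) (β : ℝ) (k : ℕ) (hβ0 : 0 < β) (hβ : β ≤ 1 / 2)
    (hdeg : ∀ a ∈ A, β * (B.card : ℝ) ≤ ((B.filter fun b => R a b).card : ℝ))
    (hA : (k : ℝ) / β ≤ (A.card : ℝ)) :
    ∃ X ⊆ A, X.card = k ∧
      β ^ (4 * k) * (B.card : ℝ) ≤ ((B.filter fun b => ∀ x ∈ X, R x b).card : ℝ) := by
  classical
  obtain rfl | hk := Nat.eq_zero_or_pos k
  · exact ⟨∅, Finset.empty_subset A, rfl, by simp⟩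
  set n := A.card with hn
  have hβn : (k : ℝ) ≤ β * n := by
    rw [div_le_iff₀ hβ0] at hA
    calc (k : ℝ) ≤ n * β := hA
      _ = β * n := mul_comm _ _
  have hkR : (1:ℝ) ≤ (k:ℝ) := by exact_mod_cast hk
  have hkn : k ≤ n := by
    have h1 : (k : ℝ) ≤ n := by nlinarith [Nat.cast_nonneg (α := ℝ) n]
    exact_mod_cast h1
  obtain rfl | hB := B.eq_empty_or_nonempty
  · obtain ⟨X, hXA, hX⟩ := Finset.exists_subset_card_eq hkn
    exact ⟨X, hXA, hX, by simp⟩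
  set d : V → ℕ := fun b => (A.filter fun a => R a b).card with hd
  -- Step A : total degree
  have hsumd : β * n * B.card ≤ ∑ b ∈ B, (d b : ℝ) := by
    have hswap : ∑ b ∈ B, d b = ∑ a ∈ A, (B.filter fun b => R a b).card := by
      simp only [hd, Finset.card_filter]
      rw [Finset.sum_comm]
    have h2 : β * B.card * n ≤ ∑ a ∈ A, ((B.filter fun b => R a b).card : ℝ) := by
      calc β * B.card * n = ∑ _a ∈ A, β * B.card := by
            rw [Finset.sum_const, hn, nsmul_eq_mul]; ring
        _ ≤ _ := Finset.sum_le_sum hdeg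
    calc β * n * B.card = β * B.card * n := by ring
      _ ≤ ∑ a ∈ A, ((B.filter fun b => R a b).card : ℝ) := h2
      _ = ∑ b ∈ B, (d b : ℝ) := by
          rw [← Nat.cast_sum, ← Nat.cast_sum, hswap]
  -- Step B : double counting
  set P := A.powersetCard k with hP
  set c : Finset V → ℕ := fun X => (B.filter fun b => ∀ x ∈ X, R x b).card with hc
  have hcount : ∑ X ∈ P, c X = ∑ b ∈ B, (d b).choose k := by
    have h1 : ∀ b, (P.filter fun X => ∀ x ∈ X, R x b)
        = (A.filter fun a => R a b).powersetCard k := by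
      intro b
      ext X
      simp only [Finset.mem_filter, hP, Finset.mem_powersetCard]
      constructor
      · rintro ⟨⟨hXA, hXk⟩, hall⟩
        exact ⟨fun x hx => Finset.mem_filter.2 ⟨hXA hx, hall x hx⟩, hXk⟩
      · rintro ⟨hsub, hXk⟩
        exact ⟨⟨fun x hx => (Finset.mem_filter.1 (hsub hx)).1, hXk⟩,
          fun x hx => (Finset.mem_filter.1 (hsub hx)).2⟩
    calc ∑ X ∈ P, c X
        = ∑ X ∈ P, ∑ b ∈ B, if (∀ x ∈ X, R x b) then 1 else 0 :=
          Finset.sum_congr rfl fun X _ => Finset.card_filter _ _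
      _ = ∑ b ∈ B, ∑ X ∈ P, if (∀ x ∈ X, R x b) then 1 else 0 := Finset.sum_comm
      _ = ∑ b ∈ B, (P.filter fun X => ∀ x ∈ X, R x b).card :=
          Finset.sum_congr rfl fun b _ => (Finset.card_filter _ _).symm
      _ = ∑ b ∈ B, (d b).choose k := by
          refine Finset.sum_congr rfl fun b _ => ?_
          rw [h1 b, Finset.card_powersetCard]
  -- Step C : Jensen
  have hBpos : (0:ℝ) < B.card := by exact_mod_cast hB.card_pos
  have hjensen : (B.card : ℝ) * truncF k (β * n) ≤ ∑ b ∈ B, truncF k (d b) := by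
    have hw : ∑ _b ∈ B, (B.card : ℝ)⁻¹ = 1 := by
      rw [Finset.sum_const, nsmul_eq_mul]; field_simp
    have h := (truncF_convex k).map_sum_le (t := B) (w := fun _ => (B.card : ℝ)⁻¹)
      (p := fun b => (d b : ℝ)) (fun _ _ => by positivity) hw (fun _ _ => Set.mem_univ _)
    have harg : β * n ≤ ∑ b ∈ B, (B.card : ℝ)⁻¹ • (d b : ℝ) := by
      simp only [smul_eq_mul]
      rw [← Finset.mul_sum, inv_mul_eq_div, le_div_iff₀ hBpos]
      exact hsumd
    have hle : truncF k (β * n) ≤ ∑ b ∈ B, (B.card : ℝ)⁻¹ * truncF k (d b) := by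
      refine le_trans (truncF_monotone k harg) ?_
      simpa using h
    rw [← Finset.mul_sum] at hle
    calc (B.card : ℝ) * truncF k (β * n)
        ≤ (B.card : ℝ) * ((B.card : ℝ)⁻¹ * ∑ b ∈ B, truncF k (d b)) :=
          mul_le_mul_of_nonneg_left hle hBpos.le
      _ = ∑ b ∈ B, truncF k (d b) := by field_simp
  -- Step D : rewrite RHS
  have hsumF : ∑ b ∈ B, truncF k (d b) = (Nat.factorial k : ℝ) * ∑ X ∈ P, (c X : ℝ) := by
    calc ∑ b ∈ B, truncF k (d b) = ∑ b ∈ B, ((d b).descFactorial k : ℝ) :=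
          Finset.sum_congr rfl fun b _ => truncF_natCast k (d b)
      _ = ∑ b ∈ B, ((Nat.factorial k : ℝ) * ((d b).choose k : ℝ)) := by
          refine Finset.sum_congr rfl fun b _ => ?_
          rw_mod_cast [Nat.descFactorial_eq_factorial_mul_choose]
      _ = (Nat.factorial k : ℝ) * ∑ b ∈ B, ((d b).choose k : ℝ) := by
          rw [Finset.mul_sum]
      _ = (Nat.factorial k : ℝ) * ∑ X ∈ P, (c X : ℝ) := by
          rw [← Nat.cast_sum, ← Nat.cast_sum, hcount]
  -- Step E : maximizing X
  have hPne : P.Nonempty := Finset.powersetCard_nonempty.2 hkn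
  obtain ⟨X, hXP, hXmax⟩ := Finset.exists_max_image P c hPne
  obtain ⟨hXA, hXk⟩ := Finset.mem_powersetCard.1 hXP
  have hsum_le : ∑ Y ∈ P, (c Y : ℝ) ≤ (n.choose k : ℝ) * c X := by
    calc ∑ Y ∈ P, (c Y : ℝ) ≤ ∑ _Y ∈ P, (c X : ℝ) :=
          Finset.sum_le_sum fun Y hY => by exact_mod_cast hXmax Y hY
      _ = (P.card : ℝ) * c X := by rw [Finset.sum_const, nsmul_eq_mul]
      _ = (n.choose k : ℝ) * c X := by rw [hP, Finset.card_powersetCard, hn]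
  -- descFactorial as real product
  have hdesc : ((n.descFactorial k : ℕ) : ℝ) = ∏ i ∈ Finset.range k, ((n : ℝ) - i) := by
    rw [Nat.descFactorial_eq_prod_range, Nat.cast_prod]
    exact Finset.prod_congr rfl fun i hi =>
      Nat.cast_sub (le_trans (Finset.mem_range.1 hi).le hkn)
  have hdesck : ((k.descFactorial k : ℕ) : ℝ) = ∏ i ∈ Finset.range k, ((k : ℝ) - i) := by
    rw [Nat.descFactorial_eq_prod_range, Nat.cast_prod]
    exact Finset.prod_congr rfl fun i hi => Nat.cast_sub (Finset.mem_range.1 hi).le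
  set Pn : ℝ := ∏ i ∈ Finset.range k, ((n : ℝ) - i) with hPn
  have hPnpos : 0 < Pn := by
    refine Finset.prod_pos fun i hi => ?_
    have : (i : ℝ) < k := by exact_mod_cast Finset.mem_range.1 hi
    have : (k : ℝ) ≤ n := by exact_mod_cast hkn
    linarith
  -- combine C, D, E
  have hmain : (B.card : ℝ) * truncF k (β * n) ≤ Pn * c X := by
    calc (B.card : ℝ) * truncF k (β * n) ≤ ∑ b ∈ B, truncF k (d b) := hjensen
      _ = (Nat.factorial k : ℝ) * ∑ X ∈ P, (c X : ℝ) := hsumF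
      _ ≤ (Nat.factorial k : ℝ) * ((n.choose k : ℝ) * c X) := by
          refine mul_le_mul_of_nonneg_left hsum_le ?_
          positivity
      _ = ((Nat.factorial k * n.choose k : ℕ) : ℝ) * c X := by push_cast; ring
      _ = ((n.descFactorial k : ℕ) : ℝ) * c X := by
          rw [← Nat.descFactorial_eq_factorial_mul_choose]
      _ = Pn * c X := by rw [hdesc]
  -- Step F : truncF at β n
  have htrunc : truncF k (β * n) = ∏ i ∈ Finset.range k, (β * n - i) := by
    unfold truncF
    refine Finset.prod_congr rfl fun i hi => max_eq_left ?_
    have : (i : ℝ) + 1 ≤ k := by exact_mod_cast Finset.mem_range.1 hi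
    linarith
  -- Step G : product lower bound
  have hprod : β ^ (4 * k) * Pn ≤ ∏ i ∈ Finset.range k, (β * n - i) := by
    have hkpos : (0:ℝ) < k := by linarith
    have hfac : ∀ i ∈ Finset.range k,
        0 ≤ β * (((k : ℝ) - i) / k) * ((n : ℝ) - i) ∧
        β * (((k : ℝ) - i) / k) * ((n : ℝ) - i) ≤ β * n - i := by
      intro i hi
      have hik : (i : ℝ) + 1 ≤ k := by exact_mod_cast Finset.mem_range.1 hi
      have hknR : (k : ℝ) ≤ n := by exact_mod_cast hkn
      constructor
      · have h1 : (0:ℝ) ≤ (k : ℝ) - i := by linarith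
        have h2 : (0:ℝ) ≤ (n : ℝ) - i := by linarith
        positivity
      · have heq : β * (((k : ℝ) - i) / k) * ((n : ℝ) - i)
            = β * ((k : ℝ) - i) * ((n : ℝ) - i) / k := by ring
        rw [heq, div_le_iff₀ hkpos]
        nlinarith [mul_nonneg (Nat.cast_nonneg (α := ℝ) i) (sub_nonneg.2 hβn),
          mul_nonneg (mul_nonneg hβ0.le (Nat.cast_nonneg (α := ℝ) i))
            (sub_nonneg.2 (by linarith : (i:ℝ) ≤ k))]
    have hsplit : ∏ i ∈ Finset.range k, (β * (((k : ℝ) - i) / k) * ((n : ℝ) - i))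
        = β ^ k * ((Nat.factorial k : ℝ) / (k : ℝ) ^ k) * Pn := by
      rw [Finset.prod_mul_distrib, Finset.prod_mul_distrib, Finset.prod_const,
        Finset.prod_div_distrib, Finset.prod_const, Finset.card_range, ← hdesck,
        Nat.descFactorial_self, hPn]
    have hfactpow : ((1:ℝ)/3) ^ k ≤ (Nat.factorial k : ℝ) / (k : ℝ) ^ k := by
      rw [div_pow, one_pow, div_le_div_iff₀ (by positivity) (by positivity)]
      calc (1:ℝ) * (k:ℝ)^k = (k:ℝ)^k := by ring
        _ ≤ 3 ^ k * Nat.factorial k := pow_le_three_pow_mul_factorial k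
        _ = (Nat.factorial k : ℝ) * 3 ^ k := by ring
    have hβ3 : (β ^ 3 : ℝ) ≤ 1/3 := by
      have h3 := pow_le_pow_left₀ hβ0.le hβ 3
      norm_num at h3
      linarith
    calc β ^ (4 * k) * Pn = β ^ k * (β ^ 3) ^ k * Pn := by
          rw [← pow_mul, ← pow_add]; ring_nf
      _ ≤ β ^ k * ((1:ℝ)/3) ^ k * Pn := by
          have h1 : (β ^ 3) ^ k ≤ ((1:ℝ)/3) ^ k :=
            pow_le_pow_left₀ (by positivity) hβ3 k
          have := mul_le_mul_of_nonneg_left h1 (pow_nonneg hβ0.le k)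
          exact mul_le_mul_of_nonneg_right this hPnpos.le
      _ ≤ β ^ k * ((Nat.factorial k : ℝ) / (k : ℝ) ^ k) * Pn := by
          have := mul_le_mul_of_nonneg_left hfactpow (pow_nonneg hβ0.le k)
          exact mul_le_mul_of_nonneg_right this hPnpos.le
      _ = ∏ i ∈ Finset.range k, (β * (((k : ℝ) - i) / k) * ((n : ℝ) - i)) := hsplit.symm
      _ ≤ ∏ i ∈ Finset.range k, (β * n - i) :=
          Finset.prod_le_prod (fun i hi => (hfac i hi).1) (fun i hi => (hfac i hi).2)
  -- finish
  refine ⟨X, hXA, hXk, ?_⟩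
  have hfinal : (β ^ (4 * k) * B.card) * Pn ≤ (c X : ℝ) * Pn := by
    calc (β ^ (4 * k) * B.card) * Pn = (B.card : ℝ) * (β ^ (4 * k) * Pn) := by ring
      _ ≤ (B.card : ℝ) * ∏ i ∈ Finset.range k, (β * n - i) :=
          mul_le_mul_of_nonneg_left hprod hBpos.le
      _ = (B.card : ℝ) * truncF k (β * n) := by rw [htrunc]
      _ ≤ Pn * c X := hmain
      _ = (c X : ℝ) * Pn := by ring
  exact le_of_mul_le_mul_right hfinal hPnpos
end

section
/- Let A, B be disjoint vertex sets in a tournament with d(A,B) ≥ β for some 0 < β ≤ 1/2, and suppose |A|, |B| ≥ β^{-5k}. Then there exist sets X ⊆ A and Y ⊆ B, each of size k, each inducing a transitive subtournament, such that X ⇒ Y. -/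
open Finset

attribute [local instance] Classical.propDecidable

/-- Tournament Ramsey: any set with `2^k ≤ card + 1` contains a transitive `k`-subset. -/
lemma tourn_ramsey {V : Type} {E : V → V → Prop} (hT : IsTournament E) :
    ∀ (k : ℕ) (S : Finset V), 2 ^ k ≤ S.card + 1 →
      ∃ T ⊆ S, T.card = k ∧ IsTransitiveOn E T := by
  intro k
  induction k with
  | zero =>
    intro S _
    exact ⟨∅, empty_subset _, card_empty, ⟨fun _ => 0, by simp, by simp⟩⟩
  | succ n ih =>
    intro S hS
    have h2n : 1 ≤ 2 ^ n := Nat.one_le_two_pow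
    have hpow : 2 ^ (n + 1) = 2 ^ n * 2 := pow_succ 2 n
    have hpos : 0 < S.card := by omega
    obtain ⟨v, hv⟩ := card_pos.1 hpos
    classical
    set Out := (S.erase v).filter (fun u => E v u) with hOdef
    set Inn := (S.erase v).filter (fun u => E u v) with hIdef
    have hcover : S.erase v ⊆ Out ∪ Inn := by
      intro u hu
      have hne : u ≠ v := ne_of_mem_erase hu
      by_cases h : E v u
      · exact mem_union_left _ (mem_filter.2 ⟨hu, h⟩)
      · exact mem_union_right _ (mem_filter.2 ⟨hu, (hT.2 u v hne).2 h⟩)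
    have herase : (S.erase v).card = S.card - 1 := card_erase_of_mem hv
    have hcard2 : S.card - 1 ≤ Out.card + Inn.card := by
      calc S.card - 1 = (S.erase v).card := herase.symm
        _ ≤ (Out ∪ Inn).card := card_le_card hcover
        _ ≤ Out.card + Inn.card := card_union_le _ _
    have hOS : Out ⊆ S := (filter_subset _ _).trans (erase_subset _ _)
    have hIS : Inn ⊆ S := (filter_subset _ _).trans (erase_subset _ _)
    rcases le_total Out.card Inn.card with hcase | hcase
    · -- Inn is big; v goes on top (last)
      have hrec : 2 ^ n ≤ Inn.card + 1 := by omega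
      obtain ⟨T', hT'I, hT'card, f', hinj, hord⟩ := ih Inn hrec
      have hvT' : v ∉ T' := by
        intro h
        exact (notMem_erase v S) (mem_of_mem_filter v (hT'I h))
      set M := 1 + ∑ u ∈ T', f' u with hM
      have hlt : ∀ u ∈ T', f' u < M := by
        intro u hu
        have := single_le_sum (f := f') (fun i _ => Nat.zero_le _) hu
        omega
      refine ⟨insert v T', ?_, ?_, ?_⟩
      · intro u hu
        rcases mem_insert.1 hu with h | h
        · rw [h]; exact hv
        · exact hIS (hT'I h)
      · rw [card_insert_of_notMem hvT', hT'card]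
      · refine ⟨fun u => if u = v then M else f' u, ?_, ?_⟩
        · intro x hx y hy hxy
          simp only [coe_insert, Set.mem_insert_iff, mem_coe] at hx hy
          rcases hx with hx | hx <;> rcases hy with hy | hy
          · rw [hx, hy]
          · have hyv : y ≠ v := fun h => hvT' (h ▸ hy)
            simp only [if_pos hx, if_neg hyv] at hxy
            exact absurd hxy.symm (Nat.ne_of_lt (hlt y hy))
          · have hxv : x ≠ v := fun h => hvT' (h ▸ hx)
            simp only [if_neg hxv, if_pos hy] at hxy
            exact absurd hxy (Nat.ne_of_lt (hlt x hx))
          · have hxv : x ≠ v := fun h => hvT' (h ▸ hx)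
            have hyv : y ≠ v := fun h => hvT' (h ▸ hy)
            simp only [if_neg hxv, if_neg hyv] at hxy
            exact hinj (mem_coe.2 hx) (mem_coe.2 hy) hxy
        · intro u hu w hw hE
          rcases mem_insert.1 hu with hu' | hu' <;> rcases mem_insert.1 hw with hw' | hw'
          · rw [hu', hw'] at hE; exact absurd hE (hT.1 v)
          · -- u = v, w ∈ T' ⊆ Inn : E w v holds, contradicting E v w
            have hwv : w ≠ v := fun h => hvT' (h ▸ hw')
            rw [hu'] at hE
            have : E w v := (mem_filter.1 (hT'I hw')).2
            exact absurd hE ((hT.2 w v hwv).1 this)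
          · have huv : u ≠ v := fun h => hvT' (h ▸ hu')
            simp only [if_neg huv, if_pos hw']
            exact hlt u hu'
          · have huv : u ≠ v := fun h => hvT' (h ▸ hu')
            have hwv : w ≠ v := fun h => hvT' (h ▸ hw')
            simp only [if_neg huv, if_neg hwv]
            exact hord u hu' w hw' hE
    · -- Out is big; v goes first
      have hrec : 2 ^ n ≤ Out.card + 1 := by omega
      obtain ⟨T', hT'O, hT'card, f', hinj, hord⟩ := ih Out hrec
      have hvT' : v ∉ T' := by
        intro h
        exact (notMem_erase v S) (mem_of_mem_filter v (hT'O h))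
      refine ⟨insert v T', ?_, ?_, ?_⟩
      · intro u hu
        rcases mem_insert.1 hu with h | h
        · rw [h]; exact hv
        · exact hOS (hT'O h)
      · rw [card_insert_of_notMem hvT', hT'card]
      · refine ⟨fun u => if u = v then 0 else f' u + 1, ?_, ?_⟩
        · intro x hx y hy hxy
          simp only [coe_insert, Set.mem_insert_iff, mem_coe] at hx hy
          rcases hx with hx | hx <;> rcases hy with hy | hy
          · rw [hx, hy]
          · have hyv : y ≠ v := fun h => hvT' (h ▸ hy)
            simp only [if_pos hx, if_neg hyv] at hxy
            omega
          · have hxv : x ≠ v := fun h => hvT' (h ▸ hx)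
            simp only [if_neg hxv, if_pos hy] at hxy
            omega
          · have hxv : x ≠ v := fun h => hvT' (h ▸ hx)
            have hyv : y ≠ v := fun h => hvT' (h ▸ hy)
            simp only [if_neg hxv, if_neg hyv] at hxy
            exact hinj (mem_coe.2 hx) (mem_coe.2 hy) (by omega)
        · intro u hu w hw hE
          rcases mem_insert.1 hu with hu' | hu' <;> rcases mem_insert.1 hw with hw' | hw'
          · rw [hu', hw'] at hE; exact absurd hE (hT.1 v)
          · have hwv : w ≠ v := fun h => hvT' (h ▸ hw')
            simp only [if_pos hu', if_neg hwv]
            omega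
          · -- u ∈ T' ⊆ Out : E v u holds, contradicting E u v
            have huv : u ≠ v := fun h => hvT' (h ▸ hu')
            rw [hw'] at hE
            have : E v u := (mem_filter.1 (hT'O hu')).2
            exact absurd this ((hT.2 u v huv).1 hE)
          · have huv : u ≠ v := fun h => hvT' (h ▸ hu')
            have hwv : w ≠ v := fun h => hvT' (h ▸ hw')
            simp only [if_neg huv, if_neg hwv]
            exact Nat.add_lt_add_right (hord u hu' w hw' hE) 1

/-- A subset of given size with at least average sum. -/
lemma exists_subset_card_avg {V : Type} (f : V → ℕ) :
    ∀ (d : ℕ) (A : Finset V) (N : ℕ), A.card = N + d →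
      ∃ A' ⊆ A, A'.card = N ∧ N * (∑ a ∈ A, f a) ≤ A.card * ∑ a ∈ A', f a := by
  intro d
  induction d with
  | zero =>
    intro A N h
    exact ⟨A, Subset.rfl, by omega, by rw [h, Nat.add_zero]⟩
  | succ d ih =>
    intro A N h
    have hne : A.Nonempty := card_pos.1 (by omega)
    obtain ⟨a, ha, hmin⟩ := A.exists_min_image f hne
    have hcard : (A.erase a).card = N + d := by
      rw [card_erase_of_mem ha]; omega
    obtain ⟨A', hsub, hcardA', hle⟩ := ih (A.erase a) N hcard
    refine ⟨A', hsub.trans (erase_subset _ _), hcardA', ?_⟩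
    classical
    have hsplit : ∑ x ∈ A, f x = (∑ x ∈ A.erase a, f x) + f a := (sum_erase_add A f ha).symm
    have hminsum : A.card * f a ≤ ∑ x ∈ A, f x := by
      have := card_nsmul_le_sum A f (f a) (fun x hx => hmin x hx)
      simpa [smul_eq_mul] using this
    have hA1 : A.card = N + d + 1 := by omega
    have hle' : N * (∑ x ∈ A.erase a, f x) ≤ (N + d) * ∑ x ∈ A', f x := by
      rw [← hcard]; exact hle
    have h2 : (N + d + 1) * f a ≤ (∑ x ∈ A.erase a, f x) + f a := by
      rw [← hA1, ← hsplit]; exact hminsum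
    have h1 : (N + d) * f a ≤ ∑ x ∈ A.erase a, f x := by nlinarith
    have claim1 : (N + d) * ((∑ x ∈ A.erase a, f x) + f a) ≤
        (N + d + 1) * ∑ x ∈ A.erase a, f x := by nlinarith
    rcases Nat.eq_zero_or_pos (N + d) with hz | hpos
    · have hN : N = 0 := by omega
      simp [hN]
    · rw [hsplit, hA1]
      have key : (N + d) * (N * ((∑ x ∈ A.erase a, f x) + f a)) ≤
          (N + d) * ((N + d + 1) * ∑ x ∈ A', f x) := by
        calc (N + d) * (N * ((∑ x ∈ A.erase a, f x) + f a))
            = N * ((N + d) * ((∑ x ∈ A.erase a, f x) + f a)) := by ring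
          _ ≤ N * ((N + d + 1) * ∑ x ∈ A.erase a, f x) := Nat.mul_le_mul_left _ claim1
          _ = (N + d + 1) * (N * ∑ x ∈ A.erase a, f x) := by ring
          _ ≤ (N + d + 1) * ((N + d) * ∑ x ∈ A', f x) := Nat.mul_le_mul_left _ hle'
          _ = (N + d) * ((N + d + 1) * ∑ x ∈ A', f x) := by ring
      exact Nat.le_of_mul_le_mul_left key hpos

lemma aux_k2 : ∀ k : ℕ, k * 2 ^ k ≤ 2 ^ (k * k) := by
  intro k
  match k with
  | 0 => norm_num
  | 1 => norm_num
  | (m + 2) =>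
    have h1 : (m + 2) ≤ 2 ^ (m + 2) := Nat.lt_two_pow_self.le
    have h2 : 2 ^ (m + 2) ≤ 2 ^ ((m + 2) * (m + 1)) := by
      apply Nat.pow_le_pow_right (by norm_num)
      nlinarith
    calc (m + 2) * 2 ^ (m + 2) ≤ 2 ^ ((m + 2) * (m + 1)) * 2 ^ (m + 2) := by
          exact Nat.mul_le_mul_right _ (h1.trans h2)
      _ = 2 ^ ((m + 2) * (m + 1) + (m + 2)) := (pow_add 2 _ _).symm
      _ = 2 ^ ((m + 2) * (m + 2)) := by ring_nf

set_option maxHeartbeats 1000000 in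
/-- If `d(A,B) ≥ β` and `|A|,|B| ≥ β^(-5k)` in a tournament, then
there are transitive `k`-sets `X ⊆ A` and `Y ⊆ B` with `X ⇒ Y`. -/
theorem statement_7 (V : Type) (E : V → V → Prop) (hT : IsTournament E)
    (A B : Finset V) (hAB : Disjoint A B) (β : ℝ) (k : ℕ)
    (hβ0 : 0 < β) (hβ : β ≤ 1 / 2)
    (hd : β * ((A.card : ℝ) * (B.card : ℝ)) ≤
      (((A ×ˢ B).filter fun p => E p.1 p.2).card : ℝ))
    (hA : β ^ (-(5 * k : ℤ)) ≤ (A.card : ℝ))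
    (hB : β ^ (-(5 * k : ℤ)) ≤ (B.card : ℝ)) :
    ∃ X ⊆ A, ∃ Y ⊆ B,
      X.card = k ∧ Y.card = k ∧
      IsTransitiveOn E X ∧ IsTransitiveOn E Y ∧ Dominates E X Y := by
  classical
  rcases Nat.eq_zero_or_pos k with hk0 | hk
  · subst hk0
    exact ⟨∅, empty_subset _, ∅, empty_subset _, card_empty, card_empty,
      ⟨fun _ => 0, by simp, by simp⟩, ⟨fun _ => 0, by simp, by simp⟩,
      fun x hx => absurd hx (notMem_empty x)⟩
  have hβ0' : β ≠ 0 := ne_of_gt hβ0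
  have hq0 : (0:ℝ) < β⁻¹ := inv_pos.2 hβ0
  have hq2 : (2:ℝ) ≤ β⁻¹ := by
    rw [show (2:ℝ) = (1/2)⁻¹ by norm_num]
    exact inv_anti₀ hβ0 hβ
  have hβq : β * β⁻¹ = 1 := mul_inv_cancel₀ hβ0'
  have hconv : β ^ (-(5 * (k:ℤ))) = (β⁻¹) ^ (5*k) := by
    rw [show (-(5 * (k:ℤ))) = -((5*k : ℕ) : ℤ) by push_cast; ring, zpow_neg, zpow_natCast,
      ← inv_pow]
  rw [hconv] at hA hB
  have h1q : (1:ℝ) ≤ β⁻¹ := by linarith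
  have hqp : ∀ t : ℕ, (1:ℝ) ≤ β⁻¹ ^ t := fun t => one_le_pow₀ h1q
  have hb1 : (1:ℝ) ≤ B.card := le_trans (hqp _) hB
  have hb0 : (0:ℝ) < B.card := lt_of_lt_of_le zero_lt_one hb1
  have ha1 : (1:ℝ) ≤ A.card := le_trans (hqp _) hA
  have ha0 : (0:ℝ) < A.card := lt_of_lt_of_le zero_lt_one ha1
  set N := ⌈(β⁻¹)^(5*k)⌉₊ with hNdef
  have hNA : N ≤ A.card := Nat.ceil_le.2 hA
  have hNlb : (β⁻¹)^(5*k) ≤ (N:ℝ) := Nat.le_ceil _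
  have hNub : (N:ℝ) ≤ 2 * (β⁻¹)^(5*k) := by
    have h := Nat.ceil_lt_add_one (le_of_lt (pow_pos hq0 (5*k)))
    have h2 := hqp (5*k)
    have : (N:ℝ) < (β⁻¹)^(5*k) + 1 := h
    linarith
  have hN1 : 1 ≤ N := by
    have h : (1:ℝ) ≤ (N:ℝ) := le_trans (hqp _) hNlb
    exact_mod_cast h
  set f : V → ℕ := fun a => (B.filter fun y => E a y).card with hf
  have hEid : ((A ×ˢ B).filter fun p => E p.1 p.2).card = ∑ a ∈ A, f a := by
    rw [card_filter, sum_product]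
    exact sum_congr rfl fun a _ => (card_filter _ _).symm
  have hdA : β * ((A.card:ℝ) * B.card) ≤ ∑ a ∈ A, (f a : ℝ) := by
    rw [hEid] at hd
    push_cast at hd ⊢
    exact hd
  obtain ⟨A', hA'A, hA'card, hA'avg⟩ := exists_subset_card_avg f (A.card - N) A N (by omega)
  have hA'sum : β * N * B.card ≤ ∑ a ∈ A', (f a : ℝ) := by
    have hcast : (N:ℝ) * ∑ a ∈ A, (f a:ℝ) ≤ (A.card:ℝ) * ∑ a ∈ A', (f a:ℝ) := by
      exact_mod_cast hA'avg
    have h2 : (N:ℝ) * (β * ((A.card:ℝ) * B.card)) ≤ (N:ℝ) * ∑ a ∈ A, (f a:ℝ) :=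
      mul_le_mul_of_nonneg_left hdA (Nat.cast_nonneg N)
    have h3 : (A.card:ℝ) * (β * N * B.card) ≤ (A.card:ℝ) * ∑ a ∈ A', (f a:ℝ) := by
      nlinarith
    exact le_of_mul_le_mul_left h3 ha0
  obtain ⟨n, hn⟩ : ∃ n, 2*k = n + 1 := ⟨2*k - 1, by omega⟩
  -- Jensen lower bound
  have hS1 : (2:ℝ)^(3*k) * (B.card:ℝ)^(n+1) ≤ ∑ a ∈ A', ((f a : ℝ))^(n+1) := by
    have hnn : ∀ i ∈ A', (0:ℝ) ≤ (f i:ℝ) := fun i _ => Nat.cast_nonneg _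
    have hJ := pow_sum_le_card_mul_sum_pow hnn n
    rw [hA'card] at hJ
    have hNpos : (0:ℝ) < (N:ℝ)^n := by positivity
    have hpowle : (β * N * B.card)^(n+1) ≤ (∑ a ∈ A', (f a:ℝ))^(n+1) :=
      pow_le_pow_left₀ (by positivity) hA'sum _
    have hkey : (N:ℝ)^n * (β^(n+1) * (N:ℝ) * (B.card:ℝ)^(n+1)) ≤
        (N:ℝ)^n * ∑ a ∈ A', ((f a:ℝ))^(n+1) := by
      have hexp : (β * N * B.card)^(n+1) = (N:ℝ)^n * (β^(n+1) * (N:ℝ) * (B.card:ℝ)^(n+1)) := by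
        rw [mul_pow, mul_pow, pow_succ (N:ℝ) n]; ring
      calc (N:ℝ)^n * (β^(n+1) * (N:ℝ) * (B.card:ℝ)^(n+1))
          = (β * N * B.card)^(n+1) := hexp.symm
        _ ≤ (∑ a ∈ A', (f a:ℝ))^(n+1) := hpowle
        _ ≤ (N:ℝ)^n * ∑ a ∈ A', ((f a:ℝ))^(n+1) := hJ
    have hdiv : β^(n+1) * (N:ℝ) * (B.card:ℝ)^(n+1) ≤ ∑ a ∈ A', ((f a:ℝ))^(n+1) :=
      le_of_mul_le_mul_left hkey hNpos
    have hbn : (2:ℝ)^(3*k) ≤ β^(n+1) * N := by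
      have h1 : β^(n+1) * ((β⁻¹)^(5*k)) = (β⁻¹)^(3*k) := by
        rw [← hn, show 5*k = 2*k + 3*k from by ring, pow_add, ← mul_assoc, ← mul_pow, hβq,
          one_pow, one_mul]
      have h2 : β^(n+1) * ((β⁻¹)^(5*k)) ≤ β^(n+1) * N :=
        mul_le_mul_of_nonneg_left hNlb (by positivity)
      have h3 : (2:ℝ)^(3*k) ≤ (β⁻¹)^(3*k) := pow_le_pow_left₀ (by norm_num) hq2 _
      linarith [h1 ▸ h2]
    calc (2:ℝ)^(3*k) * (B.card:ℝ)^(n+1) ≤ (β^(n+1) * N) * (B.card:ℝ)^(n+1) :=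
          mul_le_mul_of_nonneg_right hbn (by positivity)
      _ = β^(n+1) * (N:ℝ) * (B.card:ℝ)^(n+1) := by ring
      _ ≤ ∑ a ∈ A', ((f a:ℝ))^(n+1) := hdiv
  -- counting setup
  set W := Fintype.piFinset (fun _ : Fin (n+1) => B) with hW
  set U₀ : (Fin (n+1) → V) → Finset V := fun w => A'.filter (fun a => ∀ i, E a (w i)) with hU₀
  have hWcard : W.card = B.card ^ (n+1) := by
    rw [hW, Fintype.card_piFinset]; simp
  have I1 : ∑ w ∈ W, (U₀ w).card = ∑ a ∈ A', f a ^ (n+1) := by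
    calc ∑ w ∈ W, (U₀ w).card
        = ∑ w ∈ W, ∑ a ∈ A', (if (∀ i, E a (w i)) then 1 else 0) :=
          sum_congr rfl fun w _ => card_filter _ _
      _ = ∑ a ∈ A', ∑ w ∈ W, (if (∀ i, E a (w i)) then 1 else 0) := sum_comm
      _ = ∑ a ∈ A', f a ^ (n+1) := by
          refine sum_congr rfl fun a _ => ?_
          rw [← card_filter]
          have hset : W.filter (fun w => ∀ i, E a (w i)) =
              Fintype.piFinset (fun _ : Fin (n+1) => B.filter (fun y => E a y)) := by
            ext w
            simp only [hW, mem_filter, Fintype.mem_piFinset]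
            constructor
            · rintro ⟨h1, h2⟩ i
              exact ⟨h1 i, h2 i⟩
            · intro h
              exact ⟨fun i => (h i).1, fun i => (h i).2⟩
          rw [hset, Fintype.card_piFinset]
          simp [hf]
  set m : ℝ := β^(3*k) * B.card with hm
  set cc : Finset V → ℕ := fun S => (B.filter fun y => ∀ a ∈ S, E a y).card with hcc
  set bad : Finset (Finset V) := (powersetCard k A').filter (fun S => (cc S : ℝ) < m) with hbad
  set badIn : (Fin (n+1) → V) → Finset (Finset V) :=
    fun w => bad.filter (fun S => S ⊆ U₀ w) with hbadIn
  have I2 : ∑ w ∈ W, (badIn w).card = ∑ S ∈ bad, (cc S) ^ (n+1) := by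
    calc ∑ w ∈ W, (badIn w).card
        = ∑ w ∈ W, ∑ S ∈ bad, (if S ⊆ U₀ w then 1 else 0) :=
          sum_congr rfl fun w _ => card_filter _ _
      _ = ∑ S ∈ bad, ∑ w ∈ W, (if S ⊆ U₀ w then 1 else 0) := sum_comm
      _ = ∑ S ∈ bad, (cc S)^(n+1) := by
          refine sum_congr rfl fun S hS => ?_
          have hSA' : S ⊆ A' := (mem_powersetCard.1 (mem_filter.1 hS).1).1
          rw [← card_filter]
          have hset : W.filter (fun w => S ⊆ U₀ w) =
              Fintype.piFinset (fun _ : Fin (n+1) => B.filter (fun y => ∀ a ∈ S, E a y)) := by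
            ext w
            simp only [hW, mem_filter, Fintype.mem_piFinset]
            constructor
            · rintro ⟨h1, h2⟩ i
              refine ⟨h1 i, fun a ha => ?_⟩
              have hm2 := h2 ha
              rw [hU₀] at hm2
              exact (mem_filter.1 hm2).2 i
            · intro h
              refine ⟨fun i => (h i).1, fun a ha => ?_⟩
              rw [hU₀]
              exact mem_filter.2 ⟨hSA' ha, fun i => (h i).2 a ha⟩
          rw [hset, Fintype.card_piFinset]
          simp [hcc]
  have hI2R : (∑ S ∈ bad, ((cc S:ℝ))^(n+1)) ≤ (N:ℝ)^k * m^(n+1) := by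
    have hm0 : (0:ℝ) ≤ m := by rw [hm]; positivity
    have hterm : ∀ S ∈ bad, ((cc S:ℝ))^(n+1) ≤ m^(n+1) := fun S hS =>
      pow_le_pow_left₀ (Nat.cast_nonneg _) (le_of_lt (mem_filter.1 hS).2) _
    calc ∑ S ∈ bad, ((cc S:ℝ))^(n+1) ≤ ∑ _S ∈ bad, m^(n+1) := sum_le_sum hterm
      _ = (bad.card : ℝ) * m^(n+1) := by rw [sum_const, nsmul_eq_mul]
      _ ≤ (N:ℝ)^k * m^(n+1) := by
          apply mul_le_mul_of_nonneg_right _ (by positivity)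
          have h1 : bad.card ≤ N^k := by
            calc bad.card ≤ (powersetCard k A').card := card_le_card (filter_subset _ _)
              _ = (A'.card).choose k := card_powersetCard _ _
              _ = N.choose k := by rw [hA'card]
              _ ≤ N^k := Nat.choose_le_pow N k
          exact_mod_cast h1
  have hL2 : (k:ℝ) * ((N:ℝ)^k * m^(n+1)) ≤ (B.card:ℝ)^(n+1) := by
    have hm1 : m^(n+1) = β^(3*k*(n+1)) * (B.card:ℝ)^(n+1) := by
      rw [hm, mul_pow, ← pow_mul]
    have hNk : (N:ℝ)^k ≤ 2^k * (β⁻¹)^(5*k*k) := by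
      calc (N:ℝ)^k ≤ (2 * (β⁻¹)^(5*k))^k := pow_le_pow_left₀ (Nat.cast_nonneg _) hNub _
        _ = 2^k * (β⁻¹)^(5*k*k) := by rw [mul_pow, ← pow_mul]
    have hsplitβ : β^(3*k*(n+1)) = β^(5*k*k) * β^(k*k) := by
      rw [← pow_add]
      congr 1
      calc 3*k*(n+1) = 3*k*(2*k) := by rw [← hn]
        _ = 5*k*k + k*k := by ring
    have hcancel : (β⁻¹)^(5*k*k) * β^(5*k*k) = 1 := by
      rw [← mul_pow, inv_mul_cancel₀ hβ0', one_pow]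
    have hβkk : β^(k*k) ≤ (1/2:ℝ)^(k*k) := pow_le_pow_left₀ hβ0.le hβ _
    have hfin : (k:ℝ) * 2^k * (1/2:ℝ)^(k*k) ≤ 1 := by
      have h := aux_k2 k
      have hc : ((k * 2^k : ℕ):ℝ) ≤ ((2^(k*k):ℕ):ℝ) := Nat.cast_le.2 h
      push_cast at hc
      have h2 : (0:ℝ) < 2^(k*k) := by positivity
      rw [div_pow, one_pow, mul_one_div, div_le_one h2]
      exact hc
    calc (k:ℝ) * ((N:ℝ)^k * m^(n+1))
        = (k:ℝ) * (N:ℝ)^k * (β^(5*k*k) * β^(k*k) * (B.card:ℝ)^(n+1)) := by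
          rw [hm1, hsplitβ]; ring
      _ ≤ (k:ℝ) * (2^k * (β⁻¹)^(5*k*k)) * (β^(5*k*k) * β^(k*k) * (B.card:ℝ)^(n+1)) := by
          apply mul_le_mul_of_nonneg_right _ (by positivity)
          exact mul_le_mul_of_nonneg_left hNk (Nat.cast_nonneg _)
      _ = (k:ℝ) * 2^k * β^(k*k) * (B.card:ℝ)^(n+1) * ((β⁻¹)^(5*k*k) * β^(5*k*k)) := by ring
      _ = (k:ℝ) * 2^k * β^(k*k) * (B.card:ℝ)^(n+1) := by rw [hcancel, mul_one]
      _ ≤ (k:ℝ) * 2^k * (1/2:ℝ)^(k*k) * (B.card:ℝ)^(n+1) := by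
          apply mul_le_mul_of_nonneg_right _ (by positivity)
          exact mul_le_mul_of_nonneg_left hβkk (by positivity)
      _ ≤ 1 * (B.card:ℝ)^(n+1) := mul_le_mul_of_nonneg_right hfin (by positivity)
      _ = (B.card:ℝ)^(n+1) := one_mul _
  -- find good tuple w
  have hkey : ∃ w ∈ W, k * (badIn w).card + 2^k ≤ (U₀ w).card := by
    by_contra hcon
    push_neg at hcon
    have h2k : 1 ≤ 2^k := Nat.one_le_two_pow
    have hWsum : ∑ w ∈ W, ((U₀ w).card : ℝ) ≤
        ∑ w ∈ W, ((k:ℝ) * ((badIn w).card:ℝ) + ((2:ℝ)^k - 1)) := by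
      apply sum_le_sum
      intro w hw
      have hlt := hcon w hw
      have hℕ : (U₀ w).card ≤ k * (badIn w).card + (2^k - 1) := by omega
      calc ((U₀ w).card:ℝ) ≤ ((k * (badIn w).card + (2^k - 1) : ℕ) : ℝ) := Nat.cast_le.2 hℕ
        _ = (k:ℝ)*((badIn w).card:ℝ) + ((2:ℝ)^k - 1) := by
            rw [Nat.cast_add, Nat.cast_mul, Nat.cast_sub h2k]
            push_cast
            ring
    have hRHS : ∑ w ∈ W, ((k:ℝ) * ((badIn w).card:ℝ) + ((2:ℝ)^k - 1))
        = (k:ℝ) * (∑ w ∈ W, ((badIn w).card:ℝ)) + ((2:ℝ)^k - 1) * (W.card : ℝ) := by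
      rw [sum_add_distrib, ← mul_sum, sum_const, nsmul_eq_mul, mul_comm ((W.card : ℕ):ℝ)]
    have hI1R : ∑ w ∈ W, ((U₀ w).card:ℝ) = ∑ a ∈ A', ((f a:ℝ))^(n+1) := by
      have h := congrArg (fun t : ℕ => (t:ℝ)) I1
      push_cast at h
      exact h
    have hI2Rc : ∑ w ∈ W, ((badIn w).card:ℝ) = ∑ S ∈ bad, ((cc S:ℝ))^(n+1) := by
      have h := congrArg (fun t : ℕ => (t:ℝ)) I2
      push_cast at h
      exact h
    have hWcR : (W.card : ℝ) = (B.card:ℝ)^(n+1) := by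
      rw [hWcard]; push_cast; ring
    have hup : (k:ℝ) * (∑ S ∈ bad, ((cc S:ℝ))^(n+1)) ≤ (B.card:ℝ)^(n+1) :=
      le_trans (mul_le_mul_of_nonneg_left hI2R (Nat.cast_nonneg k)) hL2
    have hcontr : (2:ℝ)^(3*k) * (B.card:ℝ)^(n+1) ≤ (2:ℝ)^k * (B.card:ℝ)^(n+1) := by
      have h1 : ∑ a ∈ A', ((f a:ℝ))^(n+1) ≤
          (k:ℝ) * (∑ S ∈ bad, ((cc S:ℝ))^(n+1)) + ((2:ℝ)^k - 1) * (B.card:ℝ)^(n+1) := by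
        rw [← hI2Rc, ← hWcR, ← hI1R]
        calc ∑ w ∈ W, ((U₀ w).card:ℝ) ≤ _ := hWsum
          _ = _ := hRHS
      linarith [hS1]
    have hbpos : (0:ℝ) < (B.card:ℝ)^(n+1) := by positivity
    have h2lt : (2:ℝ)^k < (2:ℝ)^(3*k) := by
      apply pow_lt_pow_right₀ one_lt_two (by omega)
    nlinarith
  obtain ⟨w, hwW, hw⟩ := hkey
  set R := (badIn w).biUnion id with hR
  set U := U₀ w \ R with hU
  have hRcard : R.card ≤ (badIn w).card * k := by
    calc R.card ≤ ∑ S ∈ badIn w, (id S).card := card_biUnion_le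
      _ = ∑ _S ∈ badIn w, k := by
          refine sum_congr rfl fun S hS => ?_
          have hSb : S ∈ bad := mem_of_mem_filter S hS
          exact (mem_powersetCard.1 (mem_filter.1 hSb).1).2
      _ = (badIn w).card * k := by rw [sum_const, smul_eq_mul]
  have hUcard : 2^k ≤ U.card := by
    have h1 : (U₀ w).card - R.card ≤ U.card := le_card_sdiff _ _
    have hR2 : R.card ≤ k * (badIn w).card := le_of_le_of_eq hRcard (Nat.mul_comm _ _)
    have h3 : R.card + 2^k ≤ (U₀ w).card := le_trans (Nat.add_le_add_right hR2 _) hw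
    omega
  obtain ⟨X, hXU, hXcard, hXtrans⟩ := tourn_ramsey hT k U (by omega)
  have hXU₀ : ∀ x ∈ X, x ∈ U₀ w := fun x hx => (mem_sdiff.1 (hXU hx)).1
  have hXA' : X ⊆ A' := fun x hx => mem_of_mem_filter x (hXU₀ x hx)
  have hXgood : ¬ ((cc X : ℝ) < m) := by
    intro hbadX
    have hXbad : X ∈ bad := mem_filter.2 ⟨mem_powersetCard.2 ⟨hXA', hXcard⟩, hbadX⟩
    have hXbadIn : X ∈ badIn w := mem_filter.2 ⟨hXbad, fun x hx => hXU₀ x hx⟩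
    have hXne : X.Nonempty := card_pos.1 (by omega)
    obtain ⟨a, haX⟩ := hXne
    have haR : a ∈ R := mem_biUnion.2 ⟨X, hXbadIn, haX⟩
    exact (mem_sdiff.1 (hXU haX)).2 haR
  have hcX : 2^k ≤ cc X := by
    have h1 : m ≤ (cc X:ℝ) := not_lt.1 hXgood
    have h2 : (2:ℝ)^k ≤ m := by
      rw [hm]
      have e1 : β^(3*k) * (β⁻¹)^(5*k) = (β⁻¹)^(2*k) := by
        rw [show 5*k = 3*k + 2*k from by ring, pow_add, ← mul_assoc, ← mul_pow, hβq,
          one_pow, one_mul]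
      have e2 : β^(3*k) * (β⁻¹)^(5*k) ≤ β^(3*k) * B.card :=
        mul_le_mul_of_nonneg_left hB (by positivity)
      have e5 : (β⁻¹)^(2*k) ≤ β^(3*k) * B.card := by rw [← e1]; exact e2
      have e3 : (2:ℝ)^(2*k) ≤ (β⁻¹)^(2*k) := pow_le_pow_left₀ (by norm_num) hq2 _
      have e4 : (2:ℝ)^k ≤ (2:ℝ)^(2*k) := pow_le_pow_right₀ one_le_two (by omega)
      linarith
    have h3 : ((2^k : ℕ):ℝ) ≤ (cc X:ℝ) := by push_cast; linarith
    exact_mod_cast h3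
  obtain ⟨Y, hYsub, hYcard, hYtrans⟩ :=
    tourn_ramsey hT k (B.filter fun y => ∀ a ∈ X, E a y) (by
      have : 2^k ≤ (B.filter fun y => ∀ a ∈ X, E a y).card := hcX
      omega)
  exact ⟨X, hXA'.trans hA'A, Y, hYsub.trans (filter_subset _ _), hXcard, hYcard,
    hXtrans, hYtrans, fun x hx y hy => (mem_filter.1 (hYsub hy)).2 x hx⟩
end

section
/- Let A_1, …, A_t be pairwise disjoint vertex sets, each of size at least 2^{10k}, in a tournament, and suppose there is no index i ∈ [t−1] and no sets B ⊆ A_i and B' ⊆ A_{i+1} such that B and B' each induce transitive subtournaments of size k and B' ⇒ B. Then there are sets X_i ⊆ A_i of size k, each inducing a transitive subtournament, with X_1 ⇒ X_2 ⇒ ⋯ ⇒ X_t. -/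
open Finset

attribute [local instance] Classical.propDecidable

lemma transOn_subset {V : Type} {E : V → V → Prop} {S B : Finset V}
    (h : IsTransitiveOn E S) (hBS : B ⊆ S) : IsTransitiveOn E B := by
  obtain ⟨f, hinj, hf⟩ := h
  exact ⟨f, hinj.mono (Finset.coe_subset.mpr hBS),
    fun u hu v hv he => hf u (hBS hu) v (hBS hv) he⟩

lemma exists_trans_succ {V : Type} {E : V → V → Prop} (hT : IsTournament E) :
    ∀ (n : ℕ) (S : Finset V), 2 ^ n ≤ S.card →
      ∃ B ⊆ S, B.card = n + 1 ∧ IsTransitiveOn E B := by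
  intro n
  induction n with
  | zero =>
    intro S hS
    obtain ⟨v, hv⟩ := Finset.card_pos.mp (lt_of_lt_of_le (by norm_num) hS)
    refine ⟨{v}, Finset.singleton_subset_iff.mpr hv, Finset.card_singleton v,
      fun _ => 0, ?_, ?_⟩
    · intro a ha b hb _
      have ha' : a = v := Finset.mem_singleton.mp (Finset.mem_coe.mp ha)
      have hb' : b = v := Finset.mem_singleton.mp (Finset.mem_coe.mp hb)
      rw [ha', hb']
    · intro u hu w hw he
      have hu' : u = v := Finset.mem_singleton.mp hu
      have hw' : w = v := Finset.mem_singleton.mp hw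
      rw [hu'] at he; rw [hw'] at he
      exact absurd he (hT.1 v)
  | succ n ih =>
    intro S hS
    have hpos : 0 < S.card :=
      lt_of_lt_of_le (Nat.pow_pos (by norm_num)) hS
    obtain ⟨v, hv⟩ := Finset.card_pos.mp hpos
    classical
    have hsum : ((S.erase v).filter (fun u => E v u)).card +
        ((S.erase v).filter (fun u => ¬ E v u)).card = (S.erase v).card :=
      Finset.card_filter_add_card_filter_not _
    have herase : (S.erase v).card = S.card - 1 := Finset.card_erase_of_mem hv
    have hcases : 2 ^ n ≤ ((S.erase v).filter (fun u => E v u)).card ∨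
        2 ^ n ≤ ((S.erase v).filter (fun u => ¬ E v u)).card := by
      by_contra hcon
      push_neg at hcon
      have h2 : 2 ^ (n + 1) = 2 ^ n + 2 ^ n := by ring
      omega
    rcases hcases with h | h
    · obtain ⟨B, hBO, hBc, f, hinj, hf⟩ := ih _ h
      have hBS : B ⊆ S := fun x hx =>
        Finset.mem_of_mem_erase (Finset.mem_of_mem_filter x (hBO hx))
      have hvB : v ∉ B := fun hvb =>
        Finset.notMem_erase v S (Finset.mem_of_mem_filter v (hBO hvb))
      refine ⟨insert v B, Finset.insert_subset hv hBS,
        by rw [Finset.card_insert_of_notMem hvB, hBc],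
        (fun u => if u = v then 0 else f u + 1), ?_, ?_⟩
      · intro a ha b hb hab
        simp only at hab
        rcases Set.mem_insert_iff.mp (by rwa [Finset.coe_insert] at ha) with ha' | ha' <;>
          rcases Set.mem_insert_iff.mp (by rwa [Finset.coe_insert] at hb) with hb' | hb'
        · rw [ha', hb']
        · have hbv : b ≠ v := fun hh => hvB (hh ▸ hb')
          rw [if_pos ha', if_neg hbv] at hab
          exact absurd hab (by omega)
        · have hav : a ≠ v := fun hh => hvB (hh ▸ ha')
          rw [if_pos hb', if_neg hav] at hab
          exact absurd hab (by omega)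
        · have hav : a ≠ v := fun hh => hvB (hh ▸ ha')
          have hbv : b ≠ v := fun hh => hvB (hh ▸ hb')
          rw [if_neg hav, if_neg hbv] at hab
          exact hinj ha' hb' (by omega)
      · intro u hu w hw he
        simp only
        rcases Finset.mem_insert.mp hu with hu' | hu' <;>
          rcases Finset.mem_insert.mp hw with hw' | hw'
        · rw [hu', hw'] at he
          exact absurd he (hT.1 v)
        · have hwv : w ≠ v := fun hh => hvB (hh ▸ hw')
          rw [if_pos hu', if_neg hwv]
          omega
        · have huv : u ≠ v := fun hh => hvB (hh ▸ hu')
          have hOu : E v u := (Finset.mem_filter.mp (hBO hu')).2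
          rw [hw'] at he
          exact absurd hOu ((hT.2 u v huv).mp he)
        · have huv : u ≠ v := fun hh => hvB (hh ▸ hu')
          have hwv : w ≠ v := fun hh => hvB (hh ▸ hw')
          rw [if_neg huv, if_neg hwv]
          have := hf u hu' w hw' he
          omega
    · obtain ⟨B, hBO, hBc, f, hinj, hf⟩ := ih _ h
      have hBS : B ⊆ S := fun x hx =>
        Finset.mem_of_mem_erase (Finset.mem_of_mem_filter x (hBO hx))
      have hvB : v ∉ B := fun hvb =>
        Finset.notMem_erase v S (Finset.mem_of_mem_filter v (hBO hvb))
      refine ⟨insert v B, Finset.insert_subset hv hBS,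
        by rw [Finset.card_insert_of_notMem hvB, hBc],
        (fun u => if u = v then B.sup f + 1 else f u), ?_, ?_⟩
      · intro a ha b hb hab
        simp only at hab
        rcases Set.mem_insert_iff.mp (by rwa [Finset.coe_insert] at ha) with ha' | ha' <;>
          rcases Set.mem_insert_iff.mp (by rwa [Finset.coe_insert] at hb) with hb' | hb'
        · rw [ha', hb']
        · have hbv : b ≠ v := fun hh => hvB (hh ▸ hb')
          rw [if_pos ha', if_neg hbv] at hab
          have : f b ≤ B.sup f := Finset.le_sup hb'
          exact absurd hab (by omega)
        · have hav : a ≠ v := fun hh => hvB (hh ▸ ha')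
          rw [if_pos hb', if_neg hav] at hab
          have : f a ≤ B.sup f := Finset.le_sup ha'
          exact absurd hab (by omega)
        · have hav : a ≠ v := fun hh => hvB (hh ▸ ha')
          have hbv : b ≠ v := fun hh => hvB (hh ▸ hb')
          rw [if_neg hav, if_neg hbv] at hab
          exact hinj ha' hb' hab
      · intro u hu w hw he
        simp only
        rcases Finset.mem_insert.mp hu with hu' | hu' <;>
          rcases Finset.mem_insert.mp hw with hw' | hw'
        · rw [hu', hw'] at he
          exact absurd he (hT.1 v)
        · rw [hu'] at he
          exact absurd he (Finset.mem_filter.mp (hBO hw')).2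
        · have huv : u ≠ v := fun hh => hvB (hh ▸ hu')
          rw [if_neg huv, if_pos hw']
          have : f u ≤ B.sup f := Finset.le_sup hu'
          omega
        · have huv : u ≠ v := fun hh => hvB (hh ▸ hu')
          have hwv : w ≠ v := fun hh => hvB (hh ▸ hw')
          rw [if_neg huv, if_neg hwv]
          exact hf u hu' w hw' he

lemma exists_trans {V : Type} {E : V → V → Prop} (hT : IsTournament E) {k : ℕ}
    (hk : 1 ≤ k) {S : Finset V} (h : 2 ^ (k - 1) ≤ S.card) :
    ∃ B ⊆ S, B.card = k ∧ IsTransitiveOn E B := by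
  obtain ⟨B, h1, h2, h3⟩ := exists_trans_succ hT (k - 1) S h
  exact ⟨B, h1, by omega, h3⟩

lemma step_lemma {V : Type} {E : V → V → Prop} (hT : IsTournament E) {k : ℕ} (hk : 1 ≤ k)
    {D A' : Finset V} (hdisj : Disjoint D A')
    (hD : 2 ^ (3 * k) ≤ D.card) (hA' : 2 ^ (10 * k) ≤ A'.card)
    (hno : ¬ ∃ B B' : Finset V, B ⊆ D ∧ B' ⊆ A' ∧ B.card = k ∧ B'.card = k ∧
      IsTransitiveOn E B ∧ IsTransitiveOn E B' ∧ Dominates E B' B) :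
    ∃ X D' : Finset V, X ⊆ D ∧ X.card = k ∧ IsTransitiveOn E X ∧ D' ⊆ A' ∧
      2 ^ (3 * k) ≤ D'.card ∧ Dominates E X D' := by
  classical
  have h2k : 1 ≤ 2 * k := by omega
  have h1 : 2 ^ (2 * k - 1) ≤ D.card :=
    le_trans (Nat.pow_le_pow_right (by norm_num) (by omega)) hD
  obtain ⟨T, hTD, hTcard, hTtrans⟩ := exists_trans hT h2k h1
  have hc : ∀ v : V, ∃ c : Finset V, c ⊆ T ∧ c.card = k ∧
      ((k ≤ (T.filter (fun x => E v x)).card → c ⊆ T.filter (fun x => E v x)) ∧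
       (¬ k ≤ (T.filter (fun x => E v x)).card → c ⊆ T \ T.filter (fun x => E v x))) := by
    intro v
    by_cases h : k ≤ (T.filter (fun x => E v x)).card
    · obtain ⟨c, hc1, hc2⟩ := Finset.exists_subset_card_eq h
      exact ⟨c, hc1.trans (Finset.filter_subset _ _), hc2, fun _ => hc1,
        fun h' => absurd h h'⟩
    · have hsd : k ≤ (T \ T.filter (fun x => E v x)).card := by
        rw [Finset.card_sdiff_of_subset (Finset.filter_subset _ _)]
        have hle : (T.filter (fun x => E v x)).card < k := not_le.mp h
        omega
      obtain ⟨c, hc1, hc2⟩ := Finset.exists_subset_card_eq hsd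
      exact ⟨c, hc1.trans (Finset.sdiff_subset), hc2, fun h' => absurd h' h, fun _ => hc1⟩
  choose c hcT hck hc3 using hc
  have hmaps : ∀ (s : Finset V), ∀ a ∈ s, c a ∈ T.powerset :=
    fun s a _ => Finset.mem_powerset.mpr (hcT a)
  have hpne : T.powerset.Nonempty := ⟨∅, Finset.empty_mem_powerset T⟩
  set G := A'.filter (fun v => k ≤ (T.filter (fun x => E v x)).card) with hGdef
  have hGsmall : ¬ 2 ^ (2 * k) * 2 ^ (k - 1) ≤ G.card := by
    intro hbig
    obtain ⟨S, _, hSfib⟩ := Finset.exists_le_card_fiber_of_mul_le_card_of_maps_to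
      (hmaps G) hpne (by rw [Finset.card_powerset, hTcard]; exact hbig)
    have hFpos : 0 < (G.filter (fun x => c x = S)).card :=
      lt_of_lt_of_le (Nat.pow_pos (by norm_num)) hSfib
    obtain ⟨v₀, hv₀⟩ := Finset.card_pos.mp hFpos
    have hSeq : S = c v₀ := ((Finset.mem_filter.mp hv₀).2).symm
    obtain ⟨B', hB'F, hB'card, hB'trans⟩ := exists_trans hT hk hSfib
    apply hno
    refine ⟨S, B', (hSeq ▸ hcT v₀).trans hTD,
      hB'F.trans ((Finset.filter_subset _ _).trans (Finset.filter_subset _ _)),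
      by rw [hSeq]; exact hck v₀, hB'card,
      transOn_subset hTtrans (hSeq ▸ hcT v₀), hB'trans, ?_⟩
    intro b hb x hx
    have hbF := hB'F hb
    have hbG : b ∈ G := Finset.mem_of_mem_filter b hbF
    have hbc : c b = S := (Finset.mem_filter.mp hbF).2
    have hkb : k ≤ (T.filter (fun y => E b y)).card := (Finset.mem_filter.mp hbG).2
    have hxm : x ∈ T.filter (fun y => E b y) := ((hc3 b).1 hkb) (hbc ▸ hx)
    exact (Finset.mem_filter.mp hxm).2
  set Bd := A'.filter (fun v => ¬ k ≤ (T.filter (fun x => E v x)).card) with hBddef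
  have hsum : G.card + Bd.card = A'.card :=
    Finset.card_filter_add_card_filter_not _
  have hBdcard : 2 ^ (2 * k) * 2 ^ (3 * k) ≤ Bd.card := by
    obtain ⟨k', rfl⟩ : ∃ k', k = k' + 1 := ⟨k - 1, by omega⟩
    have e1 : 2 ^ (2 * (k' + 1)) * 2 ^ ((k' + 1) - 1) = 2 ^ (3 * k' + 2) := by
      rw [← pow_add]; congr 1; omega
    have e2 : 2 ^ (2 * (k' + 1)) * 2 ^ (3 * (k' + 1)) = 2 ^ (5 * k' + 5) := by
      rw [← pow_add]; congr 1; omega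
    have e3 : 2 ^ (3 * k' + 2) ≤ 2 ^ (10 * k' + 9) :=
      Nat.pow_le_pow_right (by norm_num) (by omega)
    have e4 : 2 ^ (5 * k' + 5) ≤ 2 ^ (10 * k' + 9) :=
      Nat.pow_le_pow_right (by norm_num) (by omega)
    have e5 : 2 ^ (10 * (k' + 1)) = 2 ^ (10 * k' + 9) * 2 := by
      rw [show 10 * (k' + 1) = 10 * k' + 9 + 1 from by omega, pow_succ]
    omega
  obtain ⟨X, _, hXfib⟩ := Finset.exists_le_card_fiber_of_mul_le_card_of_maps_to
    (hmaps Bd) hpne (by rw [Finset.card_powerset, hTcard]; exact hBdcard)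
  have hD'pos : 0 < (Bd.filter (fun x => c x = X)).card :=
    lt_of_lt_of_le (Nat.pow_pos (by norm_num)) hXfib
  obtain ⟨v₁, hv₁⟩ := Finset.card_pos.mp hD'pos
  have hXeq : X = c v₁ := ((Finset.mem_filter.mp hv₁).2).symm
  refine ⟨X, Bd.filter (fun x => c x = X), (hXeq ▸ hcT v₁).trans hTD,
    by rw [hXeq]; exact hck v₁, transOn_subset hTtrans (hXeq ▸ hcT v₁),
    (Finset.filter_subset _ _).trans (Finset.filter_subset _ _), hXfib, ?_⟩
  intro x hx v hv
  have hvBd : v ∈ Bd := Finset.mem_of_mem_filter v hv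
  have hvc : c v = X := (Finset.mem_filter.mp hv).2
  have hnk : ¬ k ≤ (T.filter (fun y => E v y)).card := (Finset.mem_filter.mp hvBd).2
  have hxmem : x ∈ T \ T.filter (fun y => E v y) := ((hc3 v).2 hnk) (hvc ▸ hx)
  have hxT : x ∈ T := (Finset.mem_sdiff.mp hxmem).1
  have hnEvx : ¬ E v x := fun hE =>
    (Finset.mem_sdiff.mp hxmem).2 (Finset.mem_filter.mpr ⟨hxT, hE⟩)
  have hne : x ≠ v := by
    intro hh
    subst hh
    exact Finset.disjoint_left.mp hdisj (hTD hxT)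
      (Finset.mem_of_mem_filter x (Finset.mem_of_mem_filter x hv))
  exact (hT.2 x v hne).mpr hnEvx


/-- If disjoint sets `A_1,…,A_t` of size at least `2^(10k)` admit no
pair of transitive `k`-sets `B ⊆ A_i`, `B' ⊆ A_{i+1}` with `B' ⇒ B`, then there
are transitive `k`-sets `X_i ⊆ A_i` with `X_1 ⇒ X_2 ⇒ ⋯ ⇒ X_t`. -/
theorem statement_8 (V : Type) (E : V → V → Prop) (hT : IsTournament E)
    (k t : ℕ) (A : Fin t → Finset V)
    (hdisj : ∀ i j, i ≠ j → Disjoint (A i) (A j))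
    (hsize : ∀ i, 2 ^ (10 * k) ≤ (A i).card)
    (hno : ¬ ∃ (i : ℕ) (h : i + 1 < t) (B B' : Finset V),
      B ⊆ A ⟨i, Nat.lt_of_succ_lt h⟩ ∧ B' ⊆ A ⟨i + 1, h⟩ ∧
      B.card = k ∧ B'.card = k ∧
      IsTransitiveOn E B ∧ IsTransitiveOn E B' ∧ Dominates E B' B) :
    ∃ X : Fin t → Finset V,
      (∀ i, X i ⊆ A i ∧ (X i).card = k ∧ IsTransitiveOn E (X i)) ∧
      ∀ (i : ℕ) (h : i + 1 < t),
        Dominates E (X ⟨i, Nat.lt_of_succ_lt h⟩) (X ⟨i + 1, h⟩) := by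
  classical
  rcases Nat.eq_zero_or_pos k with hk0 | hk
  · subst hk0
    refine ⟨fun _ => ∅, fun i => ⟨Finset.empty_subset _, Finset.card_empty, ?_⟩,
      fun i h x hx => absurd hx (Finset.notMem_empty x)⟩
    exact ⟨fun _ => 0, by simp, by simp⟩
  rcases Nat.eq_zero_or_pos t with ht0 | ht
  · subst ht0
    exact ⟨fun i => ∅, fun i => absurd i.isLt (by omega), fun i h => absurd h (by omega)⟩
  have chain : ∀ m : ℕ, ∀ i : ℕ, ∀ hi : i < t, t - i = m + 1 →
      ∀ D : Finset V, D ⊆ A ⟨i, hi⟩ → 2 ^ (3 * k) ≤ D.card →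
      ∃ X : ℕ → Finset V, X i ⊆ D ∧
        (∀ j, i ≤ j → ∀ hj : j < t, X j ⊆ A ⟨j, hj⟩ ∧ (X j).card = k ∧
          IsTransitiveOn E (X j)) ∧
        (∀ j, i ≤ j → j + 1 < t → Dominates E (X j) (X (j + 1))) := by
    intro m
    induction m with
    | zero =>
      intro i hi hti D hDA hDcard
      obtain ⟨B, hBD, hBcard, hBtrans⟩ := exists_trans hT hk
        (le_trans (Nat.pow_le_pow_right (by norm_num) (by omega)) hDcard)
      refine ⟨fun _ => B, hBD, ?_, ?_⟩
      · intro j hij hj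
        have hji : j = i := by omega
        subst hji
        exact ⟨hBD.trans hDA, hBcard, hBtrans⟩
      · intro j hij hjt
        exact absurd hjt (by omega)
    | succ m ih =>
      intro i hi hti D hDA hDcard
      have hi1 : i + 1 < t := by omega
      have hdisj' : Disjoint D (A ⟨i + 1, hi1⟩) :=
        Finset.disjoint_of_subset_left hDA
          (hdisj ⟨i, hi⟩ ⟨i + 1, hi1⟩ (by simp [Fin.ext_iff]))
      have hno' : ¬ ∃ B B' : Finset V, B ⊆ D ∧ B' ⊆ A ⟨i + 1, hi1⟩ ∧ B.card = k ∧
          B'.card = k ∧ IsTransitiveOn E B ∧ IsTransitiveOn E B' ∧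
          Dominates E B' B := by
        rintro ⟨B, B', hBD, hB'A, hBc, hB'c, hBt, hB't, hdom⟩
        exact hno ⟨i, hi1, B, B', hBD.trans hDA, hB'A, hBc, hB'c, hBt, hB't, hdom⟩
      obtain ⟨Xi, D', hXiD, hXic, hXit, hD'A, hD'c, hdomXi⟩ :=
        step_lemma hT hk hdisj' hDcard (hsize ⟨i + 1, hi1⟩) hno'
      obtain ⟨X', hX'D', hX'props, hX'dom⟩ := ih (i + 1) hi1 (by omega) D' hD'A hD'c
      refine ⟨fun j => if j = i then Xi else X' j, by simp [hXiD], ?_, ?_⟩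
      · intro j hij hj
        by_cases hji : j = i
        · subst hji
          simp only [if_pos rfl]
          exact ⟨hXiD.trans hDA, hXic, hXit⟩
        · simp only [if_neg hji]
          exact hX'props j (by omega) hj
      · intro j hij hjt
        by_cases hji : j = i
        · subst hji
          simp only [if_pos rfl, if_neg (by omega : ¬ j + 1 = j)]
          intro x hx y hy
          exact hdomXi x hx y (hX'D' hy)
        · simp only [if_neg hji, if_neg (by omega : ¬ j + 1 = i)]
          exact hX'dom j (by omega) hjt
  obtain ⟨X, hX0, hXprops, hXdom⟩ := chain (t - 1) 0 ht (by omega) (A ⟨0, ht⟩)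
    (subset_refl _)
    (le_trans (Nat.pow_le_pow_right (by norm_num) (by omega)) (hsize _))
  refine ⟨fun i => X i.val, fun i => ?_, fun i h => ?_⟩
  · obtain ⟨h1, h2, h3⟩ := hXprops i.val (Nat.zero_le _) i.isLt
    exact ⟨h1, h2, h3⟩
  · exact hXdom i (Nat.zero_le _) h
end

section
/- Suppose that in a median ordering of a tournament T, an interval of consecutive vertices is split into consecutive subintervals A_0 ≺ A_1 ≺ ⋯ ≺ A_t, each of size m. Then every vertex v ∈ A_0 has at least ((t−2)/2)·m outneighbours in A = A_1 ∪ ⋯ ∪ A_{t−1}, and every vertex v ∈ A_t has at least ((t−2)/2)·m inneighbours in A. -/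
open Finset

attribute [local instance] Classical.propDecidable

section Rot
variable {n : ℕ}

/-- The cyclic rotation moving position `i` to position `p` (with `i ≤ p`),
shifting everything in `(i, p]` down by one. -/
def rot (i p : Fin n) (hip : i ≤ p) : Equiv.Perm (Fin n) where
  toFun j := if h : (i:ℕ) < j ∧ (j:ℕ) ≤ p then ⟨(j:ℕ) - 1, Nat.lt_of_le_of_lt (Nat.sub_le _ _) j.isLt⟩
    else if (j:ℕ) = i then p else j
  invFun j := if h : (i:ℕ) ≤ j ∧ (j:ℕ) < p then ⟨(j:ℕ) + 1, Nat.lt_of_le_of_lt h.2 p.isLt⟩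
    else if (j:ℕ) = p then i else j
  left_inv := by
    intro j
    by_cases h1 : (i:ℕ) < j ∧ (j:ℕ) ≤ p
    · simp only [dif_pos h1]
      by_cases h2 : (i:ℕ) ≤ (j:ℕ) - 1 ∧ (j:ℕ) - 1 < p
      · simp only [dif_pos h2]; apply Fin.ext; simp only [Fin.val_mk]; omega
      · simp only [dif_neg h2]
        have : ((j:ℕ) - 1) = (p:ℕ) := by omega
        simp only [this, if_pos rfl]
        exact Fin.ext (by omega)
    · simp only [dif_neg h1]
      by_cases h3 : (j:ℕ) = i
      · have hj : j = i := Fin.ext h3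
        simp only [if_pos h3]
        by_cases h4 : (i:ℕ) ≤ p ∧ (p:ℕ) < p
        · omega
        · simp only [dif_neg h4]; simp [hj]
      · simp only [if_neg h3]
        have h5 : ¬((i:ℕ) ≤ j ∧ (j:ℕ) < p) := by
          rintro ⟨ha, hb⟩
          exact h1 ⟨by omega, by omega⟩
        simp only [dif_neg h5]
        have h6 : (j:ℕ) ≠ p := by
          intro hh
          have : (i:ℕ) ≤ p := hip
          exact h1 ⟨by omega, by omega⟩
        simp only [if_neg h6]
  right_inv := by
    intro j
    by_cases h1 : (i:ℕ) ≤ j ∧ (j:ℕ) < p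
    · simp only [dif_pos h1]
      by_cases h2 : (i:ℕ) < (j:ℕ) + 1 ∧ (j:ℕ) + 1 ≤ p
      · simp only [dif_pos h2]; apply Fin.ext; simp only [Fin.val_mk]; omega
      · omega
    · simp only [dif_neg h1]
      by_cases h3 : (j:ℕ) = p
      · simp only [if_pos h3]
        by_cases h4 : (i:ℕ) < i ∧ (i:ℕ) ≤ p
        · omega
        · simp only [dif_neg h4]
          split_ifs with hc
          · exact Fin.ext h3.symm
          · simp at hc
      · simp only [if_neg h3]
        have h5 : ¬((i:ℕ) < j ∧ (j:ℕ) ≤ p) := by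
          rintro ⟨ha, hb⟩; exact h1 ⟨by omega, by omega⟩
        simp only [dif_neg h5]
        have h6 : (j:ℕ) ≠ i := by
          intro hh
          have : (i:ℕ) ≤ p := hip
          exact h1 ⟨by omega, by omega⟩
        simp only [if_neg h6]

lemma rot_apply_self (i p : Fin n) (hip : i ≤ p) : rot i p hip i = p := by
  simp only [rot, Equiv.coe_fn_mk]
  rw [dif_neg (by omega)]
  simp

lemma rot_apply_of_ne (i p j : Fin n) (hip : i ≤ p) (hj : j ≠ i) :
    ((rot i p hip j : Fin n) : ℕ) = if (i:ℕ) < j ∧ (j:ℕ) ≤ p then (j:ℕ) - 1 else (j:ℕ) := by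
  have hj' : (j:ℕ) ≠ i := fun h => hj (Fin.ext h)
  simp only [rot, Equiv.coe_fn_mk]
  by_cases h : (i:ℕ) < j ∧ (j:ℕ) ≤ p
  · rw [dif_pos h, if_pos h]
  · rw [dif_neg h, if_neg hj', if_neg h]

lemma rot_lt_rot_iff (i p j k : Fin n) (hip : i ≤ p) (hj : j ≠ i) (hk : k ≠ i) :
    rot i p hip j < rot i p hip k ↔ j < k := by
  have hj' : (j:ℕ) ≠ i := fun h => hj (Fin.ext h)
  have hk' : (k:ℕ) ≠ i := fun h => hk (Fin.ext h)
  rw [Fin.lt_def, Fin.lt_def, rot_apply_of_ne i p j hip hj, rot_apply_of_ne i p k hip hk]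
  have hip' : (i:ℕ) ≤ p := hip
  split_ifs <;> omega

lemma self_lt_rot_iff (i p j : Fin n) (hip : i ≤ p) (hj : j ≠ i) :
    p < rot i p hip j ↔ p < j := by
  have hj' : (j:ℕ) ≠ i := fun h => hj (Fin.ext h)
  rw [Fin.lt_def, Fin.lt_def, rot_apply_of_ne i p j hip hj]
  have hip' : (i:ℕ) ≤ p := hip
  split_ifs <;> omega

lemma rot_lt_self_iff (i p j : Fin n) (hip : i ≤ p) (hj : j ≠ i) :
    rot i p hip j < p ↔ j ≤ p := by
  have hj' : (j:ℕ) ≠ i := fun h => hj (Fin.ext h)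
  rw [Fin.lt_def, Fin.le_def, rot_apply_of_ne i p j hip hj]
  have hip' : (i:ℕ) ≤ p := hip
  split_ifs <;> omega

end Rot


section Exchange
variable {V : Type} [Fintype V] {E : V → V → Prop}

lemma exchange (τ : V ≃ Fin (Fintype.card V)) (hτ : IsMedianOrder E τ) (v : V)
    (p : Fin (Fintype.card V)) (hp : τ v ≤ p) :
    (univ.filter fun w => E w v ∧ τ v < τ w ∧ τ w ≤ p).card ≤
    (univ.filter fun w => E v w ∧ τ v < τ w ∧ τ w ≤ p).card := by
  set ρ : Equiv.Perm (Fin (Fintype.card V)) := rot (τ v) p hp with hρ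
  set σ : V ≃ Fin (Fintype.card V) := τ.trans ρ with hσ
  have hmed := hτ σ
  rw [Finset.card_filter, Finset.card_filter]
  have e1 : (∑ pr : V × V, if pr.1 = v ∧ (E v pr.2 ∧ τ v < τ pr.2 ∧ τ pr.2 ≤ p) then 1 else 0)
      = ∑ w : V, (if E v w ∧ τ v < τ w ∧ τ w ≤ p then 1 else 0) := by
    rw [Fintype.sum_prod_type]
    rw [Finset.sum_eq_single v]
    · apply Finset.sum_congr rfl; intro w _; simp
    · intro u _ hu
      apply Finset.sum_eq_zero; intro w _; simp [hu]
    · simp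
  have e2 : (∑ pr : V × V, if pr.2 = v ∧ (E pr.1 v ∧ τ v < τ pr.1 ∧ τ pr.1 ≤ p) then 1 else 0)
      = ∑ w : V, (if E w v ∧ τ v < τ w ∧ τ w ≤ p then 1 else 0) := by
    rw [Fintype.sum_prod_type_right]
    rw [Finset.sum_eq_single v]
    · apply Finset.sum_congr rfl; intro w _; simp
    · intro u _ hu
      apply Finset.sum_eq_zero; intro w _; simp [hu]
    · simp
  have key : fwdCount E σ
        + (∑ pr : V × V, if pr.1 = v ∧ (E v pr.2 ∧ τ v < τ pr.2 ∧ τ pr.2 ≤ p) then 1 else 0)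
      = fwdCount E τ
        + (∑ pr : V × V, if pr.2 = v ∧ (E pr.1 v ∧ τ v < τ pr.1 ∧ τ pr.1 ≤ p) then 1 else 0) := by
    unfold fwdCount
    rw [Finset.card_filter, Finset.card_filter, ← Finset.sum_add_distrib,
      ← Finset.sum_add_distrib]
    apply Finset.sum_congr rfl
    rintro ⟨u, w⟩ -
    simp only
    have hσu : σ u = ρ (τ u) := rfl
    have hσw : σ w = ρ (τ w) := rfl
    by_cases hu : u = v
    · subst hu
      by_cases hw : w = u
      · subst hw
        simp [lt_irrefl]
      · have hτw : τ w ≠ τ u := fun h => hw (τ.injective h)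
        have h1 : σ u = p := by rw [hσu, hρ]; exact rot_apply_self _ _ _
        have h2 : σ u < σ w ↔ p < τ w := by
          rw [h1, hσw, hρ]; exact self_lt_rot_iff _ _ _ _ hτw
        have hwv : ¬ (w = u) := hw
        by_cases hE : E u w
        · simp only [hE, true_and, hwv, false_and, if_false, add_zero, if_true]
          rw [if_congr h2 rfl rfl]
          simp only [Fin.lt_def, Fin.le_def] at *
          split_ifs <;> omega
        · simp [hE, hwv]
    · by_cases hw : w = v
      · subst hw
        have hτu : τ u ≠ τ w := fun h => hu (τ.injective h)
        have h1 : σ w = p := by rw [hσw, hρ]; exact rot_apply_self _ _ _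
        have h2 : σ u < σ w ↔ τ u ≤ p := by
          rw [h1, hσu, hρ]; exact rot_lt_self_iff _ _ _ _ hτu
        by_cases hE : E u w
        · simp only [hE, true_and, hu, false_and, if_false, add_zero, zero_add, if_true]
          rw [if_congr h2 rfl rfl]
          have hne : (τ u : ℕ) ≠ (τ w : ℕ) := fun h => hτu (Fin.ext h)
          simp only [Fin.lt_def, Fin.le_def] at *
          split_ifs <;> omega
        · simp [hE, hu]
      · have hτu : τ u ≠ τ v := fun h => hu (τ.injective h)
        have hτw : τ w ≠ τ v := fun h => hw (τ.injective h)
        have h2 : σ u < σ w ↔ τ u < τ w := by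
          rw [hσu, hσw, hρ]; exact rot_lt_rot_iff _ _ _ _ _ hτu hτw
        simp only [hu, hw, false_and, if_false, add_zero]
        rw [if_congr (and_congr_right fun _ => h2) rfl rfl]
  omega
end Exchange

section Flip
variable {V : Type} [Fintype V] {E : V → V → Prop}

lemma fwdCount_flip (σ : V ≃ Fin (Fintype.card V)) :
    fwdCount (fun a b => E b a) σ = fwdCount E (σ.trans Fin.revPerm) := by
  unfold fwdCount
  apply Finset.card_nbij Prod.swap
  · intro pr hpr
    simp only [Finset.mem_coe, Finset.mem_filter, Finset.mem_univ, true_and,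
      Equiv.trans_apply, Fin.revPerm_apply, Fin.rev_lt_rev, Prod.fst_swap,
      Prod.snd_swap] at hpr ⊢
    exact ⟨hpr.1, hpr.2⟩
  · intro x _ y _ h
    exact Prod.swap_injective h
  · intro pr hpr
    refine ⟨Prod.swap pr, ?_, Prod.swap_swap pr⟩
    simp only [Finset.mem_coe, Finset.mem_filter, Finset.mem_univ, true_and,
      Equiv.trans_apply, Fin.revPerm_apply, Fin.rev_lt_rev, Prod.fst_swap,
      Prod.snd_swap] at hpr ⊢
    exact ⟨hpr.1, hpr.2⟩

lemma median_flip (τ : V ≃ Fin (Fintype.card V)) (hτ : IsMedianOrder E τ) :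
    IsMedianOrder (fun a b => E b a) (τ.trans Fin.revPerm) := by
  intro σ
  have h : (τ.trans Fin.revPerm).trans Fin.revPerm = τ := by
    apply Equiv.ext; intro x
    simp [Fin.rev_rev]
  have h2 : fwdCount (fun a b => E b a) (τ.trans Fin.revPerm) = fwdCount E τ := by
    rw [fwdCount_flip, h]
  rw [fwdCount_flip σ, h2]
  exact hτ _
end Flip

section Helpers
variable {V : Type} [Fintype V] {E : V → V → Prop}

lemma exchange_nat (τ : V ≃ Fin (Fintype.card V)) (hτ : IsMedianOrder E τ) (v : V)
    (b : ℕ) (hb : b < Fintype.card V) (hvb : (τ v : ℕ) ≤ b) :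
    (univ.filter fun w => E w v ∧ (τ v : ℕ) < (τ w : ℕ) ∧ (τ w : ℕ) ≤ b).card ≤
    (univ.filter fun w => E v w ∧ (τ v : ℕ) < (τ w : ℕ) ∧ (τ w : ℕ) ≤ b).card := by
  have h := exchange τ hτ v ⟨b, hb⟩ (by rw [Fin.le_def]; exact hvb)
  refine le_trans (Finset.card_le_card ?_) (le_trans h (Finset.card_le_card ?_)) <;>
  · intro w hw
    simp only [Finset.mem_filter, Finset.mem_univ, true_and, Fin.lt_def, Fin.le_def] at hw ⊢
    exact hw

lemma exchange_nat' (τ : V ≃ Fin (Fintype.card V)) (hτ : IsMedianOrder E τ) (v : V)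
    (b : ℕ) :
    (univ.filter fun w => E v w ∧ b ≤ (τ w : ℕ) ∧ (τ w : ℕ) < (τ v : ℕ)).card ≤
    (univ.filter fun w => E w v ∧ b ≤ (τ w : ℕ) ∧ (τ w : ℕ) < (τ v : ℕ)).card := by
  by_cases hvb : b ≤ (τ v : ℕ)
  · have hbn : b < Fintype.card V := lt_of_le_of_lt hvb (τ v).isLt
    have hτ' := median_flip τ hτ
    have hp : (τ.trans Fin.revPerm) v ≤ Fin.rev ⟨b, hbn⟩ := by
      simp only [Equiv.trans_apply, Fin.revPerm_apply]
      rw [Fin.rev_le_rev, Fin.le_def]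
      exact hvb
    have h := exchange (E := fun a b => E b a) (τ.trans Fin.revPerm) hτ' v
      (Fin.rev ⟨b, hbn⟩) hp
    refine le_trans (Finset.card_le_card ?_) (le_trans h (Finset.card_le_card ?_)) <;>
    · intro w hw
      simp only [Finset.mem_filter, Finset.mem_univ, true_and, Equiv.trans_apply,
        Fin.revPerm_apply, Fin.rev_lt_rev, Fin.rev_le_rev] at hw ⊢
      simp only [Fin.lt_def, Fin.le_def, Fin.val_mk] at hw ⊢
      exact ⟨hw.1, hw.2.2, hw.2.1⟩
  · push_neg at hvb
    have h0 : ∀ (P : V → Prop),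
        (univ.filter fun w => P w ∧ b ≤ (τ w : ℕ) ∧ (τ w : ℕ) < (τ v : ℕ)).card = 0 := by
      intro P
      rw [Finset.card_eq_zero, Finset.filter_false_of_mem]
      rintro w - ⟨-, h1, h2⟩
      omega
    rw [h0, h0]

lemma count_Ioc (τ : V ≃ Fin (Fintype.card V)) (lo hi : ℕ) (hhi : hi < Fintype.card V) :
    (univ.filter fun w => lo < (τ w : ℕ) ∧ (τ w : ℕ) ≤ hi).card = hi - lo := by
  rw [← Nat.card_Ioc lo hi]
  apply Finset.card_nbij (fun w => (τ w : ℕ))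
  · intro w hw
    simp only [Finset.mem_coe, Finset.mem_filter, Finset.mem_univ, true_and] at hw
    simp only [Finset.mem_coe, Finset.mem_Ioc]
    exact hw
  · intro x _ y _ h
    exact τ.injective (Fin.ext h)
  · intro c hc
    simp only [Finset.mem_coe, Finset.mem_Ioc] at hc
    refine ⟨τ.symm ⟨c, lt_of_le_of_lt hc.2 hhi⟩, ?_, ?_⟩
    · simp only [Finset.mem_coe, Finset.mem_filter, Finset.mem_univ, true_and,
        Equiv.apply_symm_apply]
      exact hc
    · simp [Equiv.apply_symm_apply]

lemma count_Ico (τ : V ≃ Fin (Fintype.card V)) (lo hi : ℕ) (hhi : hi ≤ Fintype.card V) :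
    (univ.filter fun w => lo ≤ (τ w : ℕ) ∧ (τ w : ℕ) < hi).card = hi - lo := by
  rw [← Nat.card_Ico lo hi]
  apply Finset.card_nbij (fun w => (τ w : ℕ))
  · intro w hw
    simp only [Finset.mem_coe, Finset.mem_filter, Finset.mem_univ, true_and] at hw
    simp only [Finset.mem_coe, Finset.mem_Ico]
    exact hw
  · intro x _ y _ h
    exact τ.injective (Fin.ext h)
  · intro c hc
    simp only [Finset.mem_coe, Finset.mem_Ico] at hc
    refine ⟨τ.symm ⟨c, lt_of_lt_of_le hc.2 hhi⟩, ?_, ?_⟩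
    · simp only [Finset.mem_coe, Finset.mem_filter, Finset.mem_univ, true_and,
        Equiv.apply_symm_apply]
      exact hc
    · simp [Equiv.apply_symm_apply]

lemma mem_interior_biUnion (τ : V ≃ Fin (Fintype.card V)) (t m a : ℕ) (A : ℕ → Finset V)
    (ha : ∀ i, 0 ≤ i → i ≤ t → ∀ v : V,
      v ∈ A i ↔ (a + i * m ≤ (τ v : ℕ) ∧ (τ v : ℕ) < a + (i + 1) * m))
    (hm : 0 < m) (w : V) (h1 : a + m ≤ (τ w : ℕ)) (h2 : (τ w : ℕ) < a + t * m) :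
    w ∈ (Finset.Ioo 0 t).biUnion A := by
  set q := ((τ w : ℕ) - a) / m with hq
  have hd1 : q * m ≤ (τ w : ℕ) - a := Nat.div_mul_le_self _ _
  have hd2 : (τ w : ℕ) - a < q * m + m := Nat.lt_div_mul_add hm
  have haw : a ≤ (τ w : ℕ) := by omega
  have hq1 : 1 ≤ q := by
    by_contra h
    have h0 : q = 0 := Nat.lt_one_iff.mp (not_le.mp h)
    rw [h0] at hd2
    omega
  have hq2 : q < t := by
    by_contra h
    push_neg at h
    have : t * m ≤ q * m := Nat.mul_le_mul_right m h
    omega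
  refine Finset.mem_biUnion.mpr ⟨q, Finset.mem_Ioo.mpr ⟨hq1, hq2⟩, ?_⟩
  rw [ha q (Nat.zero_le q) (le_of_lt hq2) w]
  have hqq : (q + 1) * m = q * m + m := by ring
  rw [hqq]
  omega

end Helpers

/-- In a median ordering, for an interval split into subintervals
`A_0 ≺ ⋯ ≺ A_t` of size `m`, every vertex of `A_0` has at least `((t-2)/2)m`
outneighbours in `A_1 ∪ ⋯ ∪ A_{t-1}`, and every vertex of `A_t` has at least
`((t-2)/2)m` inneighbours there. -/
theorem statement_9 (V : Type) [Fintype V] (E : V → V → Prop) (hT : IsTournament E)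
    (τ : V ≃ Fin (Fintype.card V)) (hτ : IsMedianOrder E τ)
    (t m : ℕ) (A : ℕ → Finset V)
    (hsplit : IsIntervalSplit τ m 0 t A)
    (hsize : ∀ i ≤ t, (A i).card = m) :
    (∀ v ∈ A 0, ((t : ℝ) - 2) / 2 * (m : ℝ) ≤
      (((((Finset.Ioo 0 t).biUnion A).filter fun w => E v w).card : ℝ))) ∧
    (∀ v ∈ A t, ((t : ℝ) - 2) / 2 * (m : ℝ) ≤
      (((((Finset.Ioo 0 t).biUnion A).filter fun w => E w v).card : ℝ))) := by
  obtain ⟨a, ha⟩ := hsplit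
  constructor
  · intro v hv
    rcases Nat.eq_zero_or_pos t with ht0 | ht
    · subst ht0
      simp only [Finset.Ioo_self, Finset.biUnion_empty, Finset.filter_empty,
        Finset.card_empty, Nat.cast_zero]
      have hm0 : (0:ℝ) ≤ (m:ℝ) := Nat.cast_nonneg m
      push_cast
      linarith
    have hv' := (ha 0 le_rfl (Nat.zero_le t) v).mp hv
    have hv1 : a ≤ (τ v : ℕ) := by omega
    have hv2 : (τ v : ℕ) + 1 ≤ a + m := by omega
    have hm : 1 ≤ m := by
      have h := hsize 0 (Nat.zero_le t)
      have h2 : 0 < (A 0).card := Finset.card_pos.mpr ⟨v, hv⟩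
      omega
    obtain ⟨u, hu⟩ := Finset.card_pos.mp
      (show 0 < (A t).card by rw [hsize t le_rfl]; omega)
    have hu' := (ha t (Nat.zero_le t) le_rfl u).mp hu
    obtain ⟨M, hM⟩ : ∃ M, t * m = M := ⟨_, rfl⟩
    rw [hM] at hu'
    have hun : (τ u : ℕ) < Fintype.card V := (τ u).isLt
    have htm : a + M ≤ Fintype.card V := by omega
    have hmM : m ≤ M := by rw [← hM]; exact Nat.le_mul_of_pos_left m ht
    have hb : a + M - 1 < Fintype.card V := by omega
    have hvb : (τ v : ℕ) ≤ a + M - 1 := by omega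
    have hEx := exchange_nat τ hτ v (a + M - 1) hb hvb
    have hBcard := count_Ioc τ (τ v : ℕ) (a + M - 1) hb
    have hsub : (univ.filter fun w => (τ v : ℕ) < (τ w : ℕ) ∧ (τ w : ℕ) ≤ a + M - 1) ⊆
        (univ.filter fun w => E v w ∧ (τ v : ℕ) < (τ w : ℕ) ∧ (τ w : ℕ) ≤ a + M - 1) ∪
        (univ.filter fun w => E w v ∧ (τ v : ℕ) < (τ w : ℕ) ∧ (τ w : ℕ) ≤ a + M - 1) := by
      intro w hw
      simp only [Finset.mem_filter, Finset.mem_univ, true_and, Finset.mem_union] at hw ⊢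
      have hwv : w ≠ v := by
        intro h; subst h; omega
      by_cases hE : E v w
      · exact Or.inl ⟨hE, hw⟩
      · exact Or.inr ⟨(hT.2 w v hwv).mpr hE, hw⟩
    have hcard2 := le_trans (Finset.card_le_card hsub) (Finset.card_union_le _ _)
    rw [hBcard] at hcard2
    have hamn : a + m - 1 < Fintype.card V := by omega
    have hLow := count_Ioc τ (τ v : ℕ) (a + m - 1) hamn
    have hsub2 : (univ.filter fun w => E v w ∧ (τ v : ℕ) < (τ w : ℕ) ∧ (τ w : ℕ) ≤ a + M - 1) ⊆
        (((Finset.Ioo 0 t).biUnion A).filter fun w => E v w) ∪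
        (univ.filter fun w => (τ v : ℕ) < (τ w : ℕ) ∧ (τ w : ℕ) ≤ a + m - 1) := by
      intro w hw
      simp only [Finset.mem_filter, Finset.mem_univ, true_and, Finset.mem_union] at hw ⊢
      by_cases hlow : (τ w : ℕ) ≤ a + m - 1
      · exact Or.inr ⟨hw.2.1, hlow⟩
      · left
        refine ⟨mem_interior_biUnion τ t m a A ha hm w ?_ ?_, hw.1⟩
        · omega
        · rw [hM]; omega
    have hcard3 := le_trans (Finset.card_le_card hsub2) (Finset.card_union_le _ _)
    rw [hLow] at hcard3
    have H1 : a + M ≤ 2 * (univ.filter fun w =>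
        E v w ∧ (τ v : ℕ) < (τ w : ℕ) ∧ (τ w : ℕ) ≤ a + M - 1).card + (τ v : ℕ) + 1 := by
      omega
    have H2 : (univ.filter fun w =>
        E v w ∧ (τ v : ℕ) < (τ w : ℕ) ∧ (τ w : ℕ) ≤ a + M - 1).card + (τ v : ℕ) + 1 ≤
        (((Finset.Ioo 0 t).biUnion A).filter fun w => E v w).card + a + m := by
      omega
    have hMr : (M : ℝ) = (t : ℝ) * m := by rw [← hM]; push_cast; ring
    have c1 : (a : ℝ) + M ≤ 2 * ((univ.filter fun w =>
        E v w ∧ (τ v : ℕ) < (τ w : ℕ) ∧ (τ w : ℕ) ≤ a + M - 1).card : ℝ) + ((τ v : ℕ) : ℝ) + 1 := by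
      exact_mod_cast H1
    have c2 : ((univ.filter fun w =>
        E v w ∧ (τ v : ℕ) < (τ w : ℕ) ∧ (τ w : ℕ) ≤ a + M - 1).card : ℝ) + ((τ v : ℕ) : ℝ) + 1 ≤
        ((((Finset.Ioo 0 t).biUnion A).filter fun w => E v w).card : ℝ) + a + m := by
      exact_mod_cast H2
    have cv1 : (a : ℝ) ≤ ((τ v : ℕ) : ℝ) := by exact_mod_cast hv1
    linarith
  · intro v hv
    rcases Nat.eq_zero_or_pos t with ht0 | ht
    · subst ht0
      simp only [Finset.Ioo_self, Finset.biUnion_empty, Finset.filter_empty,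
        Finset.card_empty, Nat.cast_zero]
      have hm0 : (0:ℝ) ≤ (m:ℝ) := Nat.cast_nonneg m
      push_cast
      linarith
    have hv' := (ha t (Nat.zero_le t) le_rfl v).mp hv
    obtain ⟨M, hM⟩ : ∃ M, t * m = M := ⟨_, rfl⟩
    have htm1 : (t + 1) * m = M + m := by rw [← hM]; ring
    rw [hM, htm1] at hv'
    have hv1 : a + M ≤ (τ v : ℕ) := hv'.1
    have hv2 : (τ v : ℕ) + 1 ≤ a + M + m := by omega
    have hm : 1 ≤ m := by
      have h := hsize t le_rfl
      have h2 : 0 < (A t).card := Finset.card_pos.mpr ⟨v, hv⟩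
      omega
    have hvn : (τ v : ℕ) ≤ Fintype.card V := le_of_lt (τ v).isLt
    have hEx := exchange_nat' τ hτ v (a + m)
    have hBcard := count_Ico τ (a + m) (τ v : ℕ) hvn
    have hsub : (univ.filter fun w => a + m ≤ (τ w : ℕ) ∧ (τ w : ℕ) < (τ v : ℕ)) ⊆
        (univ.filter fun w => E v w ∧ a + m ≤ (τ w : ℕ) ∧ (τ w : ℕ) < (τ v : ℕ)) ∪
        (univ.filter fun w => E w v ∧ a + m ≤ (τ w : ℕ) ∧ (τ w : ℕ) < (τ v : ℕ)) := by
      intro w hw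
      simp only [Finset.mem_filter, Finset.mem_univ, true_and, Finset.mem_union] at hw ⊢
      have hwv : w ≠ v := by
        intro h; subst h; omega
      by_cases hE : E v w
      · exact Or.inl ⟨hE, hw⟩
      · exact Or.inr ⟨(hT.2 w v hwv).mpr hE, hw⟩
    have hcard2 := le_trans (Finset.card_le_card hsub) (Finset.card_union_le _ _)
    rw [hBcard] at hcard2
    have hHigh := count_Ico τ (a + M) (τ v : ℕ) hvn
    have hsub2 : (univ.filter fun w => E w v ∧ a + m ≤ (τ w : ℕ) ∧ (τ w : ℕ) < (τ v : ℕ)) ⊆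
        (((Finset.Ioo 0 t).biUnion A).filter fun w => E w v) ∪
        (univ.filter fun w => a + M ≤ (τ w : ℕ) ∧ (τ w : ℕ) < (τ v : ℕ)) := by
      intro w hw
      simp only [Finset.mem_filter, Finset.mem_univ, true_and, Finset.mem_union] at hw ⊢
      by_cases hhigh : a + M ≤ (τ w : ℕ)
      · exact Or.inr ⟨hhigh, hw.2.2⟩
      · left
        refine ⟨mem_interior_biUnion τ t m a A ha hm w ?_ ?_, hw.1⟩
        · omega
        · rw [hM]; omega
    have hcard3 := le_trans (Finset.card_le_card hsub2) (Finset.card_union_le _ _)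
    rw [hHigh] at hcard3
    have H1 : (τ v : ℕ) ≤ 2 * (univ.filter fun w =>
        E w v ∧ a + m ≤ (τ w : ℕ) ∧ (τ w : ℕ) < (τ v : ℕ)).card + a + m := by
      omega
    have H2 : (univ.filter fun w =>
        E w v ∧ a + m ≤ (τ w : ℕ) ∧ (τ w : ℕ) < (τ v : ℕ)).card + a + M ≤
        (((Finset.Ioo 0 t).biUnion A).filter fun w => E w v).card + (τ v : ℕ) := by
      omega
    have hMr : (M : ℝ) = (t : ℝ) * m := by rw [← hM]; push_cast; ring
    have c1 : ((τ v : ℕ) : ℝ) ≤ 2 * ((univ.filter fun w =>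
        E w v ∧ a + m ≤ (τ w : ℕ) ∧ (τ w : ℕ) < (τ v : ℕ)).card : ℝ) + a + m := by
      exact_mod_cast H1
    have c2 : ((univ.filter fun w =>
        E w v ∧ a + m ≤ (τ w : ℕ) ∧ (τ w : ℕ) < (τ v : ℕ)).card : ℝ) + a + M ≤
        ((((Finset.Ioo 0 t).biUnion A).filter fun w => E w v).card : ℝ) + ((τ v : ℕ) : ℝ) := by
      exact_mod_cast H2
    have cv2 : ((τ v : ℕ) : ℝ) + 1 ≤ (a : ℝ) + M + m := by exact_mod_cast hv2
    linarith
end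

section
/- Let H be a k-absorber with absorbing part Q(H), and let X, Y ⊆ Q(H) be two vertex sets of size 2k that each induce transitive subtournaments. Then H contains the k-th power of a Hamilton path (a k-th power of a directed path using every vertex of H) whose first k vertices lie in Y and whose last k vertices lie in X. -/
open Finset

attribute [local instance] Classical.propDecidable

section Machinery
variable {V : Type} {E : V → V → Prop} {k : ℕ}

/-- window property -/
def Win (E : V → V → Prop) (k : ℕ) (L : List V) : Prop :=
  ∀ (i j : ℕ) (a b : V), i < j → j ≤ i + k → L[i]? = some a → L[j]? = some b → E a b

/-- block relation -/
def BRel (E : V → V → Prop) (k : ℕ) (b c : List V) : Prop :=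
  ∀ a ∈ b, ∀ x ∈ c.take k, E a x

lemma mem_of_getElem?' {L : List V} {n : ℕ} {a : V} (h : L[n]? = some a) : a ∈ L := by
  obtain ⟨h1, h2⟩ := List.getElem?_eq_some_iff.mp h
  exact h2 ▸ List.getElem_mem h1

lemma win_append {L1 L2 : List V} (h1 : Win E k L1) (h2 : Win E k L2)
    (hc : ∀ (d1 d2 : ℕ) (a b : V), 1 ≤ d1 → d1 + d2 ≤ k →
      L1[L1.length - d1]? = some a → L2[d2]? = some b → E a b) :
    Win E k (L1 ++ L2) := by
  intro i j a b hij hjk ha hb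
  rcases lt_or_ge j L1.length with hj | hj
  · have hi : i < L1.length := lt_trans hij hj
    rw [List.getElem?_append, if_pos hi] at ha
    rw [List.getElem?_append, if_pos hj] at hb
    exact h1 i j a b hij hjk ha hb
  rcases lt_or_ge i L1.length with hi | hi
  · rw [List.getElem?_append, if_pos hi] at ha
    rw [List.getElem?_append_right hj] at hb
    refine hc (L1.length - i) (j - L1.length) a b (by omega) (by omega) ?_ hb
    have he : L1.length - (L1.length - i) = i := by omega
    rw [he]; exact ha
  · rw [List.getElem?_append_right hi] at ha
    rw [List.getElem?_append_right hj] at hb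
    exact h2 _ _ a b (by omega) (by omega) ha hb

lemma win_of_pairwise {L : List V} (h : L.Pairwise E) : Win E k L := by
  intro i j a b hij _ ha hb
  obtain ⟨hi', ha'⟩ := List.getElem?_eq_some_iff.mp ha
  obtain ⟨hj', hb'⟩ := List.getElem?_eq_some_iff.mp hb
  subst ha'; subst hb'
  exact List.pairwise_iff_getElem.mp h i j hi' hj' hij

lemma win_join (hk : 1 ≤ k) : ∀ (Bs : List (List V)),
    (∀ b ∈ Bs, b.Pairwise E) → (∀ b ∈ Bs, k ≤ b.length) →
    (∀ (n : ℕ) (b c : List V), Bs[n]? = some b → Bs[n+1]? = some c → BRel E k b c) →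
    Win E k Bs.flatten
  | [], _, _, _ => by intro i j a b _ _ ha _; simp at ha
  | b :: Bs, h1, h2, h3 => by
    rw [List.flatten_cons]
    refine win_append (win_of_pairwise (h1 b (by simp)))
      (win_join hk Bs (fun c hc => h1 c (by simp [hc])) (fun c hc => h2 c (by simp [hc]))
        (fun n c d hc hd => h3 (n+1) c d (by simpa using hc) (by simpa using hd))) ?_
    intro d1 d2 a x hd1 hsum ha hx
    cases Bs with
    | nil => simp at hx
    | cons c Bs' =>
      have hck : k ≤ c.length := h2 c (by simp)
      have hd2 : d2 < c.length := by omega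
      rw [List.flatten_cons, List.getElem?_append, if_pos hd2] at hx
      have hrel : BRel E k b c := h3 0 b c (by simp) (by simp)
      refine hrel a (mem_of_getElem?' ha) x ?_
      refine mem_of_getElem?' (L := c.take k) (n := d2) ?_
      rw [List.getElem?_take, if_pos (by omega)]
      exact hx

lemma exists_ordered (hT : IsTournament E) (S : Finset V) (h : IsTransitiveOn E S) :
    ∃ l : List V, l.Nodup ∧ l.toFinset = S ∧ l.Pairwise E ∧ l.length = S.card := by
  classical
  obtain ⟨f, hinj, hfwd⟩ := h
  refine ⟨S.toList.mergeSort (fun u v => decide (f u ≤ f v)), ?_, ?_, ?_, ?_⟩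
  case _ => exact (List.mergeSort_perm _ _).nodup_iff.mpr S.nodup_toList
  case _ => rw [List.toFinset_eq_of_perm _ _ (List.mergeSort_perm _ _)]; exact Finset.toList_toFinset S
  case _ =>
    have hsort := List.pairwise_mergeSort (le := fun u v => decide (f u ≤ f v))
      (by intro a b c h1 h2; simp only [decide_eq_true_eq] at *; omega)
      (by intro a b; simp only [Bool.or_eq_true, decide_eq_true_eq]; omega)
      S.toList
    set l := S.toList.mergeSort (fun u v => decide (f u ≤ f v)) with hl
    have hnd : l.Nodup := (List.mergeSort_perm _ _).nodup_iff.mpr S.nodup_toList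
    have hmem : ∀ v ∈ l, v ∈ S := by
      intro v hv
      have := (List.mergeSort_perm S.toList (fun u v => decide (f u ≤ f v))).mem_iff.mp hv
      exact (Finset.mem_toList).mp this
    rw [List.pairwise_iff_getElem]
    intro i j hi hj hij
    have hle : f l[i] ≤ f l[j] := by
      have := List.pairwise_iff_getElem.mp hsort i j hi hj hij
      simpa using this
    have hne : l[i] ≠ l[j] := by
      intro hcon
      have := List.nodup_iff_injective_get.mp hnd
        (show l.get ⟨i, hi⟩ = l.get ⟨j, hj⟩ by simpa using hcon)
      simp at this; omega
    have hiS : l[i] ∈ S := hmem _ (List.getElem_mem hi)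
    have hjS : l[j] ∈ S := hmem _ (List.getElem_mem hj)
    have hflt : f l[i] < f l[j] := by
      rcases lt_or_eq_of_le hle with h | h
      · exact h
      · exact absurd (hinj hiS hjS h) hne
    by_contra hE
    have : E l[j] l[i] := ((hT.2 _ _ hne.symm).mpr hE)
    have := hfwd _ hjS _ hiS this
    omega
  case _ => rw [(List.mergeSort_perm _ _).length_eq, Finset.length_toList]
end Machinery

set_option maxHeartbeats 3000000

/-- a `k`-absorber contains the `k`-th power of a Hamilton path whose
first `k` vertices lie in `Y` and last `k` vertices lie in `X`, for any transitive
`2k`-sets `X, Y` inside the absorbing part. -/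
theorem statement_14 (V : Type) (E : V → V → Prop) (hT : IsTournament E)
    (k : ℕ) (H Q : Finset V) (hH : IsAbsorber E k H Q)
    (X Y : Finset V) (hXsub : X ⊆ Q) (hYsub : Y ⊆ Q)
    (hXcard : X.card = 2 * k) (hYcard : Y.card = 2 * k)
    (hXtrans : IsTransitiveOn E X) (hYtrans : IsTransitiveOn E Y) :
    ∃ x : Fin H.card → V, IsPathPower E k H.card x ∧
      Finset.univ.image x = H ∧
      (∀ i : Fin H.card, (i : ℕ) < k → x i ∈ Y) ∧
      (∀ i : Fin H.card, H.card - k ≤ (i : ℕ) → x i ∈ X) := by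
  classical
  obtain ⟨r, S, q, hr, hSdisj, hSQ, hH, hQ, hqinj, hScard, hSdom, hSr0, hS0Q, hQS, hqi⟩ := hH
  rcases Nat.eq_zero_or_pos k with hk0 | hk
  · -- k = 0 : no edge conditions
    subst hk0
    refine ⟨fun i => ((H.equivFin.symm i : {x // x ∈ H}) : V), ⟨?_, ?_⟩, ?_, ?_, ?_⟩
    · intro i j hij
      exact H.equivFin.symm.injective (Subtype.coe_injective hij)
    · intro i j hij hjk; omega
    · ext a
      simp only [Finset.mem_image, Finset.mem_univ, true_and]
      constructor
      · rintro ⟨i, rfl⟩; exact (H.equivFin.symm i).2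
      · intro ha; exact ⟨H.equivFin ⟨a, ha⟩, by simp⟩
    · intro i hi; omega
    · intro i hi
      have := i.isLt; omega
  -- main case : k ≥ 1
  obtain ⟨R, hRdef⟩ : ∃ R : ℕ, R = 2 ^ (10 * k) := ⟨_, rfl⟩
  rw [← hRdef] at hr hQ hqinj hQS hqi
  have hR1 : 1 ≤ R := hRdef ▸ Nat.one_le_two_pow
  have h2k : 2 * k ≤ R := by
    have : 2 * k < 2 ^ (2 * k) := Nat.lt_two_pow_self
    have h2 : 2 ^ (2 * k) ≤ 2 ^ (10 * k) := Nat.pow_le_pow_right (by norm_num) (by omega)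
    omega
  -- ordered lists for each S i
  have hslEx : ∀ i : ℕ, ∃ l : List V, i ≤ r →
      l.Nodup ∧ l.toFinset = S i ∧ l.Pairwise E ∧ l.length = 2 * k := by
    intro i
    by_cases h : i ≤ r
    · obtain ⟨l, h1, h2, h3, h4⟩ := exists_ordered hT (S i) (hScard i h).2
      exact ⟨l, fun _ => ⟨h1, h2, h3, by rw [h4, (hScard i h).1]⟩⟩
    · exact ⟨[], fun h' => absurd h' h⟩
  choose sl hsl using hslEx
  have hslnd : ∀ i, i ≤ r → (sl i).Nodup := fun i h => (hsl i h).1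
  have hsltf : ∀ i, i ≤ r → (sl i).toFinset = S i := fun i h => (hsl i h).2.1
  have hslpw : ∀ i, i ≤ r → (sl i).Pairwise E := fun i h => (hsl i h).2.2.1
  have hsllen : ∀ i, i ≤ r → (sl i).length = 2 * k := fun i h => (hsl i h).2.2.2
  have hslS : ∀ i, i ≤ r → ∀ v ∈ sl i, v ∈ S i := by
    intro i h v hv; rw [← hsltf i h]; exact List.mem_toFinset.mpr hv
  have hSsl : ∀ i, i ≤ r → ∀ v ∈ S i, v ∈ sl i := by
    intro i h v hv; rw [← hsltf i h] at hv; exact List.mem_toFinset.mp hv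
  -- ordered lists for X and Y
  obtain ⟨lX, hlXnd, hlXtf, hlXpw, hlXlen⟩ := exists_ordered hT X hXtrans
  obtain ⟨lY, hlYnd, hlYtf, hlYpw, hlYlen⟩ := exists_ordered hT Y hYtrans
  rw [hXcard] at hlXlen
  rw [hYcard] at hlYlen
  -- P : first k elements of Y, T : k elements of X avoiding P
  set P : List V := lY.take k with hPdef
  set T : List V := (lX.filter (fun v => !(decide (v ∈ P)))).take k with hTdef
  have hPlen : P.length = k := by
    rw [hPdef, List.length_take, hlYlen]; omega
  have hPY : ∀ v ∈ P, v ∈ Y := by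
    intro v hv; rw [← hlYtf]; exact List.mem_toFinset.mpr (List.take_subset _ _ hv)
  have hPQ : ∀ v ∈ P, v ∈ Q := fun v hv => hYsub (hPY v hv)
  have hPpw : P.Pairwise E := List.Pairwise.sublist (List.take_sublist _ _) hlYpw
  have hPnd : P.Nodup := (List.take_sublist _ _).nodup hlYnd
  have hfillen : k ≤ (lX.filter (fun v => !(decide (v ∈ P)))).length := by
    have hsum := (List.filter_append_perm (fun v => decide (v ∈ P)) lX).length_eq
    rw [List.length_append] at hsum
    have hb : (lX.filter (fun v => decide (v ∈ P))).length ≤ k := by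
      have nd : (lX.filter (fun v => decide (v ∈ P))).Nodup :=
        (List.filter_sublist (l := lX)).nodup hlXnd
      have sub : (lX.filter (fun v => decide (v ∈ P))).toFinset ⊆ P.toFinset := by
        intro v hv
        rw [List.mem_toFinset] at *
        have := (List.mem_filter.mp hv).2
        simpa using this
      calc (lX.filter (fun v => decide (v ∈ P))).length
          = (lX.filter (fun v => decide (v ∈ P))).toFinset.card :=
            (List.toFinset_card_of_nodup nd).symm
        _ ≤ P.toFinset.card := Finset.card_le_card sub
        _ ≤ P.length := List.toFinset_card_le P
        _ = k := hPlen
    omega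
  have hTlen : T.length = k := by
    rw [hTdef, List.length_take]; omega
  have hTsub : ∀ v ∈ T, v ∈ lX := by
    intro v hv
    exact List.filter_sublist (l := lX) |>.subset (List.take_subset _ _ hv)
  have hTX : ∀ v ∈ T, v ∈ X := by
    intro v hv; rw [← hlXtf]; exact List.mem_toFinset.mpr (hTsub v hv)
  have hTQ : ∀ v ∈ T, v ∈ Q := fun v hv => hXsub (hTX v hv)
  have hTP : ∀ v ∈ T, v ∉ P := by
    intro v hv
    have := (List.mem_filter.mp (List.take_subset _ _ hv)).2
    simpa using this
  have hTpw : T.Pairwise E :=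
    List.Pairwise.sublist ((List.take_sublist _ _).trans (List.filter_sublist (l := lX))) hlXpw
  have hTnd : T.Nodup := ((List.take_sublist _ _).trans (List.filter_sublist (l := lX))).nodup hlXnd
  -- the q-slots
  set slot : ℕ → List V := fun j => if q j ∈ P ∨ q j ∈ T then [] else [q j] with hslotdef
  -- block function
  set blk : ℕ → List V := fun n =>
    if n = 0 then P
    else if n ≤ r - R then (sl (R + n)).take k
    else if n = r - R + 1 then (sl 0).take k
    else if n ≤ r + 1 then sl (n - (r - R + 1)) ++ slot (n - (r - R + 1))
    else if n ≤ 2 * r - R + 1 then (sl (R + (n - (r + 1)))).drop k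
    else if n = 2 * r - R + 2 then (sl 0).drop k
    else T with hblkdef
  set N : ℕ := 2 * r - R + 4 with hNdef
  -- zone lemmas
  have hblk0 : blk 0 = P := by simp [hblkdef]
  have hblkA : ∀ n, 1 ≤ n → n ≤ r - R → blk n = (sl (R + n)).take k := by
    intro n h1 h2
    simp only [hblkdef]
    rw [if_neg (show ¬ (n = 0) from by omega), if_pos (show n ≤ r - R from h2)]
  have hblkA0 : blk (r - R + 1) = (sl 0).take k := by
    simp only [hblkdef]
    rw [if_neg (show ¬ (r - R + 1 = 0) from by omega),
        if_neg (show ¬ (r - R + 1 ≤ r - R) from by omega),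
        ]
    simp
  have hblkM : ∀ j, 1 ≤ j → j ≤ R → blk (r - R + 1 + j) = sl j ++ slot j := by
    intro j h1 h2
    have e : r - R + 1 + j - (r - R + 1) = j := by omega
    simp only [hblkdef, e]
    rw [if_neg (show ¬ (r - R + 1 + j = 0) from by omega),
        if_neg (show ¬ (r - R + 1 + j ≤ r - R) from by omega),
        if_neg (show ¬ (r - R + 1 + j = r - R + 1) from by omega),
        if_pos (show r - R + 1 + j ≤ r + 1 from by omega)]
  have hblkB : ∀ i, R + 1 ≤ i → i ≤ r → blk (r + 1 + (i - R)) = (sl i).drop k := by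
    intro i h1 h2
    have e : R + (r + 1 + (i - R) - (r + 1)) = i := by omega
    simp only [hblkdef, e]
    rw [if_neg (show ¬ (r + 1 + (i - R) = 0) from by omega),
        if_neg (show ¬ (r + 1 + (i - R) ≤ r - R) from by omega),
        if_neg (show ¬ (r + 1 + (i - R) = r - R + 1) from by omega),
        if_neg (show ¬ (r + 1 + (i - R) ≤ r + 1) from by omega),
        if_pos (show r + 1 + (i - R) ≤ 2 * r - R + 1 from by omega)]
  have hblkB0 : blk (2 * r - R + 2) = (sl 0).drop k := by
    simp only [hblkdef]
    rw [if_neg (show ¬ (2 * r - R + 2 = 0) from by omega),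
        if_neg (show ¬ (2 * r - R + 2 ≤ r - R) from by omega),
        if_neg (show ¬ (2 * r - R + 2 = r - R + 1) from by omega),
        if_neg (show ¬ (2 * r - R + 2 ≤ r + 1) from by omega),
        if_neg (show ¬ (2 * r - R + 2 ≤ 2 * r - R + 1) from by omega),
        ]
    simp
  have hblkT : blk (2 * r - R + 3) = T := by
    simp only [hblkdef]
    rw [if_neg (show ¬ (2 * r - R + 3 = 0) from by omega),
        if_neg (show ¬ (2 * r - R + 3 ≤ r - R) from by omega),
        if_neg (show ¬ (2 * r - R + 3 = r - R + 1) from by omega),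
        if_neg (show ¬ (2 * r - R + 3 ≤ r + 1) from by omega),
        if_neg (show ¬ (2 * r - R + 3 ≤ 2 * r - R + 1) from by omega),
        if_neg (show ¬ (2 * r - R + 3 = 2 * r - R + 2) from by omega)]
  have hcases : ∀ n, n < N → n = 0 ∨ (1 ≤ n ∧ n ≤ r - R) ∨ n = r - R + 1 ∨
      (∃ j, 1 ≤ j ∧ j ≤ R ∧ n = r - R + 1 + j) ∨
      (∃ i, R + 1 ≤ i ∧ i ≤ r ∧ n = r + 1 + (i - R)) ∨
      n = 2 * r - R + 2 ∨ n = 2 * r - R + 3 := by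
    intro n hn
    by_cases h0 : n = 0
    · exact Or.inl h0
    by_cases hA : n ≤ r - R
    · exact Or.inr (Or.inl ⟨by omega, hA⟩)
    by_cases hA0 : n = r - R + 1
    · exact Or.inr (Or.inr (Or.inl hA0))
    by_cases hM : n ≤ r + 1
    · exact Or.inr (Or.inr (Or.inr (Or.inl ⟨n - (r - R + 1), by omega, by omega, by omega⟩)))
    by_cases hB : n ≤ 2 * r - R + 1
    · exact Or.inr (Or.inr (Or.inr (Or.inr (Or.inl ⟨R + (n - (r + 1)), by omega, by omega,
        by omega⟩))))
    by_cases hB0 : n = 2 * r - R + 2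
    · exact Or.inr (Or.inr (Or.inr (Or.inr (Or.inr (Or.inl hB0)))))
    · exact Or.inr (Or.inr (Or.inr (Or.inr (Or.inr (Or.inr (by omega))))))
  -- membership helpers
  have hqQ : ∀ j, 1 ≤ j → j ≤ R → q j ∈ Q := by
    intro j h1 h2
    rw [hQ]
    exact Finset.mem_image.mpr ⟨j, Finset.mem_Icc.mpr ⟨h1, h2⟩, rfl⟩
  have dSQ : ∀ i, i ≤ r → ∀ v, v ∈ S i → v ∈ Q → False := by
    intro i hi v h1 h2
    exact Finset.disjoint_left.mp (hSQ i hi) h1 h2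
  have dSS : ∀ i i', i ≤ r → i' ≤ r → i ≠ i' → ∀ v, v ∈ S i → v ∈ S i' → False := by
    intro i i' hi hi' hne v h1 h2
    exact Finset.disjoint_left.mp (hSdisj i i' hi hi' hne) h1 h2
  have hqeq : ∀ j j', 1 ≤ j → j ≤ R → 1 ≤ j' → j' ≤ R → q j = q j' → j = j' := by
    intro j j' a b c d h
    exact hqinj (Set.mem_Icc.mpr ⟨a, b⟩) (Set.mem_Icc.mpr ⟨c, d⟩) h
  have htd : ∀ i, i ≤ r → ∀ v, v ∈ (sl i).take k → v ∈ (sl i).drop k → False := by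
    intro i hi v h1 h2
    have h0 : ((sl i).take k ++ (sl i).drop k).Nodup := by
      rw [List.take_append_drop]; exact hslnd i hi
    exact (List.nodup_append'.mp h0).2.2 h1 h2
  have hMmem : ∀ j, 1 ≤ j → j ≤ R → ∀ v ∈ sl j ++ slot j,
      v ∈ S j ∨ (v = q j ∧ q j ∉ P ∧ q j ∉ T) := by
    intro j h1 h2 v hv
    rcases List.mem_append.mp hv with h | h
    · exact Or.inl (hslS j (by omega) v h)
    · simp only [hslotdef] at h
      by_cases hc : q j ∈ P ∨ q j ∈ T
      · rw [if_pos hc] at h; simp at h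
      · rw [if_neg hc] at h
        push_neg at hc
        exact Or.inr ⟨List.mem_singleton.mp h, hc.1, hc.2⟩
  have htakeM : ∀ j, 1 ≤ j → j ≤ R → ∀ x ∈ (sl j ++ slot j).take k, x ∈ S j := by
    intro j h1 h2 x hx
    rw [List.take_append] at hx
    rcases List.mem_append.mp hx with h | h
    · exact hslS j (by omega) x (List.take_subset _ _ h)
    · rw [hsllen j (by omega)] at h
      have : k - 2 * k = 0 := by omega
      rw [this] at h
      simp at h
  -- block lengths
  have hblen : ∀ n, n < N → k ≤ (blk n).length := by
    intro n hn
    rcases hcases n hn with rfl | ⟨h1, h2⟩ | h | ⟨j, h1, h2, rfl⟩ | ⟨i, h1, h2, rfl⟩ | h | h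
    · rw [hblk0, hPlen]
    · rw [hblkA n h1 h2, List.length_take, hsllen (R + n) (by omega)]; omega
    · rw [h, hblkA0, List.length_take, hsllen 0 (by omega)]; omega
    · rw [hblkM j h1 h2, List.length_append, hsllen j (by omega)]; omega
    · rw [hblkB i h1 h2, List.length_drop, hsllen i (by omega)]; omega
    · rw [h, hblkB0, List.length_drop, hsllen 0 (by omega)]; omega
    · rw [h, hblkT, hTlen]
  -- block pairwise
  have hbpw : ∀ n, n < N → (blk n).Pairwise E := by
    intro n hn
    rcases hcases n hn with rfl | ⟨h1, h2⟩ | h | ⟨j, h1, h2, rfl⟩ | ⟨i, h1, h2, rfl⟩ | h | h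
    · rw [hblk0]; exact hPpw
    · rw [hblkA n h1 h2]
      exact List.Pairwise.sublist (List.take_sublist _ _) (hslpw (R + n) (by omega))
    · rw [h, hblkA0]
      exact List.Pairwise.sublist (List.take_sublist _ _) (hslpw 0 (by omega))
    · rw [hblkM j h1 h2]
      refine List.pairwise_append.mpr ⟨hslpw j (by omega), ?_, ?_⟩
      · simp only [hslotdef]
        split <;> simp
      · intro a ha b hb
        simp only [hslotdef] at hb
        split at hb
        · simp at hb
        · rw [List.mem_singleton.mp hb]
          exact (hqi j h1 h2).1 a (hslS j (by omega) a ha) (q j) (Finset.mem_singleton_self _)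
    · rw [hblkB i h1 h2]
      exact List.Pairwise.sublist (List.drop_sublist _ _) (hslpw i (by omega))
    · rw [h, hblkB0]
      exact List.Pairwise.sublist (List.drop_sublist _ _) (hslpw 0 (by omega))
    · rw [h, hblkT]; exact hTpw
  -- block nodup
  have hbnd : ∀ n, n < N → (blk n).Nodup := by
    intro n hn
    rcases hcases n hn with rfl | ⟨h1, h2⟩ | h | ⟨j, h1, h2, rfl⟩ | ⟨i, h1, h2, rfl⟩ | h | h
    · rw [hblk0]; exact hPnd
    · rw [hblkA n h1 h2]; exact (List.take_sublist _ _).nodup (hslnd (R + n) (by omega))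
    · rw [h, hblkA0]; exact (List.take_sublist _ _).nodup (hslnd 0 (by omega))
    · rw [hblkM j h1 h2]
      refine List.nodup_append'.mpr ⟨hslnd j (by omega), ?_, ?_⟩
      · simp only [hslotdef]; split <;> simp
      · intro a ha hb
        simp only [hslotdef] at hb
        split at hb
        · simp at hb
        · rw [List.mem_singleton.mp hb] at ha
          exact dSQ j (by omega) (q j) (hslS j (by omega) _ ha) (hqQ j h1 h2)
    · rw [hblkB i h1 h2]; exact (List.drop_sublist _ _).nodup (hslnd i (by omega))
    · rw [h, hblkB0]; exact (List.drop_sublist _ _).nodup (hslnd 0 (by omega))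
    · rw [h, hblkT]; exact hTnd
  have hchain : ∀ n, n + 1 < N → BRel E k (blk n) (blk (n + 1)) := by
    intro n hn1
    have hn : n < N := by omega
    rcases hcases n hn with rfl | ⟨h1, h2⟩ | h | ⟨j, h1, h2, rfl⟩ | ⟨i, h1, h2, rfl⟩ | h | h
    · -- P → A (R+1)
      rw [hblk0]
      have e : (0:ℕ) + 1 = 1 := rfl
      rw [e, hblkA 1 le_rfl (by omega)]
      intro a ha x hx
      exact hQS a (hPQ a ha) x (hslS (R+1) (by omega) x
        (List.take_subset _ _ (List.take_subset _ _ hx)))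
    · -- A zone
      rw [hblkA n h1 h2]
      rcases Nat.lt_or_ge n (r - R) with hlt | hge
      · rw [hblkA (n+1) (by omega) (by omega)]
        intro a ha x hx
        have e : R + (n + 1) = R + n + 1 := by omega
        rw [e] at hx
        exact hSdom (R + n) (by omega) a (hslS _ (by omega) a (List.take_subset _ _ ha)) x
          (hslS _ (by omega) x (List.take_subset _ _ (List.take_subset _ _ hx)))
      · -- n = r - R, next is A0
        have e2 : n + 1 = r - R + 1 := by omega
        rw [e2, hblkA0]
        intro a ha x hx
        have haS : a ∈ S r := by
          have : a ∈ S (R + n) := hslS _ (by omega) a (List.take_subset _ _ ha)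
          have e3 : R + n = r := by omega
          rwa [e3] at this
        exact hSr0 a haS x (hslS 0 (by omega) x (List.take_subset _ _ (List.take_subset _ _ hx)))
    · -- A0 → M 1
      subst h
      rw [hblkA0, hblkM 1 le_rfl hR1]
      intro a ha x hx
      exact hSdom 0 (by omega) a (hslS 0 (by omega) a (List.take_subset _ _ ha)) x
        (htakeM 1 le_rfl hR1 x hx)
    · -- M zone
      rw [hblkM j h1 h2]
      rcases Nat.lt_or_ge j R with hlt | hge
      · have e : r - R + 1 + j + 1 = r - R + 1 + (j + 1) := by omega
        rw [e, hblkM (j+1) (by omega) (by omega)]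
        intro a ha x hx
        have hxS : x ∈ S (j+1) := htakeM (j+1) (by omega) (by omega) x hx
        rcases hMmem j h1 h2 a ha with haS | ⟨rfl, -, -⟩
        · exact hSdom j (by omega) a haS x hxS
        · exact (hqi j h1 h2).2 _ (Finset.mem_singleton_self _) x hxS
      · -- j = R, next is B (R+1)
        have e : r - R + 1 + j + 1 = r + 1 + (R + 1 - R) := by omega
        rw [e, hblkB (R+1) le_rfl (by omega)]
        intro a ha x hx
        have hxS : x ∈ S (R+1) := hslS (R+1) (by omega) x
          (List.drop_subset _ _ (List.take_subset _ _ hx))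
        rcases hMmem j h1 h2 a ha with haS | ⟨rfl, -, -⟩
        · have e2 : j = R := by omega
          rw [e2] at haS
          exact hSdom R (by omega) a haS x hxS
        · exact hQS _ (hqQ j h1 h2) x hxS
    · -- B zone
      rw [hblkB i h1 h2]
      rcases Nat.lt_or_ge i r with hlt | hge
      · have e : r + 1 + (i - R) + 1 = r + 1 + (i + 1 - R) := by omega
        rw [e, hblkB (i+1) (by omega) (by omega)]
        intro a ha x hx
        exact hSdom i (by omega) a (hslS i (by omega) a (List.drop_subset _ _ ha)) x
          (hslS (i+1) (by omega) x (List.drop_subset _ _ (List.take_subset _ _ hx)))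
      · -- i = r, next is B0
        have e : r + 1 + (i - R) + 1 = 2 * r - R + 2 := by omega
        rw [e, hblkB0]
        intro a ha x hx
        have haS : a ∈ S r := by
          have : a ∈ S i := hslS i (by omega) a (List.drop_subset _ _ ha)
          have e2 : i = r := by omega
          rwa [e2] at this
        exact hSr0 a haS x (hslS 0 (by omega) x (List.drop_subset _ _ (List.take_subset _ _ hx)))
    · -- B0 → T
      subst h
      rw [hblkB0, show 2 * r - R + 2 + 1 = 2 * r - R + 3 from by omega, hblkT]
      intro a ha x hx
      exact hS0Q a (hslS 0 (by omega) a (List.drop_subset _ _ ha)) x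
        (hTQ x (List.take_subset _ _ hx))
    · -- last block: contradiction
      exact absurd hn1 (by omega)
  have hdisj : ∀ m n, m < n → n < N → List.Disjoint (blk m) (blk n) := by
    intro m n hmn hnN v hvm hvn
    have hmN : m < N := by omega
    rcases hcases m hmN with rfl | ⟨hm1, hm2⟩ | hm | ⟨j, hj1, hj2, rfl⟩ | ⟨i, hi1, hi2, rfl⟩ | hm | hm
    · -- m = 0 : v ∈ P
      rw [hblk0] at hvm
      rcases hcases n hnN with rfl | ⟨hn1, hn2⟩ | hn | ⟨j, hj1, hj2, rfl⟩ | ⟨i, hi1, hi2, rfl⟩ | hn | hn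
      · omega
      · rw [hblkA n hn1 hn2] at hvn
        exact dSQ (R+n) (by omega) v (hslS _ (by omega) v (List.take_subset _ _ hvn)) (hPQ v hvm)
      · rw [hn, hblkA0] at hvn
        exact dSQ 0 (by omega) v (hslS _ (by omega) v (List.take_subset _ _ hvn)) (hPQ v hvm)
      · rcases hMmem j hj1 hj2 v (by rw [hblkM j hj1 hj2] at hvn; exact hvn) with hS | ⟨rfl, hnp, -⟩
        · exact dSQ j (by omega) v hS (hPQ v hvm)
        · exact hnp hvm
      · rw [hblkB i hi1 hi2] at hvn
        exact dSQ i (by omega) v (hslS _ (by omega) v (List.drop_subset _ _ hvn)) (hPQ v hvm)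
      · rw [hn, hblkB0] at hvn
        exact dSQ 0 (by omega) v (hslS _ (by omega) v (List.drop_subset _ _ hvn)) (hPQ v hvm)
      · rw [hn, hblkT] at hvn
        exact hTP v hvn hvm
    · -- m in A zone
      rw [hblkA m hm1 hm2] at hvm
      have hvS : v ∈ S (R+m) := hslS _ (by omega) v (List.take_subset _ _ hvm)
      rcases hcases n hnN with rfl | ⟨hn1, hn2⟩ | hn | ⟨j, hj1, hj2, rfl⟩ | ⟨i, hi1, hi2, rfl⟩ | hn | hn
      · omega
      · rw [hblkA n hn1 hn2] at hvn
        exact dSS (R+m) (R+n) (by omega) (by omega) (by omega) v hvS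
          (hslS _ (by omega) v (List.take_subset _ _ hvn))
      · rw [hn, hblkA0] at hvn
        exact dSS (R+m) 0 (by omega) (by omega) (by omega) v hvS
          (hslS _ (by omega) v (List.take_subset _ _ hvn))
      · rcases hMmem j hj1 hj2 v (by rw [hblkM j hj1 hj2] at hvn; exact hvn) with hS | ⟨rfl, -, -⟩
        · exact dSS (R+m) j (by omega) (by omega) (by omega) v hvS hS
        · exact dSQ (R+m) (by omega) _ hvS (hqQ j hj1 hj2)
      · rw [hblkB i hi1 hi2] at hvn
        rcases eq_or_ne (R+m) i with he | he
        · exact htd i (by omega) v (by rw [he] at hvm; exact hvm) hvn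
        · exact dSS (R+m) i (by omega) (by omega) he v hvS
            (hslS _ (by omega) v (List.drop_subset _ _ hvn))
      · rw [hn, hblkB0] at hvn
        exact dSS (R+m) 0 (by omega) (by omega) (by omega) v hvS
          (hslS _ (by omega) v (List.drop_subset _ _ hvn))
      · rw [hn, hblkT] at hvn
        exact dSQ (R+m) (by omega) v hvS (hTQ v hvn)
    · -- m = r - R + 1 (A0)
      rw [hm, hblkA0] at hvm
      have hvS : v ∈ S 0 := hslS 0 (by omega) v (List.take_subset _ _ hvm)
      rcases hcases n hnN with rfl | ⟨hn1, hn2⟩ | hn | ⟨j, hj1, hj2, rfl⟩ | ⟨i, hi1, hi2, rfl⟩ | hn | hn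
      · omega
      · omega
      · omega
      · rcases hMmem j hj1 hj2 v (by rw [hblkM j hj1 hj2] at hvn; exact hvn) with hS | ⟨rfl, -, -⟩
        · exact dSS 0 j (by omega) (by omega) (by omega) v hvS hS
        · exact dSQ 0 (by omega) _ hvS (hqQ j hj1 hj2)
      · rw [hblkB i hi1 hi2] at hvn
        exact dSS 0 i (by omega) (by omega) (by omega) v hvS
          (hslS _ (by omega) v (List.drop_subset _ _ hvn))
      · rw [hn, hblkB0] at hvn
        exact htd 0 (by omega) v hvm hvn
      · rw [hn, hblkT] at hvn
        exact dSQ 0 (by omega) v hvS (hTQ v hvn)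
    · -- m in M zone
      rcases hcases n hnN with rfl | ⟨hn1, hn2⟩ | hn | ⟨j', hj1', hj2', rfl⟩ | ⟨i, hi1, hi2, rfl⟩ | hn | hn
      · omega
      · omega
      · omega
      · have hjj : j ≠ j' := by omega
        rcases hMmem j hj1 hj2 v (by rw [hblkM j hj1 hj2] at hvm; exact hvm) with hS | ⟨hq, hnp, hnt⟩
        · rcases hMmem j' hj1' hj2' v (by rw [hblkM j' hj1' hj2'] at hvn; exact hvn) with hS' | ⟨hq', -, -⟩
          · exact dSS j j' (by omega) (by omega) hjj v hS hS'
          · exact dSQ j (by omega) v hS (by rw [hq']; exact hqQ j' hj1' hj2')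
        · rcases hMmem j' hj1' hj2' v (by rw [hblkM j' hj1' hj2'] at hvn; exact hvn) with hS' | ⟨hq', -, -⟩
          · exact dSQ j' (by omega) v hS' (by rw [hq]; exact hqQ j hj1 hj2)
          · exact hjj (hqeq j j' hj1 hj2 hj1' hj2' (by rw [← hq, hq']))
      · rw [hblkB i hi1 hi2] at hvn
        have hvS' : v ∈ S i := hslS _ (by omega) v (List.drop_subset _ _ hvn)
        rcases hMmem j hj1 hj2 v (by rw [hblkM j hj1 hj2] at hvm; exact hvm) with hS | ⟨hq, -, -⟩
        · exact dSS j i (by omega) (by omega) (by omega) v hS hvS'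
        · exact dSQ i (by omega) v hvS' (by rw [hq]; exact hqQ j hj1 hj2)
      · rw [hn, hblkB0] at hvn
        have hvS' : v ∈ S 0 := hslS 0 (by omega) v (List.drop_subset _ _ hvn)
        rcases hMmem j hj1 hj2 v (by rw [hblkM j hj1 hj2] at hvm; exact hvm) with hS | ⟨hq, -, -⟩
        · exact dSS j 0 (by omega) (by omega) (by omega) v hS hvS'
        · exact dSQ 0 (by omega) v hvS' (by rw [hq]; exact hqQ j hj1 hj2)
      · rw [hn, hblkT] at hvn
        rcases hMmem j hj1 hj2 v (by rw [hblkM j hj1 hj2] at hvm; exact hvm) with hS | ⟨hq, -, hnt⟩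
        · exact dSQ j (by omega) v hS (hTQ v hvn)
        · exact hnt (by rw [← hq]; exact hvn)
    · -- m in B zone
      rw [hblkB i hi1 hi2] at hvm
      have hvS : v ∈ S i := hslS _ (by omega) v (List.drop_subset _ _ hvm)
      rcases hcases n hnN with rfl | ⟨hn1, hn2⟩ | hn | ⟨j', hj1', hj2', rfl⟩ | ⟨i', hi1', hi2', rfl⟩ | hn | hn
      · omega
      · omega
      · omega
      · omega
      · rw [hblkB i' hi1' hi2'] at hvn
        exact dSS i i' (by omega) (by omega) (by omega) v hvS
          (hslS _ (by omega) v (List.drop_subset _ _ hvn))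
      · rw [hn, hblkB0] at hvn
        exact dSS i 0 (by omega) (by omega) (by omega) v hvS
          (hslS 0 (by omega) v (List.drop_subset _ _ hvn))
      · rw [hn, hblkT] at hvn
        exact dSQ i (by omega) v hvS (hTQ v hvn)
    · -- m = B0
      rw [hm, hblkB0] at hvm
      have hvS : v ∈ S 0 := hslS 0 (by omega) v (List.drop_subset _ _ hvm)
      rcases hcases n hnN with rfl | ⟨hn1, hn2⟩ | hn | ⟨j', hj1', hj2', rfl⟩ | ⟨i', hi1', hi2', rfl⟩ | hn | hn
      · omega
      · omega
      · omega
      · omega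
      · omega
      · omega
      · rw [hn, hblkT] at hvn
        exact dSQ 0 (by omega) v hvS (hTQ v hvn)
    · -- m = T : nothing after
      omega
  -- coverage
  have hSH : ∀ i, i ≤ r → ∀ v ∈ S i, v ∈ H := by
    intro i hi v hv
    rw [hH]
    exact Finset.mem_union_left _ (Finset.mem_biUnion.mpr ⟨i, Finset.mem_range.mpr (by omega), hv⟩)
  have hQH : ∀ v ∈ Q, v ∈ H := by
    intro v hv; rw [hH]; exact Finset.mem_union_right _ hv
  have hcover1 : ∀ n, n < N → ∀ v ∈ blk n, v ∈ H := by
    intro n hn v hv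
    rcases hcases n hn with rfl | ⟨h1, h2⟩ | h | ⟨j, hj1, hj2, rfl⟩ | ⟨i, hi1, hi2, rfl⟩ | h | h
    · rw [hblk0] at hv; exact hQH v (hPQ v hv)
    · rw [hblkA n h1 h2] at hv
      exact hSH (R+n) (by omega) v (hslS _ (by omega) v (List.take_subset _ _ hv))
    · rw [h, hblkA0] at hv
      exact hSH 0 (by omega) v (hslS 0 (by omega) v (List.take_subset _ _ hv))
    · rcases hMmem j hj1 hj2 v (by rw [hblkM j hj1 hj2] at hv; exact hv) with hS | ⟨hq, -, -⟩
      · exact hSH j (by omega) v hS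
      · exact hQH v (by rw [hq]; exact hqQ j hj1 hj2)
    · rw [hblkB i hi1 hi2] at hv
      exact hSH i (by omega) v (hslS _ (by omega) v (List.drop_subset _ _ hv))
    · rw [h, hblkB0] at hv
      exact hSH 0 (by omega) v (hslS 0 (by omega) v (List.drop_subset _ _ hv))
    · rw [h, hblkT] at hv
      exact hQH v (hTQ v hv)
  have hcover2 : ∀ v ∈ H, ∃ n, n < N ∧ v ∈ blk n := by
    intro v hv
    rw [hH] at hv
    rcases Finset.mem_union.mp hv with hv | hv
    · obtain ⟨i, hi, hvS⟩ := Finset.mem_biUnion.mp hv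
      have hir : i ≤ r := by
        have := Finset.mem_range.mp hi; omega
      have hvsl : v ∈ sl i := hSsl i hir v hvS
      by_cases hi0 : i = 0
      · subst hi0
        rw [← List.take_append_drop k (sl 0)] at hvsl
        rcases List.mem_append.mp hvsl with h | h
        · exact ⟨r - R + 1, by omega, by rw [hblkA0]; exact h⟩
        · exact ⟨2*r - R + 2, by omega, by rw [hblkB0]; exact h⟩
      by_cases hiR : i ≤ R
      · refine ⟨r - R + 1 + i, by omega, ?_⟩
        rw [hblkM i (by omega) hiR]
        exact List.mem_append_left _ hvsl
      · rw [← List.take_append_drop k (sl i)] at hvsl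
        rcases List.mem_append.mp hvsl with h | h
        · refine ⟨i - R, by omega, ?_⟩
          rw [hblkA (i-R) (by omega) (by omega)]
          have e : R + (i - R) = i := by omega
          rw [e]; exact h
        · exact ⟨r + 1 + (i - R), by omega, by rw [hblkB i (by omega) hir]; exact h⟩
    · rw [hQ] at hv
      obtain ⟨j, hj, rfl⟩ := Finset.mem_image.mp hv
      rw [Finset.mem_Icc] at hj
      by_cases hp : q j ∈ P
      · exact ⟨0, by omega, by rw [hblk0]; exact hp⟩
      by_cases ht : q j ∈ T
      · exact ⟨2*r - R + 3, by omega, by rw [hblkT]; exact ht⟩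
      · refine ⟨r - R + 1 + j, by omega, ?_⟩
        rw [hblkM j hj.1 hj.2]
        refine List.mem_append_right _ ?_
        simp only [hslotdef]
        rw [if_neg (by tauto)]
        exact List.mem_singleton_self _
  -- the path
  set L : List V := ((List.range N).map blk).flatten with hLdef
  have hWin : Win E k L := by
    refine win_join hk _ ?_ ?_ ?_
    · intro b hb
      obtain ⟨n, hn, rfl⟩ := List.mem_map.mp hb
      exact hbpw n (List.mem_range.mp hn)
    · intro b hb
      obtain ⟨n, hn, rfl⟩ := List.mem_map.mp hb
      exact hblen n (List.mem_range.mp hn)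
    · intro n b c hb hc
      have hn1 : n + 1 < N := by
        by_contra hcon
        rw [List.getElem?_eq_none (by simp; omega)] at hc
        exact absurd hc (by simp)
      have hn : n < N := by omega
      rw [List.getElem?_map, List.getElem?_range hn1] at hc
      rw [List.getElem?_map, List.getElem?_range hn] at hb
      simp only [Option.map_some] at hb hc
      rw [← Option.some_inj.mp hb, ← Option.some_inj.mp hc]
      exact hchain n hn1
  have hLnd : L.Nodup := by
    rw [hLdef, List.nodup_flatten]
    constructor
    · intro l hl
      obtain ⟨n, hn, rfl⟩ := List.mem_map.mp hl
      exact hbnd n (List.mem_range.mp hn)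
    · rw [List.pairwise_map]
      rw [List.pairwise_iff_getElem]
      intro i j hi hj hij
      rw [List.length_range] at hi hj
      rw [List.getElem_range, List.getElem_range]
      exact hdisj i j hij hj
  have hLtf : L.toFinset = H := by
    ext a
    rw [List.mem_toFinset, hLdef, List.mem_flatten]
    constructor
    · rintro ⟨l, hl, hal⟩
      obtain ⟨n, hn, rfl⟩ := List.mem_map.mp hl
      exact hcover1 n (List.mem_range.mp hn) a hal
    · intro ha
      obtain ⟨n, hn, hv⟩ := hcover2 a ha
      exact ⟨blk n, List.mem_map.mpr ⟨n, List.mem_range.mpr hn, rfl⟩, hv⟩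
  have hLlen : H.card = L.length := by
    rw [← hLtf]
    exact List.toFinset_card_of_nodup hLnd
  obtain ⟨M, hM⟩ : ∃ M, N = M + 1 := ⟨2*r - R + 3, by omega⟩
  have hfirst : ∀ (i : ℕ), i < k → ∀ a : V, L[i]? = some a → a ∈ Y := by
    intro i hi a ha
    have hL : L = P ++ ((List.range M).map (blk ∘ Nat.succ)).flatten := by
      rw [hLdef, hM, List.range_succ_eq_map]
      rw [List.map_cons, List.flatten_cons, hblk0, List.map_map]
    rw [hL, List.getElem?_append] at ha
    rw [if_pos (by rw [hPlen]; exact hi)] at ha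
    exact hPY a (mem_of_getElem?' ha)
  have hlast : ∀ (i : ℕ), L.length - k ≤ i → ∀ a : V, L[i]? = some a → a ∈ X := by
    have hL2 : L = ((List.range M).map blk).flatten ++ T := by
      rw [hLdef, hM, List.range_succ, List.map_append, List.flatten_append]
      simp only [List.map_cons, List.map_nil, List.flatten_cons, List.flatten_nil,
        List.append_nil]
      rw [show M = 2*r - R + 3 from by omega, hblkT]
    intro i hige a ha
    have hlen2 : L.length = (((List.range M).map blk).flatten).length + k := by
      rw [hL2, List.length_append, hTlen]
    rw [hL2, List.getElem?_append_right (by omega)] at ha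
    exact hTX a (mem_of_getElem?' ha)
  refine ⟨fun i => L.get ⟨i.1, hLlen ▸ i.isLt⟩, ⟨?_, ?_⟩, ?_, ?_, ?_⟩
  · intro i j hij
    have := List.nodup_iff_injective_get.mp hLnd hij
    have h2 := Fin.mk.injEq _ _ _ _ ▸ this
    exact Fin.ext (by injection this)
  · intro i j hij hjk
    refine hWin i.1 j.1 _ _ hij hjk ?_ ?_
    · rw [List.getElem?_eq_getElem (hLlen ▸ i.isLt)]
      simp [List.get_eq_getElem]
    · rw [List.getElem?_eq_getElem (hLlen ▸ j.isLt)]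
      simp [List.get_eq_getElem]
  · ext a
    simp only [Finset.mem_image, Finset.mem_univ, true_and]
    constructor
    · rintro ⟨i, rfl⟩
      have hmem : L.get ⟨i.1, hLlen ▸ i.isLt⟩ ∈ L.toFinset :=
        List.mem_toFinset.mpr (List.get_mem _ _)
      exact hLtf ▸ hmem
    · intro ha
      have ha' : a ∈ L := by
        have : a ∈ L.toFinset := hLtf.symm ▸ ha
        exact List.mem_toFinset.mp this
      obtain ⟨n, hn⟩ := List.mem_iff_get.mp ha' 
      exact ⟨⟨n.1, hLlen.symm ▸ n.isLt⟩, by simpa using hn⟩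
  · intro i hi
    refine hfirst i.1 hi _ ?_
    rw [List.getElem?_eq_getElem (hLlen ▸ i.isLt)]
    simp [List.get_eq_getElem]
  · intro i hi
    refine hlast i.1 (by omega) _ ?_
    rw [List.getElem?_eq_getElem (hLlen ▸ i.isLt)]
    simp [List.get_eq_getElem]
end
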